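/- arXiv:2006.05393 — 3 statements merged into one kernel-verified Lean document; each statement's English description precedes it below -/
import Mathlib

section
/- There exists a universal constant C > 0 so that the following holds. Let ξ be a real-valued random variable with log-concave density α : ℝ → [0, ∞). Let t > 0 and 0 < δ < 1. If P(√(α(ξ + t) α(ξ − t)) ≤ (1 − δ) α(ξ)) ≥ 1/2, then Var ξ ≤ (C t / δ)². -/
open MeasureTheory ENNReal

/-- `α : ℝ → [0,∞)` is log-concave. -/
def IsLogConcave (α : ℝ → ℝ) : Prop :=
  ∀ x y : ℝ, ∀ a b : ℝ, 0 ≤ a → 0 ≤ b → a + b = 1 →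
    α x ^ a * α y ^ b ≤ α (a * x + b * y)

namespace LogConcaveVarianceAux

noncomputable def dens (α : ℝ → ℝ) : Measure ℝ :=
  volume.withDensity fun x => ENNReal.ofReal (α x)

variable {α : ℝ → ℝ}

/-- quasiconcavity: chord bound -/
lemma chord (hα0 : ∀ x, 0 ≤ α x) (hlc : IsLogConcave α) {x y z : ℝ}
    (hxz : x ≤ z) (hzy : z ≤ y) : min (α x) (α y) ≤ α z := by
  rcases eq_or_lt_of_le (hxz.trans hzy) with h | h
  · have hzx : z = x := le_antisymm (h ▸ hzy) hxz
    subst hzx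
    exact min_le_left _ _
  · set a := (y - z) / (y - x) with ha_def
    set b := (z - x) / (y - x) with hb_def
    have hyx : 0 < y - x := by linarith
    have ha : 0 ≤ a := div_nonneg (by linarith) hyx.le
    have hb : 0 ≤ b := div_nonneg (by linarith) hyx.le
    have hab : a + b = 1 := by
      rw [ha_def, hb_def, ← add_div, show y - z + (z - x) = y - x by ring,
        div_self hyx.ne']
    have hz : a * x + b * y = z := by
      rw [ha_def, hb_def]
      field_simp
      ring
    have hm0 : 0 ≤ min (α x) (α y) := le_min (hα0 x) (hα0 y)
    calc min (α x) (α y) = min (α x) (α y) ^ (a + b) := by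
          rw [hab, Real.rpow_one]
      _ = min (α x) (α y) ^ a * min (α x) (α y) ^ b := by
          rw [Real.rpow_add' hm0 (by rw [hab]; norm_num)]
      _ ≤ α x ^ a * α y ^ b := by
          apply mul_le_mul
          · exact Real.rpow_le_rpow hm0 (min_le_left _ _) ha
          · exact Real.rpow_le_rpow hm0 (min_le_right _ _) hb
          · exact Real.rpow_nonneg hm0 _
          · exact Real.rpow_nonneg (hα0 x) _
      _ ≤ α (a * x + b * y) := hlc x y a b ha hb hab
      _ = α z := by rw [hz]

/-- cross-multiplied monotone likelihood ratio -/
lemma cross (hα0 : ∀ x, 0 ≤ α x) (hlc : IsLogConcave α) {x y τ : ℝ}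
    (hxy : x ≤ y) (hτ : 0 ≤ τ) : α x * α (y + τ) ≤ α (x + τ) * α y := by
  rcases eq_or_lt_of_le hτ with rfl | hτ
  · simp [mul_comm]
  rcases eq_or_lt_of_le hxy with rfl | hxy
  · rw [mul_comm]
  · set l := τ / (y - x + τ) with hl_def
    have hd : 0 < y - x + τ := by linarith
    have hl0 : 0 ≤ l := div_nonneg hτ.le hd.le
    have hl1 : 0 ≤ 1 - l := by
      have : l ≤ 1 := by rw [hl_def, div_le_one hd]; linarith
      linarith
    have harg1 : (1 - l) * x + l * (y + τ) = x + τ := by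
      rw [hl_def]; field_simp; ring
    have harg2 : l * x + (1 - l) * (y + τ) = y := by
      rw [hl_def]; field_simp; ring
    have h1 := hlc x (y + τ) (1 - l) l hl1 hl0 (by ring)
    rw [harg1] at h1
    have h2 := hlc x (y + τ) l (1 - l) hl0 hl1 (by ring)
    rw [harg2] at h2
    have e1 : α x * α (y + τ) =
        (α x ^ (1 - l) * α (y + τ) ^ l) * (α x ^ l * α (y + τ) ^ (1 - l)) := by
      have ex : α x ^ ((1 - l) + l) = α x ^ (1 - l) * α x ^ l :=
        Real.rpow_add' (hα0 x) (by norm_num)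
      have ey : α (y + τ) ^ (l + (1 - l)) = α (y + τ) ^ l * α (y + τ) ^ (1 - l) :=
        Real.rpow_add' (hα0 (y + τ)) (by norm_num)
      have hex : ((1 : ℝ) - l) + l = 1 := by ring
      have hey : l + ((1 : ℝ) - l) = 1 := by ring
      rw [hex] at ex; rw [hey] at ey
      rw [Real.rpow_one] at ex ey
      calc α x * α (y + τ) = (α x ^ (1 - l) * α x ^ l) * (α (y + τ) ^ l * α (y + τ) ^ (1 - l)) := by
            rw [← ex, ← ey]
        _ = (α x ^ (1 - l) * α (y + τ) ^ l) * (α x ^ l * α (y + τ) ^ (1 - l)) := by ring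
    rw [e1]
    apply mul_le_mul h1 h2
      (mul_nonneg (Real.rpow_nonneg (hα0 x) _) (Real.rpow_nonneg (hα0 (y + τ)) _))
      (hα0 (x + τ))

/-- log-concave functions are a.e. measurable -/
lemma aemeas (hα0 : ∀ x, 0 ≤ α x) (hlc : IsLogConcave α) : AEMeasurable α volume := by
  set P : Set ℝ := {x | 0 < α x} with hP_def
  have hPconv : Convex ℝ P := by
    intro x hx y hy a b ha hb hab
    have h := hlc x y a b ha hb hab
    have hx' : 0 < α x := hx
    have hy' : 0 < α y := hy
    have hpos : 0 < α x ^ a * α y ^ b := by positivity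
    show 0 < α (a • x + b • y)
    simp only [smul_eq_mul]
    exact lt_of_lt_of_le hpos h
  have hconc : ConcaveOn ℝ P fun x => Real.log (α x) := by
    refine ⟨hPconv, ?_⟩
    intro x hx y hy a b ha hb hab
    have h := hlc x y a b ha hb hab
    have hx' : 0 < α x := hx
    have hy' : 0 < α y := hy
    have hpos : 0 < α x ^ a * α y ^ b := by positivity
    have hle : Real.log (α x ^ a * α y ^ b) ≤ Real.log (α (a • x + b • y)) := by
      apply Real.log_le_log hpos
      simpa only [smul_eq_mul] using h
    calc a • Real.log (α x) + b • Real.log (α y)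
        = Real.log (α x ^ a * α y ^ b) := by
          rw [Real.log_mul (by positivity) (by positivity),
            Real.log_rpow hx', Real.log_rpow hy']
          simp [smul_eq_mul]
      _ ≤ Real.log (α (a • x + b • y)) := hle
  have hcontlog : ContinuousOn (fun x => Real.log (α x)) (interior P) :=
    hconc.continuousOn_interior
  have hcontα : ContinuousOn α (interior P) := by
    have h1 : ContinuousOn (fun x => Real.exp (Real.log (α x))) (interior P) :=
      Real.continuous_exp.comp_continuousOn hcontlog
    apply h1.congr
    intro x hx
    have hxP : x ∈ P := interior_subset hx
    exact (Real.exp_log hxP).symm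
  have hfront : volume (frontier P) = 0 := hPconv.addHaar_frontier volume
  have haem : AEMeasurable ((interior P).indicator α) volume := by
    rw [aemeasurable_indicator_iff measurableSet_interior]
    exact hcontα.aemeasurable measurableSet_interior
  apply haem.congr
  have hmem : (frontier P)ᶜ ∈ MeasureTheory.ae volume := by
    rw [mem_ae_iff, compl_compl]; exact hfront
  filter_upwards [hmem] with x hx
  by_cases hxP : x ∈ interior P
  · simp [Set.indicator_of_mem hxP]
  · have hxcl : x ∉ closure P := by
      rw [closure_eq_interior_union_frontier]
      rintro (h | h)
      · exact hxP h
      · exact hx h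
    have hxnP : x ∉ P := fun h => hxcl (subset_closure h)
    have hα : α x = 0 := le_antisymm (not_lt.mp hxnP) (hα0 x)
    simp [Set.indicator_of_notMem hxP, hα]

lemma isProb (hint : (∫⁻ x : ℝ, ENNReal.ofReal (α x)) = 1) :
    IsProbabilityMeasure (dens α) := by
  constructor
  rw [dens, withDensity_apply _ MeasurableSet.univ, Measure.restrict_univ]
  exact hint

lemma dens_apply (s : Set ℝ) (hs : MeasurableSet s) :
    dens α s = ∫⁻ x in s, ENNReal.ofReal (α x) := by
  rw [dens, withDensity_apply _ hs]

/-- points where density vanishes carry no mass -/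
lemma null_of_zero (hα0 : ∀ x, 0 ≤ α x) (hαaem : AEMeasurable α volume)
    {Z : Set ℝ} (hZ : ∀ x ∈ Z, α x = 0) : dens α Z = 0 := by
  set g := hαaem.mk α with hg_def
  have hae : α =ᵐ[volume] g := hαaem.ae_eq_mk
  obtain ⟨N, hNsub, hNmeas, hNnull⟩ :=
    exists_measurable_superset_of_null (hae : volume {x | α x ≠ g x} = 0)
  have hsub : Z ⊆ {x | g x = 0} ∪ N := by
    intro x hx
    by_cases hxN : x ∈ N
    · exact Or.inr hxN
    · left
      have hxg : α x = g x := by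
        by_contra h
        exact hxN (hNsub h)
      show g x = 0
      rw [← hxg]
      exact hZ x hx
  have hgmeas : MeasurableSet {x : ℝ | g x = 0} := by
    have he : {x : ℝ | g x = 0} = g ⁻¹' {0} := by ext x; simp
    rw [he]
    exact hαaem.measurable_mk (measurableSet_singleton 0)
  have h1 : dens α {x | g x = 0} = 0 := by
    rw [dens_apply _ hgmeas]
    have : ∫⁻ x in {x | g x = 0}, ENNReal.ofReal (α x) =
        ∫⁻ x in {x | g x = 0}, ENNReal.ofReal (g x) := by
      apply lintegral_congr_ae
      exact ae_restrict_of_ae (hae.mono fun x h => by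
        exact congrArg ENNReal.ofReal h)
    rw [this]
    refine le_antisymm ?_ zero_le
    calc ∫⁻ x in {x | g x = 0}, ENNReal.ofReal (g x)
        ≤ ∫⁻ _ in {x | g x = 0}, 0 := by
          apply lintegral_mono_ae
          filter_upwards [ae_restrict_mem hgmeas] with x hx
          rw [show g x = 0 from hx, ENNReal.ofReal_zero]
      _ = 0 := lintegral_zero
  have h2 : dens α N = 0 := by
    rw [dens_apply _ hNmeas]
    rw [Measure.restrict_eq_zero.mpr hNnull]
    exact lintegral_zero_measure _
  refine le_antisymm ?_ zero_le
  calc dens α Z ≤ dens α ({x | g x = 0} ∪ N) := measure_mono hsub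
    _ ≤ dens α {x | g x = 0} + dens α N := measure_union_le _ _
    _ = 0 := by rw [h1, h2, add_zero]

lemma atom_zero (r : ℝ) : dens α {r} = 0 := by
  rw [dens_apply _ (measurableSet_singleton r)]
  rw [Measure.restrict_eq_zero.mpr Real.volume_singleton]
  exact lintegral_zero_measure _

/-- translation invariance of the Lebesgue integral, for arbitrary functions -/
lemma lintegral_shift (f : ℝ → ℝ≥0∞) (τ : ℝ) : (∫⁻ x, f (x + τ)) = ∫⁻ x, f x := by
  have hmp : MeasurePreserving (MeasurableEquiv.addRight τ) (volume : Measure ℝ) volume :=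
    ⟨(MeasurableEquiv.addRight τ).measurable,
      map_add_right_eq_self volume τ⟩
  exact (hmp.lintegral_map_equiv f (MeasurableEquiv.addRight τ)).symm

/-- reflection invariance of the Lebesgue integral, for arbitrary functions -/
lemma lintegral_reflect (f : ℝ → ℝ≥0∞) : (∫⁻ x, f (-x)) = ∫⁻ x, f x := by
  have hmp : MeasurePreserving (MeasurableEquiv.neg ℝ) (volume : Measure ℝ) volume :=
    ⟨(MeasurableEquiv.neg ℝ).measurable, Measure.map_neg_eq_self volume⟩
  exact (hmp.lintegral_map_equiv f (MeasurableEquiv.neg ℝ)).symm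

lemma setLIntegral_shift (f : ℝ → ℝ≥0∞) (τ a b : ℝ) :
    ∫⁻ x in Set.Ico (a + τ) (b + τ), f x = ∫⁻ x in Set.Ico a b, f (x + τ) := by
  have hmem : ∀ x : ℝ, x + τ ∈ Set.Ico (a + τ) (b + τ) ↔ x ∈ Set.Ico a b := by
    intro x
    simp only [Set.mem_Ico]
    constructor <;> intro h <;> constructor <;> linarith [h.1, h.2]
  rw [← lintegral_indicator measurableSet_Ico f,
    ← lintegral_indicator measurableSet_Ico (fun x => f (x + τ)),
    ← lintegral_shift (fun x => (Set.Ico (a + τ) (b + τ)).indicator f x) τ]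
  congr 1
  funext x
  by_cases h : x ∈ Set.Ico a b
  · rw [Set.indicator_of_mem ((hmem x).mpr h), Set.indicator_of_mem h]
  · rw [Set.indicator_of_notMem (fun hc => h ((hmem x).mp hc)), Set.indicator_of_notMem h]

/-- reflecting the density reflects the measure -/
lemma dens_neg_eq : Measure.map Neg.neg (dens α) = dens fun x => α (-x) := by
  ext s hs
  have hneg : Measurable (Neg.neg : ℝ → ℝ) := measurable_neg
  rw [Measure.map_apply hneg hs, dens_apply _ (hneg hs), dens_apply _ hs]
  rw [← lintegral_indicator (hneg hs) (fun x => ENNReal.ofReal (α x)),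
    ← lintegral_indicator hs (fun x => ENNReal.ofReal (α (-x))),
    ← lintegral_reflect (fun x => (Neg.neg ⁻¹' s).indicator (fun y => ENNReal.ofReal (α y)) x)]
  congr 1
  funext x
  by_cases h : x ∈ s
  · rw [Set.indicator_of_mem (by simpa using h), Set.indicator_of_mem h]
  · rw [Set.indicator_of_notMem (by simpa using h), Set.indicator_of_notMem h]

/-- one step of geometric decay of ring masses -/
lemma ring_decay {x₀ τ ρ : ℝ} (hρ0 : 0 ≤ ρ)
    (hdec : ∀ x, x₀ ≤ x → α (x + τ) ≤ ρ * α x) {a b : ℝ} (ha : x₀ ≤ a) :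
    dens α (Set.Ico (a + τ) (b + τ)) ≤ ENNReal.ofReal ρ * dens α (Set.Ico a b) := by
  rw [dens_apply _ measurableSet_Ico, dens_apply _ measurableSet_Ico]
  rw [setLIntegral_shift (fun x => ENNReal.ofReal (α x)) τ a b]
  calc ∫⁻ x in Set.Ico a b, ENNReal.ofReal (α (x + τ))
      ≤ ∫⁻ x in Set.Ico a b, ENNReal.ofReal ρ * ENNReal.ofReal (α x) := by
        apply lintegral_mono_ae
        filter_upwards [ae_restrict_mem measurableSet_Ico] with x hx
        rw [← ENNReal.ofReal_mul hρ0]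
        exact ENNReal.ofReal_le_ofReal (hdec x (le_trans ha hx.1))
    _ = ENNReal.ofReal ρ * ∫⁻ x in Set.Ico a b, ENNReal.ofReal (α x) :=
        lintegral_const_mul' _ _ ENNReal.ofReal_ne_top

lemma Ici_eq_iUnion (x₀ τ : ℝ) (hτ : 0 < τ) :
    Set.Ici x₀ = ⋃ k : ℕ, Set.Ico (x₀ + k * τ) (x₀ + (k + 1) * τ) := by
  ext x
  simp only [Set.mem_Ici, Set.mem_iUnion, Set.mem_Ico]
  constructor
  · intro hx
    refine ⟨⌊(x - x₀) / τ⌋₊, ?_, ?_⟩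
    · have h1 : (⌊(x - x₀) / τ⌋₊ : ℝ) ≤ (x - x₀) / τ :=
        Nat.floor_le (div_nonneg (by linarith) hτ.le)
      have := (le_div_iff₀ hτ).mp h1
      linarith
    · have h2 : (x - x₀) / τ < ⌊(x - x₀) / τ⌋₊ + 1 := Nat.lt_floor_add_one _
      have := (div_lt_iff₀ hτ).mp h2
      linarith
  · rintro ⟨k, hk1, _⟩
    have : (0 : ℝ) ≤ k * τ := by positivity
    linarith

lemma ring_disjoint (x₀ τ : ℝ) (hτ : 0 < τ) :
    Pairwise (Function.onFun Disjoint fun k : ℕ => Set.Ico (x₀ + k * τ) (x₀ + (k + 1) * τ)) := by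
  intro i j hij
  apply Set.disjoint_left.mpr
  intro x hxi hxj
  simp only [Set.mem_Ico] at hxi hxj
  rcases lt_or_gt_of_ne hij with h | h
  · have hle : (i : ℝ) + 1 ≤ j := by exact_mod_cast h
    nlinarith [hxi.2, hxj.1]
  · have hle : (j : ℝ) + 1 ≤ i := by exact_mod_cast h
    nlinarith [hxj.2, hxi.1]

/-- iterated geometric decay -/
lemma ring_decay_pow {x₀ τ ρ : ℝ} (hτ : 0 < τ) (hρ0 : 0 ≤ ρ)
    (hdec : ∀ x, x₀ ≤ x → α (x + τ) ≤ ρ * α x) (k : ℕ) :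
    dens α (Set.Ico (x₀ + k * τ) (x₀ + (k + 1) * τ)) ≤
      ENNReal.ofReal ρ ^ k * dens α (Set.Ico x₀ (x₀ + τ)) := by
  induction k with
  | zero => simp
  | succ n ih =>
    have he1 : x₀ + (n + 1 : ℕ) * τ = (x₀ + n * τ) + τ := by push_cast; ring
    have he2 : x₀ + ((n + 1 : ℕ) + 1) * τ = (x₀ + (n + 1) * τ) + τ := by push_cast; ring
    rw [he1, he2]
    calc dens α (Set.Ico ((x₀ + n * τ) + τ) ((x₀ + (n + 1) * τ) + τ))
        ≤ ENNReal.ofReal ρ * dens α (Set.Ico (x₀ + n * τ) (x₀ + (n + 1) * τ)) :=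
          ring_decay hρ0 hdec (le_add_of_nonneg_right (mul_nonneg (Nat.cast_nonneg n) hτ.le))
      _ ≤ ENNReal.ofReal ρ * (ENNReal.ofReal ρ ^ n * dens α (Set.Ico x₀ (x₀ + τ))) := by
          apply mul_le_mul_right
          have := ih
          push_cast at this ⊢
          convert this using 3 <;> ring
      _ = ENNReal.ofReal ρ ^ (n + 1) * dens α (Set.Ico x₀ (x₀ + τ)) := by ring

/-- geometric tail bound -/
lemma tail_bound {x₀ τ ρ : ℝ} (hτ : 0 < τ) (hρ0 : 0 ≤ ρ)
    (hdec : ∀ x, x₀ ≤ x → α (x + τ) ≤ ρ * α x) :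
    dens α (Set.Ici x₀) ≤
      (1 - ENNReal.ofReal ρ)⁻¹ * dens α (Set.Ico x₀ (x₀ + τ)) := by
  rw [Ici_eq_iUnion x₀ τ hτ]
  rw [measure_iUnion (ring_disjoint x₀ τ hτ) fun k => measurableSet_Ico]
  calc (∑' k : ℕ, dens α (Set.Ico (x₀ + k * τ) (x₀ + (k + 1) * τ)))
      ≤ ∑' k : ℕ, ENNReal.ofReal ρ ^ k * dens α (Set.Ico x₀ (x₀ + τ)) :=
        ENNReal.tsum_le_tsum fun k => ring_decay_pow hτ hρ0 hdec k
    _ = (∑' k : ℕ, ENNReal.ofReal ρ ^ k) * dens α (Set.Ico x₀ (x₀ + τ)) :=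
        ENNReal.tsum_mul_right
    _ = (1 - ENNReal.ofReal ρ)⁻¹ * dens α (Set.Ico x₀ (x₀ + τ)) := by
        rw [ENNReal.tsum_geometric]

/-- mass bound on the set where the right tail is small -/
lemma up_set_bound (ν : Measure ℝ) [IsProbabilityMeasure ν]
    (hatom : ∀ r : ℝ, ν {r} = 0) {c : ℝ≥0∞} (hc : c < 1) :
    ν {x : ℝ | ν (Set.Ioi x) < c} ≤ c := by
  set R := {x : ℝ | ν (Set.Ioi x) < c} with hR_def
  rcases R.eq_empty_or_nonempty with h | h
  · rw [h]; simp
  by_cases hbdd : BddBelow R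
  · set r := sInf R with hr_def
    have hRsub : R ⊆ Set.Ici r := fun x hx => csInf_le hbdd hx
    obtain ⟨u, hu_anti, hu_tendsto, hu_mem⟩ := exists_seq_tendsto_sInf h hbdd
    have hIoi : Set.Ioi r = ⋃ n, Set.Ioi (u n) := by
      ext x
      simp only [Set.mem_Ioi, Set.mem_iUnion]
      constructor
      · intro hx
        have hev : ∀ᶠ n in Filter.atTop, u n < x :=
          hu_tendsto.eventually_lt_const hx
        exact hev.exists
      · rintro ⟨n, hn⟩
        exact lt_of_le_of_lt (csInf_le hbdd (hu_mem n)) hn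
    have hdir : Directed (· ⊆ ·) fun n => Set.Ioi (u n) := by
      intro m n
      rcases le_total m n with h' | h'
      · exact ⟨n, Set.Ioi_subset_Ioi (hu_anti h'), subset_rfl⟩
      · exact ⟨m, subset_rfl, Set.Ioi_subset_Ioi (hu_anti h')⟩
    have h1 : ν (Set.Ioi r) ≤ c := by
      rw [hIoi, hdir.measure_iUnion]
      exact iSup_le fun n => (hu_mem n).le
    have hIci : Set.Ici r ⊆ {r} ∪ Set.Ioi r := by
      intro x hx
      rcases eq_or_lt_of_le (Set.mem_Ici.mp hx) with h' | h'
      · exact Or.inl (by simp [h'.symm])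
      · exact Or.inr h'
    calc ν R ≤ ν (Set.Ici r) := measure_mono hRsub
      _ ≤ ν ({r} ∪ Set.Ioi r) := measure_mono hIci
      _ ≤ ν {r} + ν (Set.Ioi r) := measure_union_le _ _
      _ ≤ 0 + c := add_le_add (le_of_eq (hatom r)) h1
      _ = c := zero_add c
  · exfalso
    have hall : ∀ x : ℝ, ν (Set.Ioi x) ≤ c := by
      intro x
      obtain ⟨y, hyR, hyx⟩ : ∃ y ∈ R, y < x := by
        by_contra hcon
        push_neg at hcon
        exact hbdd ⟨x, fun y hy => hcon y hy⟩
      exact le_trans (measure_mono (Set.Ioi_subset_Ioi hyx.le)) hyR.le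
    have huniv : (Set.univ : Set ℝ) = ⋃ n : ℕ, Set.Ioi (-(n : ℝ)) := by
      ext x
      simp only [Set.mem_univ, Set.mem_iUnion, Set.mem_Ioi, true_iff]
      obtain ⟨n, hn⟩ := exists_nat_gt (-x)
      exact ⟨n, by linarith⟩
    have hdir : Directed (· ⊆ ·) fun n : ℕ => Set.Ioi (-(n : ℝ)) := by
      intro m n
      rcases le_total m n with h' | h'
      · exact ⟨n, Set.Ioi_subset_Ioi (by exact_mod_cast neg_le_neg (Nat.cast_le.mpr h')),
          subset_rfl⟩
      · exact ⟨m, subset_rfl,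
          Set.Ioi_subset_Ioi (by exact_mod_cast neg_le_neg (Nat.cast_le.mpr h'))⟩
    have : ν Set.univ ≤ c := by
      rw [huniv, hdir.measure_iUnion]
      exact iSup_le fun n => hall _
    rw [measure_univ] at this
    exact absurd (lt_of_le_of_lt this hc) (lt_irrefl _)

/-- From mass at least 1/4 on the geometric-decay set `A`,
produce a point where the density is at least `δ/(17 t)`. -/
lemma exists_point (hα0 : ∀ x, 0 ≤ α x) (hlc : IsLogConcave α)
    (hint : (∫⁻ x : ℝ, ENNReal.ofReal (α x)) = 1) {t δ : ℝ}
    (ht : 0 < t) (hδ0 : 0 < δ) (hδ1 : δ < 1)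
    (hA : ENNReal.ofReal (1/4) ≤ dens α {x | α (x + t) ≤ (1 - δ) * α x}) :
    ∃ xs, δ / (17 * t) ≤ α xs := by
  set A := {x | α (x + t) ≤ (1 - δ) * α x} with hA_def
  haveI : IsProbabilityMeasure (dens α) := isProb hint
  have hαaem : AEMeasurable α volume := aemeas hα0 hlc
  set R := {x : ℝ | dens α (Set.Ioi x) < ENNReal.ofReal (1/16)} with hR_def
  have hR : dens α R ≤ ENNReal.ofReal (1/16) := by
    apply up_set_bound (dens α) atom_zero
    calc ENNReal.ofReal (1/16) < ENNReal.ofReal 1 := by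
          rw [ENNReal.ofReal_lt_ofReal_iff (by norm_num)]; norm_num
      _ = 1 := ENNReal.ofReal_one
  -- find a point x₀ in A with positive density and sizable right mass
  have hW : ((A ∩ {x | 0 < α x}) \ R).Nonempty := by
    rw [Set.nonempty_iff_ne_empty]
    intro hempty
    have hsub : A ∩ {x | 0 < α x} ⊆ R := by
      intro x hx
      by_contra hxR
      exact (Set.eq_empty_iff_forall_notMem.mp hempty x) ⟨hx, hxR⟩
    have hzero : dens α (A \ {x | 0 < α x}) = 0 := by
      apply null_of_zero hα0 hαaem
      intro x hx
      have : ¬ 0 < α x := hx.2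
      linarith [hα0 x, not_lt.mp this]
    have : dens α A ≤ ENNReal.ofReal (1/16) := by
      calc dens α A = dens α ((A ∩ {x | 0 < α x}) ∪ (A \ {x | 0 < α x})) := by
            rw [Set.inter_union_diff]
        _ ≤ dens α (A ∩ {x | 0 < α x}) + dens α (A \ {x | 0 < α x}) := measure_union_le _ _
        _ ≤ dens α R + 0 := add_le_add (measure_mono hsub) (le_of_eq hzero)
        _ ≤ ENNReal.ofReal (1/16) := by rw [add_zero]; exact hR
    have hcon : ENNReal.ofReal (1/4) ≤ ENNReal.ofReal (1/16) := le_trans hA this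
    rw [ENNReal.ofReal_le_ofReal_iff (by norm_num)] at hcon
    linarith
  obtain ⟨x₀, ⟨hx₀A, hx₀pos⟩, hx₀R⟩ := hW
  have hx₀mass : ENNReal.ofReal (1/16) ≤ dens α (Set.Ioi x₀) := not_lt.mp hx₀R
  have hx₀pos : 0 < α x₀ := hx₀pos
  -- decay to the right of x₀
  have hdec : ∀ x, x₀ ≤ x → α (x + t) ≤ (1 - δ) * α x := by
    intro x hx
    by_cases hαx : 0 < α x
    · have hcr := cross hα0 hlc hx ht.le
      have hA' : α (x₀ + t) ≤ (1 - δ) * α x₀ := hx₀A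
      have h1 : α x₀ * α (x + t) ≤ ((1 - δ) * α x₀) * α x :=
        le_trans hcr (mul_le_mul_of_nonneg_right hA' (hα0 x))
      have h2 : α x₀ * α (x + t) ≤ α x₀ * ((1 - δ) * α x) := by
        calc α x₀ * α (x + t) ≤ ((1 - δ) * α x₀) * α x := h1
          _ = α x₀ * ((1 - δ) * α x) := by ring
      exact le_of_mul_le_mul_left h2 hx₀pos
    · have hαx0 : α x = 0 := le_antisymm (not_lt.mp hαx) (hα0 x)
      have hxt : α (x + t) = 0 := by
        have hch := chord hα0 hlc hx (by linarith : x ≤ x + t)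
        rw [hαx0] at hch
        by_contra hne
        have h1 : 0 < α (x + t) := lt_of_le_of_ne (hα0 _) (Ne.symm hne)
        have := lt_min hx₀pos h1
        linarith
      rw [hxt, hαx0, mul_zero]
  -- tail bound
  have htail := tail_bound (α := α) ht (by linarith : (0:ℝ) ≤ 1 - δ) hdec
  have hsimp : (1 : ℝ≥0∞) - ENNReal.ofReal (1 - δ) = ENNReal.ofReal δ := by
    rw [← ENNReal.ofReal_one, ← ENNReal.ofReal_sub _ (by linarith)]
    norm_num
  rw [hsimp] at htail
  have hI₀ : ENNReal.ofReal (δ / 16) ≤ dens α (Set.Ico x₀ (x₀ + t)) := by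
    have h1 : ENNReal.ofReal (1/16) ≤
        (ENNReal.ofReal δ)⁻¹ * dens α (Set.Ico x₀ (x₀ + t)) :=
      le_trans hx₀mass (le_trans (measure_mono Set.Ioi_subset_Ici_self) htail)
    have h2 := mul_le_mul_right h1 (ENNReal.ofReal δ)
    have h3 : ENNReal.ofReal δ * ((ENNReal.ofReal δ)⁻¹ * dens α (Set.Ico x₀ (x₀ + t)))
        = dens α (Set.Ico x₀ (x₀ + t)) := by
      rw [← mul_assoc, ENNReal.mul_inv_cancel (by simp [hδ0]) ENNReal.ofReal_ne_top, one_mul]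
    rw [h3] at h2
    calc ENNReal.ofReal (δ / 16) = ENNReal.ofReal δ * ENNReal.ofReal (1/16) := by
          rw [← ENNReal.ofReal_mul hδ0.le]; congr 1; ring
      _ ≤ dens α (Set.Ico x₀ (x₀ + t)) := h2
  -- extract a point
  by_contra hcon
  push_neg at hcon
  have hub : dens α (Set.Ico x₀ (x₀ + t)) ≤ ENNReal.ofReal (δ / 17) := by
    rw [dens_apply _ measurableSet_Ico]
    calc ∫⁻ x in Set.Ico x₀ (x₀ + t), ENNReal.ofReal (α x)
        ≤ ∫⁻ _ in Set.Ico x₀ (x₀ + t), ENNReal.ofReal (δ / (17 * t)) := by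
          apply lintegral_mono_ae
          filter_upwards [ae_restrict_mem measurableSet_Ico] with x _
          exact ENNReal.ofReal_le_ofReal (hcon x).le
      _ = ENNReal.ofReal (δ / (17 * t)) * volume (Set.Ico x₀ (x₀ + t)) :=
          setLIntegral_const _ _
      _ = ENNReal.ofReal (δ / (17 * t)) * ENNReal.ofReal t := by
          rw [Real.volume_Ico]; congr 1; ring
      _ = ENNReal.ofReal (δ / 17) := by
          rw [← ENNReal.ofReal_mul (div_nonneg hδ0.le (by linarith))]
          congr 1
          field_simp
  have : ENNReal.ofReal (δ / 16) ≤ ENNReal.ofReal (δ / 17) := le_trans hI₀ hub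
  rw [ENNReal.ofReal_le_ofReal_iff (div_nonneg hδ0.le (by norm_num))] at this
  have h16 : δ / 17 < δ / 16 := by
    apply div_lt_div_of_pos_left hδ0 <;> norm_num
  linarith

lemma nat_key (k : ℕ) : (k + 1) ^ 2 * 2 ^ k ≤ 5 * 3 ^ k := by
  induction k with
  | zero => norm_num
  | succ n ih =>
    by_cases hn : n ≤ 3
    · interval_cases n <;> norm_num
    · push_neg at hn
      have h1 : 2 * (n + 2) ^ 2 ≤ 3 * (n + 1) ^ 2 := by nlinarith
      calc (n + 1 + 1) ^ 2 * 2 ^ (n + 1) = (2 * (n + 2) ^ 2) * 2 ^ n := by ring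
        _ ≤ (3 * (n + 1) ^ 2) * 2 ^ n := Nat.mul_le_mul_right _ h1
        _ = 3 * ((n + 1) ^ 2 * 2 ^ n) := by ring
        _ ≤ 3 * (5 * 3 ^ n) := Nat.mul_le_mul_left _ ih
        _ = 5 * 3 ^ (n + 1) := by ring

lemma real_key (k : ℕ) : ((k : ℝ) + 1) ^ 2 * (1/2) ^ k ≤ 5 * (3/4) ^ k := by
  have h4 : (0 : ℝ) < 4 ^ k := by positivity
  have hnat : ((k : ℝ) + 1) ^ 2 * 2 ^ k ≤ 5 * 3 ^ k := by
    have := nat_key k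
    have hcast : (((k + 1) ^ 2 * 2 ^ k : ℕ) : ℝ) ≤ ((5 * 3 ^ k : ℕ) : ℝ) := by
      exact_mod_cast this
    push_cast at hcast
    convert hcast using 2 <;> push_cast <;> ring
  have e1 : ((1:ℝ)/2) ^ k = 2 ^ k / 4 ^ k := by
    rw [← div_pow]; norm_num
  have e2 : ((3:ℝ)/4) ^ k = 3 ^ k / 4 ^ k := by
    rw [← div_pow]
  rw [e1, e2]
  rw [← mul_div_assoc, ← mul_div_assoc, div_le_div_iff₀ h4 h4]
  exact mul_le_mul_of_nonneg_right hnat h4.le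

/-- Master one-sided lemma: second moment of the right tail. -/
lemma one_sided (hα0 : ∀ x, 0 ≤ α x) (hlc : IsLogConcave α)
    (hint1 : (∫⁻ x : ℝ, ENNReal.ofReal (α x)) ≤ 1) {κ xs : ℝ}
    (hκ : 0 < κ) (hxs : κ ≤ α xs) :
    ∫⁻ x in Set.Ici xs, ENNReal.ofReal ((x - xs) ^ 2) ∂(dens α) ≤
      ENNReal.ofReal (320 / κ ^ 2) := by
  set T := 4 / κ with hT_def
  have hT : 0 < T := div_pos (by norm_num) hκ
  -- the density must halve over every T-step to the right of xs
  have hhalf : ∀ s, xs ≤ s → α (s + T) ≤ (1/2) * α s := by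
    intro s hs
    by_contra hcontra
    push_neg at hcontra
    have h1 : 0 < α (s + T) :=
      lt_of_le_of_lt (mul_nonneg (by norm_num) (hα0 s)) hcontra
    have hbig : κ / 2 ≤ α (xs + T) := by
      by_cases hαs : 0 < α s
      · have hcr := cross hα0 hlc hs hT.le
        -- α xs * α (s+T) ≤ α (xs+T) * α s, and α (s+T) > (1/2) α s
        nlinarith [hα0 (xs + T), hα0 s]
      · have hαs0 : α s = 0 := le_antisymm (not_lt.mp hαs) (hα0 s)
        exfalso
        have hch := chord hα0 hlc hs (by linarith : s ≤ s + T)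
        rw [hαs0] at hch
        have := lt_min (lt_of_lt_of_le hκ hxs) h1
        linarith
    -- chord lower bound on [xs, xs + T] gives mass ≥ 2, contradiction
    have hlow : ∀ z ∈ Set.Icc xs (xs + T), κ / 2 ≤ α z := by
      intro z hz
      have := chord hα0 hlc hz.1 hz.2
      calc κ / 2 ≤ min (α xs) (α (xs + T)) := le_min (by linarith) hbig
        _ ≤ α z := this
    have hint2 : (2 : ℝ≥0∞) ≤ ∫⁻ x, ENNReal.ofReal (α x) := by
      calc (2 : ℝ≥0∞) = ENNReal.ofReal (κ / 2) * volume (Set.Icc xs (xs + T)) := by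
            rw [Real.volume_Icc]
            rw [← ENNReal.ofReal_mul (by linarith : (0:ℝ) ≤ κ / 2)]
            rw [show xs + T - xs = T by ring]
            rw [hT_def]
            rw [show κ / 2 * (4 / κ) = 2 by field_simp [hκ.ne']; ring]
            simp
        _ = ∫⁻ _ in Set.Icc xs (xs + T), ENNReal.ofReal (κ / 2) :=
            (setLIntegral_const _ _).symm
        _ ≤ ∫⁻ x in Set.Icc xs (xs + T), ENNReal.ofReal (α x) := by
            apply lintegral_mono_ae
            filter_upwards [ae_restrict_mem measurableSet_Icc] with x hx
            exact ENNReal.ofReal_le_ofReal (hlow x hx)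
        _ ≤ ∫⁻ x, ENNReal.ofReal (α x) := setLIntegral_le_lintegral _ _
    have : (2 : ℝ≥0∞) ≤ 1 := le_trans hint2 hint1
    norm_num at this
  -- ring masses decay geometrically
  have hI₀le : dens α (Set.Ico xs (xs + T)) ≤ 1 := by
    calc dens α (Set.Ico xs (xs + T)) ≤ dens α Set.univ := measure_mono (Set.subset_univ _)
      _ = ∫⁻ x, ENNReal.ofReal (α x) := by
          rw [dens_apply _ MeasurableSet.univ, Measure.restrict_univ]
      _ ≤ 1 := hint1
  have hring : ∀ k : ℕ, dens α (Set.Ico (xs + k * T) (xs + (k + 1) * T)) ≤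
      ENNReal.ofReal (1/2) ^ k := by
    intro k
    calc dens α (Set.Ico (xs + k * T) (xs + (k + 1) * T))
        ≤ ENNReal.ofReal (1/2) ^ k * dens α (Set.Ico xs (xs + T)) :=
          ring_decay_pow hT (by norm_num) hhalf k
      _ ≤ ENNReal.ofReal (1/2) ^ k * 1 := mul_le_mul_right hI₀le _
      _ = ENNReal.ofReal (1/2) ^ k := mul_one _
  -- split the integral over rings
  rw [Ici_eq_iUnion xs T hT,
    lintegral_iUnion (fun k => measurableSet_Ico) (ring_disjoint xs T hT)]
  have hterm : ∀ k : ℕ,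
      (∫⁻ x in Set.Ico (xs + k * T) (xs + (k + 1) * T),
        ENNReal.ofReal ((x - xs) ^ 2) ∂(dens α)) ≤
      ENNReal.ofReal (5 * T ^ 2) * ENNReal.ofReal (3/4) ^ k := by
    intro k
    have hwt : ∀ x ∈ Set.Ico (xs + k * T) (xs + (k + 1) * T),
        (x - xs) ^ 2 ≤ (((k : ℝ) + 1) * T) ^ 2 := by
      intro x hx
      simp only [Set.mem_Ico] at hx
      have h1 : 0 ≤ x - xs := by
        nlinarith [hx.1, mul_nonneg (Nat.cast_nonneg k : (0:ℝ) ≤ (k:ℝ)) hT.le]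
      have h2 : x - xs ≤ ((k : ℝ) + 1) * T := by linarith [hx.2]
      nlinarith
    calc (∫⁻ x in Set.Ico (xs + k * T) (xs + (k + 1) * T),
          ENNReal.ofReal ((x - xs) ^ 2) ∂(dens α))
        ≤ ∫⁻ _ in Set.Ico (xs + k * T) (xs + (k + 1) * T),
            ENNReal.ofReal ((((k : ℝ) + 1) * T) ^ 2) ∂(dens α) := by
          apply lintegral_mono_ae
          filter_upwards [ae_restrict_mem measurableSet_Ico] with x hx
          exact ENNReal.ofReal_le_ofReal (hwt x hx)
      _ = ENNReal.ofReal ((((k : ℝ) + 1) * T) ^ 2) *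
            dens α (Set.Ico (xs + k * T) (xs + (k + 1) * T)) := setLIntegral_const _ _
      _ ≤ ENNReal.ofReal ((((k : ℝ) + 1) * T) ^ 2) * ENNReal.ofReal (1/2) ^ k :=
          mul_le_mul_right (hring k) _
      _ = ENNReal.ofReal ((((k : ℝ) + 1) * T) ^ 2 * (1/2) ^ k) := by
          rw [← ENNReal.ofReal_pow (by norm_num), ← ENNReal.ofReal_mul (by positivity)]
      _ ≤ ENNReal.ofReal (5 * T ^ 2 * (3/4) ^ k) := by
          apply ENNReal.ofReal_le_ofReal
          have := real_key k
          have hT2 : (0:ℝ) ≤ T ^ 2 := sq_nonneg T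
          calc (((k : ℝ) + 1) * T) ^ 2 * (1/2) ^ k
              = (((k : ℝ) + 1) ^ 2 * (1/2) ^ k) * T ^ 2 := by ring
            _ ≤ (5 * (3/4) ^ k) * T ^ 2 := by
                apply mul_le_mul_of_nonneg_right this hT2
            _ = 5 * T ^ 2 * (3/4) ^ k := by ring
      _ = ENNReal.ofReal (5 * T ^ 2) * ENNReal.ofReal (3/4) ^ k := by
          rw [← ENNReal.ofReal_pow (by norm_num), ← ENNReal.ofReal_mul (by positivity)]
  calc (∑' k : ℕ, ∫⁻ x in Set.Ico (xs + k * T) (xs + (k + 1) * T),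
        ENNReal.ofReal ((x - xs) ^ 2) ∂(dens α))
      ≤ ∑' k : ℕ, ENNReal.ofReal (5 * T ^ 2) * ENNReal.ofReal (3/4) ^ k :=
        ENNReal.tsum_le_tsum hterm
    _ = ENNReal.ofReal (5 * T ^ 2) * ∑' k : ℕ, ENNReal.ofReal (3/4) ^ k :=
        ENNReal.tsum_mul_left
    _ = ENNReal.ofReal (5 * T ^ 2) * (1 - ENNReal.ofReal (3/4))⁻¹ := by
        rw [ENNReal.tsum_geometric]
    _ = ENNReal.ofReal (5 * T ^ 2) * 4 := by
        congr 1
        rw [show (1 : ℝ≥0∞) - ENNReal.ofReal (3/4) = ENNReal.ofReal (1/4) by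
          rw [← ENNReal.ofReal_one, ← ENNReal.ofReal_sub _ (by norm_num)]; norm_num]
        rw [show ENNReal.ofReal (1/4) = (ENNReal.ofReal 4)⁻¹ by
          rw [← ENNReal.ofReal_inv_of_pos (by norm_num)]; norm_num]
        rw [inv_inv]
        norm_num
    _ = ENNReal.ofReal (320 / κ ^ 2) := by
        rw [show (4 : ℝ≥0∞) = ENNReal.ofReal 4 by norm_num]
        rw [← ENNReal.ofReal_mul (by positivity)]
        congr 1
        rw [hT_def]
        field_simp
        ring

end LogConcaveVarianceAux

open LogConcaveVarianceAux in
/-- There exists a universal constant `C > 0` such that: if `ξ` is a real random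
variable with log-concave density `α`, `t > 0`, `0 < δ < 1` and
`P(√(α(ξ+t) α(ξ-t)) ≤ (1-δ) α(ξ)) ≥ 1/2`, then `Var ξ ≤ (C t / δ)²`. -/
theorem variance_via_quantitative_logconcavity :
    ∃ C : ℝ, 0 < C ∧
      ∀ (α : ℝ → ℝ), (∀ x, 0 ≤ α x) → IsLogConcave α →
        (∫⁻ x : ℝ, ENNReal.ofReal (α x) = 1) →
        ∀ t δ : ℝ, 0 < t → 0 < δ → δ < 1 →
        (1/2 : ℝ≥0∞) ≤ (volume.withDensity fun x => ENNReal.ofReal (α x))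
            {x : ℝ | Real.sqrt (α (x + t) * α (x - t)) ≤ (1 - δ) * α x} →
        ProbabilityTheory.variance id
            (volume.withDensity fun x => ENNReal.ofReal (α x)) ≤ (C * t / δ) ^ 2 := by
  refine ⟨500, by norm_num, ?_⟩
  intro α hα0 hlc hint t δ ht hδ0 hδ1 hS
  have hνeq : (volume.withDensity fun x => ENNReal.ofReal (α x)) = dens α := rfl
  rw [hνeq] at hS ⊢
  haveI : IsProbabilityMeasure (dens α) := isProb hint
  set A := {x | α (x + t) ≤ (1 - δ) * α x} with hA_def
  set B := {x | α (x - t) ≤ (1 - δ) * α x} with hB_def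
  -- the sqrt set is contained in A ∪ B
  have hSsub : {x : ℝ | Real.sqrt (α (x + t) * α (x - t)) ≤ (1 - δ) * α x} ⊆ A ∪ B := by
    intro x hx
    simp only [Set.mem_setOf_eq] at hx
    by_contra hcontra
    simp only [Set.mem_union, hA_def, hB_def, Set.mem_setOf_eq, not_or, not_le] at hcontra
    obtain ⟨h1, h2⟩ := hcontra
    have hδα : 0 ≤ (1 - δ) * α x := mul_nonneg (by linarith) (hα0 x)
    have hprod : ((1 - δ) * α x) ^ 2 < α (x + t) * α (x - t) := by
      rcases eq_or_lt_of_le hδα with h | h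
      · rw [← h] at h1 h2 ⊢
        simpa using mul_pos h1 h2
      · nlinarith
    have hsq : (1 - δ) * α x < Real.sqrt (α (x + t) * α (x - t)) := by
      have := Real.sqrt_lt_sqrt (sq_nonneg _) hprod
      rwa [Real.sqrt_sq hδα] at this
    linarith
  -- one of A, B carries mass ≥ 1/4
  have hhalf : (1/2 : ℝ≥0∞) = ENNReal.ofReal (1/2) := by
    rw [ENNReal.ofReal_div_of_pos (by norm_num)]
    norm_num
  have hAB : ENNReal.ofReal (1/4) ≤ dens α A ∨ ENNReal.ofReal (1/4) ≤ dens α B := by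
    by_contra hcon
    push_neg at hcon
    have h1 : dens α {x : ℝ | Real.sqrt (α (x + t) * α (x - t)) ≤ (1 - δ) * α x}
        ≤ dens α (A ∪ B) := measure_mono hSsub
    have h2 : dens α (A ∪ B) ≤ dens α A + dens α B := measure_union_le _ _
    have h3 : dens α A + dens α B < ENNReal.ofReal (1/4) + ENNReal.ofReal (1/4) :=
      ENNReal.add_lt_add hcon.1 hcon.2
    have h4 : ENNReal.ofReal (1/4) + ENNReal.ofReal (1/4) = ENNReal.ofReal (1/2) := by
      rw [← ENNReal.ofReal_add (by norm_num) (by norm_num)]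
      norm_num
    have : (1/2 : ℝ≥0∞) < ENNReal.ofReal (1/2) :=
      lt_of_le_of_lt hS (lt_of_le_of_lt h1 (lt_of_le_of_lt h2 (h4 ▸ h3)))
    rw [hhalf] at this
    exact absurd this (lt_irrefl _)
  -- extract a point with sizable density
  set κ := δ / (17 * t) with hκ_def
  have hκ : 0 < κ := div_pos hδ0 (by linarith)
  obtain ⟨xs, hxs⟩ : ∃ xs, κ ≤ α xs := by
    rcases hAB with hA' | hB'
    · exact exists_point hα0 hlc hint ht hδ0 hδ1 hA'
    · -- reflect
      set β := fun x => α (-x) with hβ_def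
      have hβ0 : ∀ x, 0 ≤ β x := fun x => hα0 (-x)
      have hβlc : IsLogConcave β := by
        intro x y a b ha hb hab
        have := hlc (-x) (-y) a b ha hb hab
        have harg : a * -x + b * -y = -(a * x + b * y) := by ring
        rw [harg] at this
        exact this
      have hβint : (∫⁻ x : ℝ, ENNReal.ofReal (β x)) = 1 := by
        rw [hβ_def]
        rw [lintegral_reflect (fun x => ENNReal.ofReal (α x))]
        exact hint
      have hmapeq : dens β = Measure.map Neg.neg (dens α) := (dens_neg_eq).symm
      have hAβ : {x | β (x + t) ≤ (1 - δ) * β x} =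
          (MeasurableEquiv.neg ℝ) ⁻¹' B := by
        ext x
        simp only [hβ_def, hB_def, Set.mem_setOf_eq, Set.mem_preimage,
          MeasurableEquiv.neg_apply]
        constructor
        · intro h
          have : α (-x - t) ≤ (1 - δ) * α (-x) := by
            rwa [show -x - t = -(x + t) by ring]
          exact this
        · intro h
          rwa [show -(x + t) = -x - t by ring]
      have hBmass : ENNReal.ofReal (1/4) ≤ dens β {x | β (x + t) ≤ (1 - δ) * β x} := by
        rw [hAβ, hmapeq]
        have hνmap : Measure.map Neg.neg (dens α) =
            Measure.map (MeasurableEquiv.neg ℝ) (dens α) := by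
          congr 1
        rw [hνmap, MeasurableEquiv.map_apply]
        have : (MeasurableEquiv.neg ℝ) ⁻¹' ((MeasurableEquiv.neg ℝ) ⁻¹' B) = B := by
          ext x
          simp [MeasurableEquiv.neg_apply]
        rw [this]
        exact hB'
      obtain ⟨ys, hys⟩ := exists_point hβ0 hβlc hβint ht hδ0 hδ1 hBmass
      exact ⟨-ys, hys⟩
  -- second moment bound around xs
  have hint1 : (∫⁻ x : ℝ, ENNReal.ofReal (α x)) ≤ 1 := le_of_eq hint
  have hright : ∫⁻ x in Set.Ici xs, ENNReal.ofReal ((x - xs) ^ 2) ∂(dens α) ≤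
      ENNReal.ofReal (320 / κ ^ 2) := one_sided hα0 hlc hint1 hκ hxs
  have hleft : ∫⁻ x in Set.Iic xs, ENNReal.ofReal ((x - xs) ^ 2) ∂(dens α) ≤
      ENNReal.ofReal (320 / κ ^ 2) := by
    set β := fun x => α (-x) with hβ_def
    have hβ0 : ∀ x, 0 ≤ β x := fun x => hα0 (-x)
    have hβlc : IsLogConcave β := by
      intro x y a b ha hb hab
      have := hlc (-x) (-y) a b ha hb hab
      have harg : a * -x + b * -y = -(a * x + b * y) := by ring
      rw [harg] at this
      exact this
    have hβint : (∫⁻ x : ℝ, ENNReal.ofReal (β x)) ≤ 1 := by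
      rw [hβ_def, lintegral_reflect (fun x => ENNReal.ofReal (α x))]
      exact hint1
    have hβxs : κ ≤ β (-xs) := by
      rw [hβ_def]; simpa using hxs
    have hos := one_sided hβ0 hβlc hβint hκ hβxs
    have hmapeq : dens β = Measure.map Neg.neg (dens α) := (dens_neg_eq).symm
    rw [hmapeq] at hos
    have hmeas : Measurable fun y : ℝ =>
        (Set.Ici (-xs)).indicator (fun y => ENNReal.ofReal ((y - -xs) ^ 2)) y := by
      apply Measurable.indicator
      · exact (measurable_id.sub_const _).pow_const 2 |>.ennreal_ofReal
      · exact measurableSet_Ici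
    have htrans : ∫⁻ y in Set.Ici (-xs), ENNReal.ofReal ((y - -xs) ^ 2)
          ∂(Measure.map Neg.neg (dens α)) =
        ∫⁻ x in Set.Iic xs, ENNReal.ofReal ((x - xs) ^ 2) ∂(dens α) := by
      rw [← lintegral_indicator measurableSet_Ici, ← lintegral_indicator measurableSet_Iic]
      rw [lintegral_map hmeas measurable_neg]
      congr 1
      funext x
      by_cases h : x ≤ xs
      · rw [Set.indicator_of_mem (by simpa using h : -x ∈ Set.Ici (-xs)),
          Set.indicator_of_mem (by simpa using h : x ∈ Set.Iic xs)]
        congr 1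
        ring
      · rw [Set.indicator_of_notMem (by simpa using h),
          Set.indicator_of_notMem (by simpa using h)]
    rw [htrans] at hos
    exact hos
  -- total second moment
  have hV : (∫⁻ x, ENNReal.ofReal ((x - xs) ^ 2) ∂(dens α)) ≤
      ENNReal.ofReal (640 / κ ^ 2) := by
    have hsplit : (∫⁻ x, ENNReal.ofReal ((x - xs) ^ 2) ∂(dens α)) =
        (∫⁻ x in Set.Iic xs, ENNReal.ofReal ((x - xs) ^ 2) ∂(dens α)) +
        (∫⁻ x in (Set.Iic xs)ᶜ, ENNReal.ofReal ((x - xs) ^ 2) ∂(dens α)) :=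
      (lintegral_add_compl _ measurableSet_Iic).symm
    have hcompl : (∫⁻ x in (Set.Iic xs)ᶜ, ENNReal.ofReal ((x - xs) ^ 2) ∂(dens α)) ≤
        ∫⁻ x in Set.Ici xs, ENNReal.ofReal ((x - xs) ^ 2) ∂(dens α) := by
      apply lintegral_mono_set
      rw [Set.compl_Iic]
      exact Set.Ioi_subset_Ici_self
    calc (∫⁻ x, ENNReal.ofReal ((x - xs) ^ 2) ∂(dens α))
        ≤ ENNReal.ofReal (320 / κ ^ 2) + ENNReal.ofReal (320 / κ ^ 2) := by
          rw [hsplit]; exact add_le_add hleft (le_trans hcompl hright)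
      _ = ENNReal.ofReal (640 / κ ^ 2) := by
          rw [← ENNReal.ofReal_add (by positivity) (by positivity)]
          congr 1
          ring
  -- from lintegral bound to variance bound
  have hmeas_sq : Measurable fun x : ℝ => (x - xs) ^ 2 :=
    (measurable_id.sub_const _).pow_const 2
  have hw_int : Integrable (fun x => (x - xs) ^ 2) (dens α) := by
    refine ⟨hmeas_sq.aestronglyMeasurable, ?_⟩
    rw [hasFiniteIntegral_iff_norm]
    have : (∫⁻ x, ENNReal.ofReal ‖(x - xs) ^ 2‖ ∂(dens α)) =
        ∫⁻ x, ENNReal.ofReal ((x - xs) ^ 2) ∂(dens α) := by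
      apply lintegral_congr
      intro x
      rw [Real.norm_eq_abs, abs_of_nonneg (sq_nonneg _)]
    rw [this]
    exact lt_of_le_of_lt hV ENNReal.ofReal_lt_top
  have hx_int : Integrable (fun x : ℝ => x) (dens α) := by
    refine ⟨measurable_id'.aestronglyMeasurable, ?_⟩
    rw [hasFiniteIntegral_iff_norm]
    have hptwise : ∀ x : ℝ, ENNReal.ofReal ‖x‖ ≤
        ENNReal.ofReal ((x - xs) ^ 2) + ENNReal.ofReal (1 + |xs|) := by
      intro x
      rw [← ENNReal.ofReal_add (sq_nonneg _) (by positivity)]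
      apply ENNReal.ofReal_le_ofReal
      rw [Real.norm_eq_abs]
      have h1 : |x| ≤ |x - xs| + |xs| := by
        calc |x| = |(x - xs) + xs| := by ring_nf
          _ ≤ |x - xs| + |xs| := abs_add_le _ _
      have h2 : |x - xs| ≤ (x - xs) ^ 2 + 1 := by nlinarith [abs_nonneg (x - xs), sq_abs (x - xs)]
      linarith
    calc (∫⁻ x, ENNReal.ofReal ‖x‖ ∂(dens α))
        ≤ ∫⁻ x, (ENNReal.ofReal ((x - xs) ^ 2) + ENNReal.ofReal (1 + |xs|)) ∂(dens α) :=
          lintegral_mono hptwise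
      _ = (∫⁻ x, ENNReal.ofReal ((x - xs) ^ 2) ∂(dens α)) + ENNReal.ofReal (1 + |xs|) := by
          rw [lintegral_add_right _ measurable_const, lintegral_const, measure_univ, mul_one]
      _ < ⊤ := by
          apply ENNReal.add_lt_top.mpr
          exact ⟨lt_of_le_of_lt hV ENNReal.ofReal_lt_top, ENNReal.ofReal_lt_top⟩
  have hx2_int : Integrable (fun x : ℝ => x ^ 2) (dens α) := by
    have : (fun x : ℝ => x ^ 2) = fun x => (x - xs) ^ 2 + (2 * xs) * x + (- xs ^ 2) := by
      funext x; ring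
    rw [this]
    exact (hw_int.add (hx_int.const_mul _)).add (integrable_const _)
  have hmem : MemLp (fun x : ℝ => x) 2 (dens α) := by
    rw [memLp_two_iff_integrable_sq measurable_id'.aestronglyMeasurable]
    exact hx2_int
  have hvar_eq : ProbabilityTheory.variance id (dens α) =
      (∫ x, x ^ 2 ∂(dens α)) - (∫ x, x ∂(dens α)) ^ 2 := by
    show ProbabilityTheory.variance (fun x : ℝ => x) (dens α) = _
    rw [ProbabilityTheory.variance_eq_sub hmem]
    have hpow : ((fun x : ℝ => x) ^ 2) = fun x : ℝ => x ^ 2 := by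
      funext x
      simp [Pi.pow_apply]
    rw [hpow]
  have hexp : ∫ x, (x - xs) ^ 2 ∂(dens α) =
      (∫ x, x ^ 2 ∂(dens α)) - 2 * xs * (∫ x, x ∂(dens α)) + xs ^ 2 := by
    have he : (fun x : ℝ => (x - xs) ^ 2) =
        fun x => (x ^ 2 - 2 * xs * x) + xs ^ 2 := by
      funext x; ring
    have hint_a : Integrable (fun x : ℝ => x ^ 2 - 2 * xs * x) (dens α) :=
      hx2_int.sub (hx_int.const_mul (2 * xs))
    have hint_b : Integrable (fun x : ℝ => 2 * xs * x) (dens α) :=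
      hx_int.const_mul (2 * xs)
    rw [he, integral_add hint_a (integrable_const _),
      integral_sub hx2_int hint_b, integral_const_mul, integral_const, probReal_univ]
    simp
  have hw_eq : ∫ x, (x - xs) ^ 2 ∂(dens α) =
      (∫⁻ x, ENNReal.ofReal ((x - xs) ^ 2) ∂(dens α)).toReal := by
    rw [integral_eq_lintegral_of_nonneg_ae]
    · filter_upwards with x using sq_nonneg _
    · exact hmeas_sq.aestronglyMeasurable
  have hw_bound : ∫ x, (x - xs) ^ 2 ∂(dens α) ≤ 640 / κ ^ 2 := by
    rw [hw_eq]
    calc (∫⁻ x, ENNReal.ofReal ((x - xs) ^ 2) ∂(dens α)).toReal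
        ≤ (ENNReal.ofReal (640 / κ ^ 2)).toReal :=
          ENNReal.toReal_mono ENNReal.ofReal_ne_top hV
      _ = 640 / κ ^ 2 := ENNReal.toReal_ofReal (by positivity)
  have hvar_le : ProbabilityTheory.variance id (dens α) ≤ ∫ x, (x - xs) ^ 2 ∂(dens α) := by
    rw [hvar_eq, hexp]
    nlinarith [sq_nonneg ((∫ x, x ∂(dens α)) - xs)]
  have hκ2 : 640 / κ ^ 2 ≤ (500 * t / δ) ^ 2 := by
    have ht' : t ≠ 0 := ht.ne'
    have hδ' : δ ≠ 0 := hδ0.ne'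
    have h1 : 640 / κ ^ 2 = 184960 * t ^ 2 / δ ^ 2 := by
      rw [hκ_def]
      field_simp
      ring
    have h2 : (500 * t / δ) ^ 2 = 250000 * t ^ 2 / δ ^ 2 := by
      field_simp
      ring
    rw [h1, h2]
    gcongr
    nlinarith [sq_nonneg t]
  calc ProbabilityTheory.variance id (dens α)
      ≤ ∫ x, (x - xs) ^ 2 ∂(dens α) := hvar_le
    _ ≤ 640 / κ ^ 2 := hw_bound
    _ ≤ (500 * t / δ) ^ 2 := hκ2
end

section
/- Let ξ be a real-valued random variable with log-concave density α = exp(−f), where f : ℝ → (−∞, ∞] is convex. Let C ≥ 4 and let M = max_{t ∈ ℝ} α(t). Then P(f''(ξ) > (CM)²) ≤ 4/C. -/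
open MeasureTheory ENNReal

open Set Filter Topology

section Aux

lemma aux_lintegral_deriv_mono (G : ℝ → ℝ) (hG : Monotone G) (a b c : ℝ) (hab : a ≤ b)
    (hbc : b < c) :
    ∫⁻ x in Set.Icc a b, ENNReal.ofReal (deriv G x) ≤ ENNReal.ofReal (G c - G a) := by
  set δ : ℕ → ℝ := fun n => 1 / (n + 1 : ℝ) with hδdef
  have hδpos : ∀ n, 0 < δ n := fun n => by positivity
  have hδto : Tendsto δ atTop (𝓝 0) := tendsto_one_div_add_atTop_nhds_zero_nat
  set h : ℕ → ℝ → ℝ := fun n x => (G (x + δ n) - G x) / δ n with hhdef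
  have hnn : ∀ n x, 0 ≤ h n x := fun n x =>
    div_nonneg (sub_nonneg.2 (hG (by linarith [hδpos n]))) (hδpos n).le
  have hmeas : ∀ n, Measurable fun x => ENNReal.ofReal (h n x) := by
    intro n
    exact (((hG.measurable.comp (measurable_id.add_const (δ n))).sub
      hG.measurable).div_const (δ n)).ennreal_ofReal
  have stepA : ∀ᵐ x : ℝ,
      ENNReal.ofReal (deriv G x) ≤ Filter.liminf (fun n => ENNReal.ofReal (h n x)) atTop := by
    filter_upwards [hG.ae_differentiableAt] with x hx
    have hd := hx.hasDerivAt
    rw [hasDerivAt_iff_tendsto_slope] at hd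
    have h1 : Tendsto (fun n => x + δ n) atTop (𝓝[≠] x) := by
      apply tendsto_nhdsWithin_of_tendsto_nhds_of_eventually_within
      · simpa using tendsto_const_nhds.add hδto
      · exact Eventually.of_forall fun n => by
          simp only [mem_compl_iff, mem_singleton_iff]
          intro hcon
          nlinarith [hδpos n, congrArg (· - x) hcon]
    have h2 : Tendsto (fun n => h n x) atTop (𝓝 (deriv G x)) := by
      have := hd.comp h1
      convert this using 2 with n
      rw [Function.comp_apply, slope_def_field]
      rw [hhdef]
      simp only [add_sub_cancel_left]
    have h3 : Tendsto (fun n => ENNReal.ofReal (h n x)) atTop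
        (𝓝 (ENNReal.ofReal (deriv G x))) :=
      (ENNReal.continuous_ofReal.tendsto _).comp h2
    exact h3.liminf_eq.ge
  have Gii : ∀ p q : ℝ, IntervalIntegrable G volume p q := by
    intro p q
    exact (hG.monotoneOn _).intervalIntegrable
  calc
    ∫⁻ x in Set.Icc a b, ENNReal.ofReal (deriv G x)
        ≤ ∫⁻ x in Set.Icc a b, Filter.liminf (fun n => ENNReal.ofReal (h n x)) atTop :=
      lintegral_mono_ae (ae_restrict_of_ae stepA)
    _ ≤ Filter.liminf (fun n => ∫⁻ x in Set.Icc a b, ENNReal.ofReal (h n x)) atTop :=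
      lintegral_liminf_le fun n => hmeas n
    _ ≤ ENNReal.ofReal (G c - G a) := by
      have hev : ∀ᶠ n in atTop,
          (∫⁻ x in Set.Icc a b, ENNReal.ofReal (h n x)) ≤ ENNReal.ofReal (G c - G a) := by
        filter_upwards [hδto.eventually_lt_const (show (0:ℝ) < c - b by linarith)] with n hn
        set d := δ n with hd
        have hd0 : 0 < d := hδpos n
        have hdc : b + d ≤ c := by linarith
        have hGd : Monotone fun x => G (x + d) := fun x y hxy => hG (by linarith)
        have hint : IntegrableOn (h n) (Set.Icc a b) := by
          have i1 : IntegrableOn (fun x => G (x + d)) (Set.Icc a b) :=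
            (hGd.monotoneOn _).integrableOn_isCompact isCompact_Icc
          have i2 : IntegrableOn G (Set.Icc a b) :=
            (hG.monotoneOn _).integrableOn_isCompact isCompact_Icc
          exact (i1.sub i2).div_const d
        have heq : (∫⁻ x in Set.Icc a b, ENNReal.ofReal (h n x))
            = ENNReal.ofReal (∫ x in Set.Icc a b, h n x) :=
          (ofReal_integral_eq_lintegral_ofReal hint
            (Eventually.of_forall fun x => hnn n x)).symm
        rw [heq]
        apply ENNReal.ofReal_le_ofReal
        have hIcc : (∫ x in Set.Icc a b, h n x) = ∫ x in a..b, h n x := by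
          rw [intervalIntegral.integral_of_le hab, integral_Icc_eq_integral_Ioc]
        rw [hIcc]
        have hcomp : IntervalIntegrable (fun x => G (x + d)) volume a b :=
          (hGd.monotoneOn _).intervalIntegrable
        have e0 : (∫ x in a..b, h n x)
            = ((∫ x in a..b, G (x + d)) - ∫ x in a..b, G x) / d := by
          rw [hhdef]
          rw [intervalIntegral.integral_div, intervalIntegral.integral_sub hcomp (Gii a b)]
        have e1 : (∫ x in a..b, G (x + d)) = ∫ x in (a+d)..(b+d), G x :=
          intervalIntegral.integral_comp_add_right (fun x => G x) d
        have e2 := intervalIntegral.integral_add_adjacent_intervals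
          (Gii a (a+d)) (Gii (a+d) (b+d))
        have e3 := intervalIntegral.integral_add_adjacent_intervals (Gii a b) (Gii b (b+d))
        have e4 : (∫ x in b..(b+d), G x) ≤ ∫ x in b..(b+d), G c := by
          apply intervalIntegral.integral_mono_on (by linarith) (Gii _ _)
            intervalIntegrable_const
          intro x hx
          exact hG (le_trans hx.2 hdc)
        have e5 : (∫ _ in b..(b+d), G c) = d * G c := by
          rw [intervalIntegral.integral_const, smul_eq_mul, add_sub_cancel_left]
        have e6 : (∫ _ in a..(a+d), G a) ≤ ∫ x in a..(a+d), G x := by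
          apply intervalIntegral.integral_mono_on (by linarith)
            intervalIntegrable_const (Gii _ _)
          intro x hx
          exact hG hx.1
        have e7 : (∫ _ in a..(a+d), G a) = d * G a := by
          rw [intervalIntegral.integral_const, smul_eq_mul, add_sub_cancel_left]
        rw [e0, e1]
        rw [div_le_iff₀ hd0]
        nlinarith [e4, e6, e2, e3, e5, e7]
      calc Filter.liminf (fun n => ∫⁻ x in Set.Icc a b, ENNReal.ofReal (h n x)) atTop
          ≤ Filter.liminf (fun _ : ℕ => ENNReal.ofReal (G c - G a)) atTop :=
            Filter.liminf_le_liminf hev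
        _ = ENNReal.ofReal (G c - G a) := Filter.liminf_const _

lemma aux_lintegral_deriv_monoOn (g : ℝ → ℝ) (a b : ℝ) (hab : a ≤ b)
    (hg : MonotoneOn g (Set.Icc a b)) :
    ∫⁻ x in Set.Icc a b, ENNReal.ofReal (deriv g x) ≤ ENNReal.ofReal (g b - g a) := by
  set G : ℝ → ℝ := fun x => g (max a (min x b)) with hGdef
  have hmem : ∀ x : ℝ, max a (min x b) ∈ Set.Icc a b := fun x =>
    ⟨le_max_left _ _, max_le hab (min_le_right _ _)⟩
  have hGmono : Monotone G := by
    intro x y hxy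
    exact hg (hmem x) (hmem y) (max_le_max le_rfl (min_le_min_right _ hxy))
  have hGa : G a = g a := by
    rw [hGdef]; simp only [min_eq_left hab, max_self]
  have hGc : G (b + 1) = g b := by
    show g (max a (min (b+1) b)) = g b
    rw [min_eq_right (by linarith : b ≤ b+1), max_eq_right hab]
  have key := aux_lintegral_deriv_mono G hGmono a b (b + 1) hab (lt_add_one b)
  rw [hGa, hGc] at key
  refine le_trans (le_of_eq ?_) key
  apply lintegral_congr_ae
  have h0 : (volume.restrict (Set.Icc a b)) (Set.Ioo a b)ᶜ = 0 := by
    rw [Measure.restrict_apply (measurableSet_Ioo.compl)]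
    have : (Set.Ioo a b)ᶜ ∩ Set.Icc a b ⊆ {a, b} := by
      intro x ⟨hx1, hx2⟩
      simp only [Set.mem_compl_iff, Set.mem_Ioo, not_and_or, not_lt] at hx1
      rcases hx1 with h | h
      · exact Or.inl (le_antisymm h hx2.1)
      · exact Or.inr (le_antisymm hx2.2 h)
    exact measure_mono_null this (Set.Countable.measure_zero (by simp) _)
  have : ∀ᵐ x ∂(volume.restrict (Set.Icc a b)), x ∈ Set.Ioo a b := by
    rw [ae_iff]; exact h0
  filter_upwards [this] with x hx
  have : deriv g x = deriv G x := by
    apply Filter.EventuallyEq.deriv_eq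
    filter_upwards [isOpen_Ioo.mem_nhds hx] with y hy
    rw [hGdef]
    simp only [min_eq_left hy.2.le, max_eq_right hy.1.le]
  rw [this]

lemma aux_exp_lintegral (t k c : ℝ) (hk : 0 < k) (hc : 0 ≤ c) :
    (∫⁻ x in Set.Ici t, ENNReal.ofReal (c * Real.exp (-(k * (x - t)))))
      = ENNReal.ofReal (c / k) := by
  have hfun : ∀ x : ℝ, c * Real.exp (-(k * (x - t)))
      = (c * Real.exp (k * t)) * Real.exp (-k * x) := by
    intro x
    rw [mul_assoc, ← Real.exp_add]
    congr 2
    ring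
  have hint : IntegrableOn (fun x => c * Real.exp (-(k * (x - t)))) (Set.Ici t) := by
    rw [integrableOn_Ici_iff_integrableOn_Ioi,
      integrableOn_congr_fun (fun x _ => hfun x) measurableSet_Ioi]
    exact (exp_neg_integrableOn_Ioi t hk).const_mul _
  rw [← ofReal_integral_eq_lintegral_ofReal hint
    (Eventually.of_forall fun x => by positivity)]
  congr 1
  rw [integral_Ici_eq_integral_Ioi]
  simp_rw [hfun]
  rw [integral_const_mul]
  have hcomp : (∫ x in Set.Ioi t, Real.exp (-k * x)) = k⁻¹ * Real.exp (-(k * t)) := by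
    have h1 : (∫ x in Set.Ioi t, Real.exp (-(k * x)))
        = k⁻¹ • ∫ x in Set.Ioi (k * t), Real.exp (-x) :=
      integral_comp_mul_left_Ioi (fun y => Real.exp (-y)) t hk
    rw [integral_exp_neg_Ioi] at h1
    simp_rw [neg_mul]
    rw [h1, smul_eq_mul]
  rw [hcomp]
  have hee : Real.exp (k * t) * Real.exp (-(k * t)) = 1 := by
    rw [← Real.exp_add]; simp
  field_simp
  nlinarith [hee]

lemma aux_right_tail (α : ℝ → ℝ) (t k c : ℝ) (hk : 0 < k) (hc : 0 ≤ c)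
    (hbound : ∀ x, t ≤ x → α x ≤ c * Real.exp (-(k * (x - t)))) :
    (volume.withDensity fun x => ENNReal.ofReal (α x)) (Set.Ici t)
      ≤ ENNReal.ofReal (c / k) := by
  rw [withDensity_apply _ measurableSet_Ici]
  calc
    ∫⁻ x in Set.Ici t, ENNReal.ofReal (α x)
        ≤ ∫⁻ x in Set.Ici t, ENNReal.ofReal (c * Real.exp (-(k * (x - t)))) :=
      lintegral_mono_ae ((ae_restrict_iff' measurableSet_Ici).2
        (Eventually.of_forall fun x hx => ENNReal.ofReal_le_ofReal (hbound x hx)))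
    _ = ENNReal.ofReal (c / k) := aux_exp_lintegral t k c hk hc

lemma aux_left_tail (α : ℝ → ℝ) (t k c : ℝ) (hk : 0 < k) (hc : 0 ≤ c)
    (hbound : ∀ x, x ≤ t → α x ≤ c * Real.exp (-(k * (t - x)))) :
    (volume.withDensity fun x => ENNReal.ofReal (α x)) (Set.Iic t)
      ≤ ENNReal.ofReal (c / k) := by
  rw [withDensity_apply _ measurableSet_Iic]
  have step1 : (∫⁻ x in Set.Iic t, ENNReal.ofReal (α x))
      ≤ ∫⁻ x in Set.Iic t, ENNReal.ofReal (c * Real.exp (-(k * (t - x)))) :=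
    lintegral_mono_ae ((ae_restrict_iff' measurableSet_Iic).2
      (Eventually.of_forall fun x hx => ENNReal.ofReal_le_ofReal (hbound x hx)))
  refine le_trans step1 (le_of_eq ?_)
  have hmeasF : Measurable fun y : ℝ =>
      (Set.Ici (-t)).indicator
        (fun z => ENNReal.ofReal (c * Real.exp (-(k * (z - -t))))) y := by
    apply Measurable.indicator _ measurableSet_Ici
    apply Measurable.ennreal_ofReal
    fun_prop
  have hmp := Measure.measurePreserving_neg (volume : Measure ℝ)
  have key := hmp.lintegral_comp hmeasF
  have hind : ∀ x : ℝ, (Set.Ici (-t)).indicator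
        (fun z => ENNReal.ofReal (c * Real.exp (-(k * (z - -t))))) (-x)
      = (Set.Iic t).indicator
        (fun z => ENNReal.ofReal (c * Real.exp (-(k * (t - z))))) x := by
    intro x
    by_cases hx : x ≤ t
    · rw [Set.indicator_of_mem (by simpa using hx), Set.indicator_of_mem (by simpa using hx)]
      congr 3
      ring
    · rw [Set.indicator_of_notMem (by simpa using hx),
        Set.indicator_of_notMem (by simpa using hx)]
  rw [← lintegral_indicator measurableSet_Iic]
  simp_rw [← hind]
  rw [key, lintegral_indicator measurableSet_Ici]
  exact aux_exp_lintegral (-t) k c hk hc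

end Aux

/-- Let `ξ` be a real random variable with log-concave density `α = exp (-f)`,
`f` convex.  Let `g` be the right derivative of `f` on `I = {f < ∞} = {α > 0}`
and let `f''`, defined a.e. on `I`, be the derivative of `g`.  If `C ≥ 4` and
`M = max α`, then `P (f''(ξ) > (C M)²) ≤ 4 / C`. -/
theorem second_log_derivative_quantile
    (α g f'' : ℝ → ℝ) (M C : ℝ)
    (hα : ∀ x, 0 ≤ α x) (hlc : IsLogConcave α)
    (hprob : ∫⁻ x : ℝ, ENNReal.ofReal (α x) = 1)
    -- `g` is the right derivative of `f = -log α` on `{α > 0}`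
    (hg : ∀ x, 0 < α x →
      HasDerivWithinAt (fun y => - Real.log (α y)) (g x) (Set.Ioi x) x)
    -- `f''` is the derivative of `g`, which exists a.e. on `{α > 0}`
    (hf'' : ∀ᵐ x ∂(volume : Measure ℝ), 0 < α x → HasDerivAt g (f'' x) x)
    -- `M` is the maximal value of the density `α`
    (hM : IsGreatest (Set.range α) M)
    (hC : 4 ≤ C) :
    (volume.withDensity fun x => ENNReal.ofReal (α x))
        {x : ℝ | (C * M) ^ 2 < f'' x} ≤ ENNReal.ofReal (4 / C) := by
  set μ := volume.withDensity fun x => ENNReal.ofReal (α x) with hμdef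
  set I : Set ℝ := {x | 0 < α x} with hIdef
  set f : ℝ → ℝ := fun x => -Real.log (α x) with hfdef
  have hαM : ∀ x, α x ≤ M := fun x => hM.2 ⟨x, rfl⟩
  have hM0 : 0 < M := by
    by_contra hM0
    push_neg at hM0
    have hz : ∀ x : ℝ, α x = 0 := fun x => le_antisymm ((hαM x).trans hM0) (hα x)
    rw [show (∫⁻ x : ℝ, ENNReal.ofReal (α x)) = 0 by simp [hz]] at hprob
    exact zero_ne_one hprob
  have hC0 : (0:ℝ) < C := by linarith
  have hCM : 0 < C * M := mul_pos hC0 hM0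
  have hIconv : Convex ℝ I := by
    intro x hx y hy a b ha hb hab
    simp only [hIdef, Set.mem_setOf_eq, smul_eq_mul] at *
    exact lt_of_lt_of_le
      (mul_pos (Real.rpow_pos_of_pos hx a) (Real.rpow_pos_of_pos hy b))
      (hlc x y a b ha hb hab)
  have hIoc : I.OrdConnected := hIconv.ordConnected
  have hfconv : ConvexOn ℝ I f := by
    refine ⟨hIconv, fun x hx y hy a b ha hb hab => ?_⟩
    simp only [hIdef, Set.mem_setOf_eq] at hx hy
    simp only [smul_eq_mul, hfdef]
    have h1 := hlc x y a b ha hb hab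
    have hp : 0 < α x ^ a * α y ^ b :=
      mul_pos (Real.rpow_pos_of_pos hx a) (Real.rpow_pos_of_pos hy b)
    calc -Real.log (α (a * x + b * y)) ≤ -Real.log (α x ^ a * α y ^ b) :=
          neg_le_neg (Real.log_le_log hp h1)
      _ = -(a * Real.log (α x) + b * Real.log (α y)) := by
          rw [Real.log_mul (ne_of_gt (Real.rpow_pos_of_pos hx a))
            (ne_of_gt (Real.rpow_pos_of_pos hy b)), Real.log_rpow hx, Real.log_rpow hy]
      _ = a * -Real.log (α x) + b * -Real.log (α y) := by ring
  have hαzero : ∀ x, x ∉ I → α x = 0 := fun x hx =>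
    le_antisymm (not_lt.1 hx) (hα x)
  have hαexp : ∀ x ∈ I, α x = Real.exp (-f x) := by
    intro x hx
    rw [hfdef]
    simp only [neg_neg]
    rw [Real.exp_log hx]
  have hg' : ∀ x ∈ I, HasDerivWithinAt f (g x) (Set.Ioi x) x := fun x hx => hg x hx
  have hgslope : ∀ t ∈ I, Tendsto (slope f t) (𝓝[>] t) (𝓝 (g t)) := by
    intro t ht
    have := (hasDerivWithinAt_iff_tendsto_slope).mp (hg' t ht)
    rwa [Set.diff_singleton_eq_self notMem_Ioi_self] at this
  have hmax0 : ∀ t ∈ I, (∀ u ∈ I, u ≤ t) → g t = 0 := by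
    intro t ht hmaxt
    have hfz : ∀ y, t < y → f y = 0 := by
      intro y hy
      have hyI : y ∉ I := fun hyI => absurd (hmaxt y hyI) (not_le.2 hy)
      rw [hfdef]
      simp [hαzero y hyI]
    have htend := hgslope t ht
    by_cases hft : f t = 0
    · have h0 : Tendsto (slope f t) (𝓝[>] t) (𝓝 0) := by
        have hev : ∀ᶠ y in 𝓝[>] t, slope f t y = 0 := by
          filter_upwards [self_mem_nhdsWithin] with y hy
          rw [slope_def_field, hfz y hy, hft]
          simp
        rw [tendsto_congr' hev]
        exact tendsto_const_nhds
      exact tendsto_nhds_unique htend h0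
    · exfalso
      have hpos : 0 < |f t| := abs_pos.2 hft
      set K := |g t| + 1 with hK
      have hK0 : 0 < K := by positivity
      have hev1 : ∀ᶠ y in 𝓝[>] t, |slope f t y - g t| < 1 := by
        have := Metric.tendsto_nhds.mp htend 1 one_pos
        simpa [Real.dist_eq] using this
      have hmem : Set.Ioo t (t + |f t| / K) ∈ 𝓝[>] t :=
        Ioo_mem_nhdsGT (by nlinarith [div_pos hpos hK0])
      obtain ⟨y, h1, h2⟩ := (hev1.and (eventually_of_mem hmem fun y hy => hy)).exists
      have hyt : t < y := h2.1
      have hsl : slope f t y = -f t / (y - t) := by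
        rw [slope_def_field, hfz y hyt]
        ring_nf
      have habs : |slope f t y| < K := by
        calc |slope f t y| = |slope f t y - g t + g t| := by ring_nf
          _ ≤ |slope f t y - g t| + |g t| := abs_add_le _ _
          _ < 1 + |g t| := by linarith
          _ = K := by rw [hK]; ring
      rw [hsl, abs_div, abs_neg, abs_of_pos (sub_pos.2 hyt)] at habs
      have h3 : y - t < |f t| / K := by linarith [h2.2]
      have h4 : |f t| < K * (y - t) := (div_lt_iff₀ (sub_pos.2 hyt)).1 habs
      have h5 : K * (|f t| / K) = |f t| := by field_simp
      nlinarith [mul_lt_mul_of_pos_left h3 hK0]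
  set I' : Set ℝ := {t | t ∈ I ∧ ∃ u ∈ I, t < u} with hI'def
  have hI'sub : I' ⊆ I := fun t ht => ht.1
  have hI'lt : ∀ x t, x ∈ I → t ∈ I → x < t → x ∈ I' := fun x t hx ht hlt =>
    ⟨hx, t, ht, hlt⟩
  have hsupR : ∀ t ∈ I, ∀ x ∈ I, t < x → g t * (x - t) ≤ f x - f t := by
    intro t ht x hx htx
    have := hfconv.le_slope_of_hasDerivWithinAt_Ioi ht hx htx (hg' t ht)
    rw [slope_def_field] at this
    have := (le_div_iff₀ (sub_pos.2 htx)).1 this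
    linarith
  have hsupL : ∀ t ∈ I', ∀ x ∈ I, x < t → g t * (x - t) ≤ f x - f t := by
    intro t ht x hx hxt
    obtain ⟨htI, u, hu, htu⟩ := ht
    have hev : ∀ᶠ y in 𝓝[>] t, slope f x t ≤ slope f t y := by
      filter_upwards [Ioo_mem_nhdsGT htu] with y hy
      have hyI : y ∈ I := hIoc.out htI hu ⟨hy.1.le, hy.2.le⟩
      have := hfconv.slope_mono_adjacent hx hyI hxt hy.1
      rw [slope_def_field, slope_def_field]
      exact this
    have hle := ge_of_tendsto (hgslope t htI) hev
    rw [slope_def_field] at hle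
    have := (div_le_iff₀ (sub_pos.2 hxt)).1 hle
    nlinarith
  have hexpR : ∀ t ∈ I, ∀ x, t ≤ x → α x ≤ α t * Real.exp (-(g t * (x - t))) := by
    intro t ht x hx
    rcases eq_or_lt_of_le hx with rfl | hlt
    · simp
    · by_cases hxI : x ∈ I
      · have hs := hsupR t ht x hxI hlt
        rw [hαexp x hxI, hαexp t ht, ← Real.exp_add]
        apply Real.exp_le_exp.2
        linarith
      · rw [hαzero x hxI]
        exact mul_nonneg (hα t) (Real.exp_nonneg _)
  have hexpL : ∀ t ∈ I', ∀ x, x ≤ t → α x ≤ α t * Real.exp (-(g t * (x - t))) := by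
    intro t ht x hx
    rcases eq_or_lt_of_le hx with rfl | hlt
    · simp
    · by_cases hxI : x ∈ I
      · have hs := hsupL t ht x hxI hlt
        rw [hαexp x hxI, hαexp t (hI'sub ht), ← Real.exp_add]
        apply Real.exp_le_exp.2
        linarith
      · rw [hαzero x hxI]
        exact mul_nonneg (hα t) (Real.exp_nonneg _)
  have hgmono : ∀ s t, s ∈ I' → t ∈ I' → s ≤ t → g s ≤ g t := by
    intro s t hs ht hst
    rcases eq_or_lt_of_le hst with rfl | hlt
    · exact le_rfl
    · have h1 := hsupR s (hI'sub hs) t (hI'sub ht) hlt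
      have h2 := hsupL t ht s (hI'sub hs) hlt
      nlinarith
  have htailR : ∀ t, t ∈ I → C * M < g t → μ (Set.Ici t) ≤ ENNReal.ofReal (1 / C) := by
    intro t ht hgt
    have hg0 : 0 < g t := lt_trans hCM hgt
    have haux := aux_right_tail α t (g t) (α t) hg0 (hα t) (fun x hx => hexpR t ht x hx)
    refine le_trans haux (ENNReal.ofReal_le_ofReal ?_)
    rw [div_le_div_iff₀ hg0 hC0]
    nlinarith [hαM t, hα t]
  have htailL : ∀ t, t ∈ I' → g t < -(C * M) → μ (Set.Iic t) ≤ ENNReal.ofReal (1 / C) := by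
    intro t ht hgt
    have hg0 : 0 < -g t := by linarith
    have hb : ∀ x, x ≤ t → α x ≤ α t * Real.exp (-(-g t * (t - x))) := by
      intro x hx
      have hh := hexpL t ht x hx
      have harg : -(g t * (x - t)) = -(-g t * (t - x)) := by ring
      rwa [harg] at hh
    have haux := aux_left_tail α t (-g t) (α t) hg0 (hα t) hb
    refine le_trans haux (ENNReal.ofReal_le_ofReal ?_)
    rw [div_le_div_iff₀ hg0 hC0]
    nlinarith [hαM t, hα t]
  set Tp : Set ℝ := {t | t ∈ I ∧ C * M < g t} with hTpdef
  set Tm : Set ℝ := {t | t ∈ I ∧ g t < -(C * M)} with hTmdef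
  have hTpI' : Tp ⊆ I' := by
    rintro t ⟨htI, hgt⟩
    by_contra hni
    have hmaxt : ∀ u ∈ I, u ≤ t := by
      intro u hu
      by_contra hut
      exact hni ⟨htI, u, hu, not_le.1 hut⟩
    have h0 := hmax0 t htI hmaxt
    linarith
  have hTmI' : Tm ⊆ I' := by
    rintro t ⟨htI, hgt⟩
    by_contra hni
    have hmaxt : ∀ u ∈ I, u ≤ t := by
      intro u hu
      by_contra hut
      exact hni ⟨htI, u, hu, not_le.1 hut⟩
    have h0 := hmax0 t htI hmaxt
    linarith
  have hμsub : ∀ s : Set ℝ, s.Subsingleton → μ s = 0 := fun s hs =>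
    withDensity_absolutelyContinuous volume _ (hs.countable.measure_zero _)
  have hμTp : μ Tp ≤ ENNReal.ofReal (1 / C) := by
    classical
    set Q : Set ℝ := Set.range (fun q : ℚ => (q : ℝ)) with hQdef
    have hcnt : (Tp ∩ Q).Countable :=
      Set.Countable.mono Set.inter_subset_right (Set.countable_range _)
    haveI := hcnt.to_subtype
    have hdir : Directed (· ⊆ ·) (fun i : ↥(Tp ∩ Q) => Set.Ici (i : ℝ)) := by
      intro i j
      rcases le_total (i : ℝ) (j : ℝ) with h | h
      · exact ⟨i, subset_rfl, Set.Ici_subset_Ici.2 h⟩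
      · exact ⟨j, Set.Ici_subset_Ici.2 h, subset_rfl⟩
    have hlb : {x | x ∈ Tp ∧ ∀ p ∈ Tp, x ≤ p}.Subsingleton := fun x hx y hy =>
      le_antisymm (hx.2 y hy.1) (hy.2 x hx.1)
    have hcov : Tp ⊆ (⋃ i : ↥(Tp ∩ Q), Set.Ici (i : ℝ)) ∪
        {x | x ∈ Tp ∧ ∀ p ∈ Tp, x ≤ p} := by
      intro x hx
      by_cases hl : ∀ p ∈ Tp, x ≤ p
      · exact Or.inr ⟨hx, hl⟩
      push_neg at hl
      obtain ⟨p, hp, hpx⟩ := hl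
      obtain ⟨i, hi1, hi2⟩ := exists_rat_btwn hpx
      have hiI : (i : ℝ) ∈ I := hIoc.out hp.1 hx.1 ⟨hi1.le, hi2.le⟩
      have hiTp : (i : ℝ) ∈ Tp :=
        ⟨hiI, lt_of_lt_of_le hp.2 (hgmono p i (hTpI' hp) (hI'lt _ x hiI hx.1 hi2) hi1.le)⟩
      exact Or.inl (Set.mem_iUnion.2 ⟨⟨(i : ℝ), hiTp, ⟨i, rfl⟩⟩, hi2.le⟩)
    calc μ Tp ≤ μ ((⋃ i : ↥(Tp ∩ Q), Set.Ici (i : ℝ)) ∪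
        {x | x ∈ Tp ∧ ∀ p ∈ Tp, x ≤ p}) := measure_mono hcov
      _ ≤ μ (⋃ i : ↥(Tp ∩ Q), Set.Ici (i : ℝ)) +
          μ {x | x ∈ Tp ∧ ∀ p ∈ Tp, x ≤ p} := measure_union_le _ _
      _ ≤ ENNReal.ofReal (1 / C) + 0 := by
          rw [hdir.measure_iUnion, hμsub _ hlb]
          exact add_le_add (iSup_le fun i => htailR (i : ℝ) i.2.1.1 i.2.1.2) le_rfl
      _ = ENNReal.ofReal (1 / C) := add_zero _
  have hμTm : μ Tm ≤ ENNReal.ofReal (1 / C) := by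
    classical
    set Q : Set ℝ := Set.range (fun q : ℚ => (q : ℝ)) with hQdef
    have hcnt : (Tm ∩ Q).Countable :=
      Set.Countable.mono Set.inter_subset_right (Set.countable_range _)
    haveI := hcnt.to_subtype
    have hdir : Directed (· ⊆ ·) (fun i : ↥(Tm ∩ Q) => Set.Iic (i : ℝ)) := by
      intro i j
      rcases le_total (i : ℝ) (j : ℝ) with h | h
      · exact ⟨j, Set.Iic_subset_Iic.2 h, subset_rfl⟩
      · exact ⟨i, subset_rfl, Set.Iic_subset_Iic.2 h⟩
    have hub : {x | x ∈ Tm ∧ ∀ p ∈ Tm, p ≤ x}.Subsingleton := fun x hx y hy =>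
      le_antisymm (hy.2 x hx.1) (hx.2 y hy.1)
    have hcov : Tm ⊆ (⋃ i : ↥(Tm ∩ Q), Set.Iic (i : ℝ)) ∪
        {x | x ∈ Tm ∧ ∀ p ∈ Tm, p ≤ x} := by
      intro x hx
      by_cases hl : ∀ p ∈ Tm, p ≤ x
      · exact Or.inr ⟨hx, hl⟩
      push_neg at hl
      obtain ⟨p, hp, hpx⟩ := hl
      obtain ⟨i, hi1, hi2⟩ := exists_rat_btwn hpx
      have hiI : (i : ℝ) ∈ I := hIoc.out hx.1 hp.1 ⟨hi1.le, hi2.le⟩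
      have hiI' : (i : ℝ) ∈ I' := hI'lt _ p hiI hp.1 hi2
      have hiTm : (i : ℝ) ∈ Tm :=
        ⟨hiI, lt_of_le_of_lt (hgmono i p hiI' (hTmI' hp) hi2.le) hp.2⟩
      exact Or.inl (Set.mem_iUnion.2 ⟨⟨(i : ℝ), hiTm, ⟨i, rfl⟩⟩, hi1.le⟩)
    calc μ Tm ≤ μ ((⋃ i : ↥(Tm ∩ Q), Set.Iic (i : ℝ)) ∪
        {x | x ∈ Tm ∧ ∀ p ∈ Tm, p ≤ x}) := measure_mono hcov
      _ ≤ μ (⋃ i : ↥(Tm ∩ Q), Set.Iic (i : ℝ)) +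
          μ {x | x ∈ Tm ∧ ∀ p ∈ Tm, p ≤ x} := measure_union_le _ _
      _ ≤ ENNReal.ofReal (1 / C) + 0 := by
          rw [hdir.measure_iUnion, hμsub _ hub]
          exact add_le_add (iSup_le fun i => htailL (i : ℝ) (hTmI' i.2.1) i.2.1.2) le_rfl
      _ = ENNReal.ofReal (1 / C) := add_zero _
  set B : Set ℝ := {t | t ∈ I' ∧ -(C * M) ≤ g t ∧ g t ≤ C * M} with hBdef
  have hBoc : ∀ p q x, p ∈ B → q ∈ B → p ≤ x → x ≤ q → x ∈ B := by
    rintro p q x ⟨hpI', hp1, hp2⟩ ⟨hqI', hq1, hq2⟩ hpx hxq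
    have hxI : x ∈ I := hIoc.out (hI'sub hpI') (hI'sub hqI') ⟨hpx, hxq⟩
    have hxI' : x ∈ I' := by
      rcases eq_or_lt_of_le hxq with rfl | hlt
      · exact hqI'
      · exact hI'lt x q hxI (hI'sub hqI') hlt
    exact ⟨hxI', le_trans hp1 (hgmono p x hpI' hxI' hpx),
      le_trans (hgmono x q hxI' hqI' hxq) hq2⟩
  have hBord : B.OrdConnected := ⟨fun x hx y hy z hz => hBoc x y z hx hy hz.1 hz.2⟩
  have hBmeas : MeasurableSet B := hBord.measurableSet
  set E : Set ℝ := B ∩ {x | (C * M) ^ 2 < deriv g x} with hEdef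
  have hEmeas : MeasurableSet E :=
    hBmeas.inter (measurableSet_lt measurable_const (measurable_deriv g))
  have hvolE : volume E ≤ ENNReal.ofReal (2 / (C * M)) := by
    classical
    set ν := volume.withDensity fun x => ENNReal.ofReal (deriv g x) with hνdef
    have hL3 : ∀ p q : ℝ, p ∈ B → q ∈ B → ν (Set.Icc p q) ≤ ENNReal.ofReal (2 * (C * M)) := by
      intro p q hp hq
      rcases le_or_gt p q with hpq | hpq
      · rw [hνdef, withDensity_apply _ measurableSet_Icc]
        refine le_trans (aux_lintegral_deriv_monoOn g p q hpq ?_) (ENNReal.ofReal_le_ofReal ?_)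
        · intro x hx y hy hxy
          exact hgmono x y (hBoc p q x hp hq hx.1 hx.2).1 (hBoc p q y hp hq hy.1 hy.2).1 hxy
        · have h1 := hp.2.1
          have h2 := hq.2.2
          linarith
      · rw [Set.Icc_eq_empty (not_le.2 hpq)]
        simp
    have hνnull : ∀ s : Set ℝ, s.Subsingleton → ν s = 0 := fun s hs =>
      withDensity_absolutelyContinuous volume _ (hs.countable.measure_zero _)
    set Q : Set ℝ := Set.range (fun q : ℚ => (q : ℝ)) with hQdef
    have hcnt : (B ∩ Q).Countable :=
      Set.Countable.mono Set.inter_subset_right (Set.countable_range _)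
    haveI := hcnt.to_subtype
    set S : ↥(B ∩ Q) × ↥(B ∩ Q) → Set ℝ := fun ij => Set.Icc (ij.1 : ℝ) (ij.2 : ℝ)
      with hSdef
    have hdir : Directed (· ⊆ ·) S := by
      rintro ⟨i, j⟩ ⟨k, l⟩
      rcases le_total ((i : ℝ)) ((k : ℝ)) with h1 | h1 <;>
        rcases le_total ((j : ℝ)) ((l : ℝ)) with h2 | h2
      · exact ⟨(i, l), Set.Icc_subset_Icc le_rfl h2, Set.Icc_subset_Icc h1 le_rfl⟩
      · exact ⟨(i, j), subset_rfl, Set.Icc_subset_Icc h1 h2⟩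
      · exact ⟨(k, l), Set.Icc_subset_Icc h1 h2, subset_rfl⟩
      · exact ⟨(k, j), Set.Icc_subset_Icc h1 le_rfl, Set.Icc_subset_Icc le_rfl h2⟩
    have hlb : {x | x ∈ B ∧ ∀ p ∈ B, x ≤ p}.Subsingleton := fun x hx y hy =>
      le_antisymm (hx.2 y hy.1) (hy.2 x hx.1)
    have hub : {x | x ∈ B ∧ ∀ p ∈ B, p ≤ x}.Subsingleton := fun x hx y hy =>
      le_antisymm (hy.2 x hx.1) (hx.2 y hy.1)
    have hcov : B ⊆ (⋃ ij, S ij) ∪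
        ({x | x ∈ B ∧ ∀ p ∈ B, x ≤ p} ∪ {x | x ∈ B ∧ ∀ p ∈ B, p ≤ x}) := by
      intro x hx
      by_cases hl : ∀ p ∈ B, x ≤ p
      · exact Or.inr (Or.inl ⟨hx, hl⟩)
      by_cases hu : ∀ p ∈ B, p ≤ x
      · exact Or.inr (Or.inr ⟨hx, hu⟩)
      push_neg at hl hu
      obtain ⟨p, hp, hpx⟩ := hl
      obtain ⟨q, hq, hxq⟩ := hu
      obtain ⟨i, hi1, hi2⟩ := exists_rat_btwn hpx
      obtain ⟨j, hj1, hj2⟩ := exists_rat_btwn hxq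
      have hiB : (i : ℝ) ∈ B := hBoc p x _ hp hx hi1.le hi2.le
      have hjB : (j : ℝ) ∈ B := hBoc x q _ hx hq hj1.le hj2.le
      exact Or.inl (Set.mem_iUnion.2
        ⟨(⟨(i : ℝ), hiB, ⟨i, rfl⟩⟩, ⟨(j : ℝ), hjB, ⟨j, rfl⟩⟩), hi2.le, hj1.le⟩)
    have hνB : ν B ≤ ENNReal.ofReal (2 * (C * M)) := by
      calc ν B ≤ ν ((⋃ ij, S ij) ∪
          ({x | x ∈ B ∧ ∀ p ∈ B, x ≤ p} ∪ {x | x ∈ B ∧ ∀ p ∈ B, p ≤ x})) :=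
            measure_mono hcov
        _ ≤ ν (⋃ ij, S ij) +
            (ν {x | x ∈ B ∧ ∀ p ∈ B, x ≤ p} + ν {x | x ∈ B ∧ ∀ p ∈ B, p ≤ x}) :=
          le_trans (measure_union_le _ _) (add_le_add le_rfl (measure_union_le _ _))
        _ ≤ ENNReal.ofReal (2 * (C * M)) + (0 + 0) := by
            rw [hdir.measure_iUnion, hνnull _ hlb, hνnull _ hub]
            exact add_le_add (iSup_le fun ij => hL3 _ _ ij.1.2.1 ij.2.2.1) le_rfl
        _ = ENNReal.ofReal (2 * (C * M)) := by rw [add_zero, add_zero]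
    have h1 : ENNReal.ofReal ((C * M) ^ 2) * volume E ≤ ν B := by
      rw [← setLIntegral_const E (ENNReal.ofReal ((C * M) ^ 2))]
      calc (∫⁻ _ in E, ENNReal.ofReal ((C * M) ^ 2))
          ≤ ∫⁻ x in E, ENNReal.ofReal (deriv g x) :=
            setLIntegral_mono (measurable_deriv g).ennreal_ofReal
              fun x hx => ENNReal.ofReal_le_ofReal (le_of_lt hx.2)
        _ = ν E := (withDensity_apply _ hEmeas).symm
        _ ≤ ν B := measure_mono Set.inter_subset_left
    have h2 := le_trans h1 hνB
    have hrw : ENNReal.ofReal (2 * (C * M)) =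
        ENNReal.ofReal ((C * M) ^ 2) * ENNReal.ofReal (2 / (C * M)) := by
      rw [← ENNReal.ofReal_mul (by positivity)]
      congr 1
      field_simp
    rw [hrw] at h2
    exact (ENNReal.mul_le_mul_iff_right (ne_of_gt (ENNReal.ofReal_pos.2 (by positivity)))
      ENNReal.ofReal_ne_top).1 h2
  have hμE : μ E ≤ ENNReal.ofReal (2 / C) := by
    calc μ E = ∫⁻ x in E, ENNReal.ofReal (α x) := withDensity_apply _ hEmeas
      _ ≤ ∫⁻ _ in E, ENNReal.ofReal M :=
        setLIntegral_mono measurable_const fun x _ => ENNReal.ofReal_le_ofReal (hαM x)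
      _ = ENNReal.ofReal M * volume E := setLIntegral_const _ _
      _ ≤ ENNReal.ofReal M * ENNReal.ofReal (2 / (C * M)) := mul_le_mul_right hvolE _
      _ = ENNReal.ofReal (M * (2 / (C * M))) := (ENNReal.ofReal_mul hM0.le).symm
      _ = ENNReal.ofReal (2 / C) := by
          congr 1
          field_simp
  set N : Set ℝ := {x | ¬(0 < α x → HasDerivAt g (f'' x) x)} with hNdef
  have hμN : μ N = 0 :=
    withDensity_absolutelyContinuous volume _ (ae_iff.mp hf'')
  set S0 : Set ℝ := {x | ¬0 < α x} with hS0def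
  have hμS0 : μ S0 = 0 := by
    have hS0meas : MeasurableSet S0 := by
      have he : S0 = Iᶜ := rfl
      rw [he]
      exact hIoc.measurableSet.compl
    rw [hμdef, withDensity_apply _ hS0meas]
    have hz : ∀ᵐ x ∂(volume : Measure ℝ), x ∈ S0 → ENNReal.ofReal (α x) = (0 : ℝ≥0∞) :=
      ae_of_all _ fun x hx => by simp [hαzero x hx]
    rw [setLIntegral_congr_fun (g := fun _ => (0 : ℝ≥0∞)) hS0meas (fun x hx => by simp [hαzero x hx]), lintegral_zero]
  set Smax : Set ℝ := {x | x ∈ I ∧ ∀ u ∈ I, u ≤ x} with hSmaxdef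
  have hμSmax : μ Smax = 0 :=
    hμsub _ fun x hx y hy => le_antisymm (hy.2 x hx.1) (hx.2 y hy.1)
  have hcover : {x : ℝ | (C * M) ^ 2 < f'' x} ⊆
      S0 ∪ (Smax ∪ (Tp ∪ (Tm ∪ (N ∪ E)))) := by
    intro x hx
    simp only [Set.mem_setOf_eq] at hx
    by_cases h0 : 0 < α x
    swap
    · exact Or.inl h0
    right
    by_cases hmaxx : ∀ u ∈ I, u ≤ x
    · exact Or.inl ⟨h0, hmaxx⟩
    right
    have hxI' : x ∈ I' := by
      push_neg at hmaxx
      obtain ⟨u, hu, hux⟩ := hmaxx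
      exact ⟨h0, u, hu, hux⟩
    by_cases hTp' : C * M < g x
    · exact Or.inl ⟨h0, hTp'⟩
    right
    by_cases hTm' : g x < -(C * M)
    · exact Or.inl ⟨h0, hTm'⟩
    right
    by_cases hNx : HasDerivAt g (f'' x) x
    swap
    · exact Or.inl fun h => hNx (h h0)
    · refine Or.inr ⟨⟨hxI', not_lt.1 hTm', not_lt.1 hTp'⟩, ?_⟩
      simp only [Set.mem_setOf_eq]
      rw [hNx.deriv]
      exact hx
  calc μ {x : ℝ | (C * M) ^ 2 < f'' x}
      ≤ μ (S0 ∪ (Smax ∪ (Tp ∪ (Tm ∪ (N ∪ E))))) := measure_mono hcover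
    _ ≤ μ S0 + (μ Smax + (μ Tp + (μ Tm + (μ N + μ E)))) := by
        refine (measure_union_le _ _).trans (add_le_add le_rfl ?_)
        refine (measure_union_le _ _).trans (add_le_add le_rfl ?_)
        refine (measure_union_le _ _).trans (add_le_add le_rfl ?_)
        refine (measure_union_le _ _).trans (add_le_add le_rfl ?_)
        exact measure_union_le _ _
    _ ≤ 0 + (0 + (ENNReal.ofReal (1 / C) + (ENNReal.ofReal (1 / C) +
        (0 + ENNReal.ofReal (2 / C))))) := by
        gcongr <;> simp [hμS0, hμSmax, hμN, hμTp, hμTm, hμE]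
    _ = ENNReal.ofReal (4 / C) := by
        rw [zero_add, zero_add, zero_add, ← ENNReal.ofReal_add (by positivity) (by positivity),
          ← ENNReal.ofReal_add (by positivity) (by positivity)]
        congr 1
        field_simp
        ring
end

section
/- Let d ≥ 2 and L ≥ 1. There exists C > 1, depending only on d, such that for every vertex a ∈ V(Λ_L^d) and every integer m ≥ 1, the number of sets X ∈ 𝒞(Λ_L^d) with a ∈ X, |X| ≤ 3L^d/4 and |∂_{Λ_L^d} X| = m is at most C^m. -/
/-- The box `Λ_L^d`: the graph on `{1,…,L}^d` (encoded as `Fin d → Fin L`)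
with the nearest-neighbor adjacency of `ℤ^d`. -/
def boxGraph (d L : ℕ) : SimpleGraph (Fin d → Fin L) where
  Adj v w := ∃ j, (∀ i, i ≠ j → v i = w i) ∧
    ((v j : ℕ) + 1 = (w j : ℕ) ∨ (w j : ℕ) + 1 = (v j : ℕ))
  symm := by
    constructor
    rintro v w ⟨j, hj, h⟩
    exact ⟨j, fun i hi => (hj i hi).symm, h.symm⟩
  loopless := by
    constructor
    rintro v ⟨j, -, h⟩
    omega

open Classical in
/-- `|∂_G X|`: the number of edges of `G` with exactly one endpoint in `X`,
counted as ordered pairs `(u, v)`, `u ∈ X`, `v ∉ X`, `u ~ v`. -/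
noncomputable def bdryCard {V : Type*} [Fintype V] (G : SimpleGraph V)
    (X : Finset V) : ℕ :=
  (Finset.univ.filter fun p : V × V => G.Adj p.1 p.2 ∧ p.1 ∈ X ∧ p.2 ∉ X).card

/-- `X ∈ 𝒞(G)`: `X ∉ {∅, V(G)}` and both induced subgraphs `G|_X` and
`G|_{V(G) \ X}` are connected. -/
def memC {V : Type*} [Fintype V] (G : SimpleGraph V) (X : Finset V) : Prop :=
  X.Nonempty ∧ X ≠ Finset.univ ∧
    (SimpleGraph.induce (X : Set V) G).Connected ∧
    (SimpleGraph.induce ((X : Set V)ᶜ) G).Connected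



open Finset Relation

section ModA
variable {W : Type*} [Fintype W] [DecidableEq W]

/-- step relation: an edge of `H` with both endpoints in `S`. -/
def stepIn (H : SimpleGraph W) (S : Finset W) (u v : W) : Prop :=
  H.Adj u v ∧ u ∈ S ∧ v ∈ S

/-- `S` is connected (through `H`) from the root `r`. -/
def connFrom (H : SimpleGraph W) (r : W) (S : Finset W) : Prop :=
  r ∈ S ∧ ∀ y ∈ S, ReflTransGen (stepIn H S) r y

/-- `l` is a walk from `x` to `y` staying in `S`. -/
def SListP (H : SimpleGraph W) (S : Finset W) (x y : W) (l : List W) : Prop :=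
  l.Chain' H.Adj ∧ l.head? = some x ∧ l.getLast? = some y ∧ ∀ z ∈ l, z ∈ S

lemma SListP.toRTG {H : SimpleGraph W} {S : Finset W} :
    ∀ {l : List W} {x y : W}, SListP H S x y l → ReflTransGen (stepIn H S) x y := by
  intro l
  induction l with
  | nil => rintro x y ⟨-, h, -, -⟩; simp at h
  | cons z t ih =>
    rintro x y ⟨hc, hh, hl, hm⟩
    have hzx : z = x := by simpa using hh
    subst hzx
    cases t with
    | nil => simp at hl; subst hl; exact ReflTransGen.refl
    | cons w t' =>
      have hstep : stepIn H S z w :=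
        ⟨(List.isChain_cons_cons.1 hc).1, hm z (by simp), hm w (by simp)⟩
      have : SListP H S w y (w :: t') := by
        refine ⟨(List.isChain_cons_cons.1 hc).2, rfl, ?_, fun z hz => hm z (by simp [hz])⟩
        simpa using hl
      exact ReflTransGen.head hstep (ih this)

lemma RTG.toSList {H : SimpleGraph W} {S : Finset W} {x y : W}
    (h : ReflTransGen (stepIn H S) x y) (hx : x ∈ S) :
    ∃ l, SListP H S x y l := by
  induction h using ReflTransGen.head_induction_on with
  | refl => exact ⟨[y], List.isChain_singleton _, by simp, by simp, by simpa using hx⟩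
  | head hstep _ ih =>
    obtain ⟨l, hc, hh, hl, hm⟩ := ih hstep.2.2
    rename_i u c _
    refine ⟨u :: l, ?_, rfl, ?_, ?_⟩
    · cases l with
      | nil => simp at hh
      | cons a t => simp at hh; subst hh; exact List.isChain_cons_cons.2 ⟨hstep.1, hc⟩
    · cases l with
      | nil => simp at hh
      | cons a t => simpa using hl
    · intro z hz
      rcases List.mem_cons.1 hz with rfl | hz
      · exact hstep.2.1
      · exact hm z hz

open Classical in
/-- distance from `r` to `y` within `S`. -/
noncomputable def sdist (H : SimpleGraph W) (S : Finset W) (r y : W) : ℕ :=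
  sInf {n | ∃ l, SListP H S r y l ∧ l.length = n + 1}

lemma sdist_spec {H : SimpleGraph W} {S : Finset W} {r y : W}
    (h : ReflTransGen (stepIn H S) r y) (hr : r ∈ S) :
    ∃ l, SListP H S r y l ∧ l.length = sdist H S r y + 1 := by
  obtain ⟨l, hl⟩ := RTG.toSList h hr
  have hne : {n | ∃ l, SListP H S r y l ∧ l.length = n + 1}.Nonempty := by
    refine ⟨l.length - 1, l, hl, ?_⟩
    have : l ≠ [] := by rintro rfl; exact by simp [SListP] at hl
    have := List.length_pos_iff.2 this
    omega
  exact Nat.sInf_mem hne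

lemma sdist_le {H : SimpleGraph W} {S : Finset W} {r y : W} {l : List W}
    (h : SListP H S r y l) : sdist H S r y ≤ l.length - 1 := by
  have : l ≠ [] := by rintro rfl; simp [SListP] at h
  have hp := List.length_pos_iff.2 this
  exact Nat.sInf_le ⟨l, h, by omega⟩

lemma sdist_self {H : SimpleGraph W} {S : Finset W} {r : W} (hr : r ∈ S) :
    sdist H S r r = 0 := by
  have : sdist H S r r ≤ ([r] : List W).length - 1 :=
    sdist_le ⟨List.isChain_singleton _, by simp, by simp, by simpa using hr⟩
  simpa using this

/-- We can delete the farthest vertex keeping rooted connectivity. -/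
lemma erase_connFrom {H : SimpleGraph W} {S : Finset W} {r : W}
    (h : connFrom H r S) (h2 : 2 ≤ S.card) :
    ∃ v ∈ S, v ≠ r ∧ connFrom H r (S.erase v) := by
  obtain ⟨hr, hreach⟩ := h
  obtain ⟨v, hvS, hvmax⟩ := Finset.exists_max_image S (sdist H S r) ⟨r, hr⟩
  -- there is w ∈ S, w ≠ r with positive sdist
  obtain ⟨w, hwS, hwr⟩ : ∃ w ∈ S, w ≠ r := by
    by_contra hc
    push_neg at hc
    have : S ⊆ {r} := fun z hz => by simpa using hc z hz
    have := Finset.card_le_card this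
    simp at this; omega
  have hwpos : 1 ≤ sdist H S r w := by
    by_contra hc
    push_neg at hc
    interval_cases h : sdist H S r w
    obtain ⟨l, hl, hlen⟩ := sdist_spec (hreach w hwS) hr
    rw [h] at hlen
    obtain ⟨z, rfl⟩ : ∃ z, l = [z] := by
      cases l with
      | nil => simp at hlen
      | cons a t => cases t with
        | nil => exact ⟨a, rfl⟩
        | cons b t' => simp at hlen
    obtain ⟨-, h1, h2, -⟩ := hl
    simp at h1 h2
    exact hwr (h2 ▸ h1.symm ▸ rfl)
  have hvpos : 1 ≤ sdist H S r v := le_trans hwpos (hvmax w hwS)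
  have hvr : v ≠ r := by
    rintro rfl
    rw [sdist_self hr] at hvpos; omega
  refine ⟨v, hvS, hvr, Finset.mem_erase.2 ⟨Ne.symm hvr, hr⟩, ?_⟩
  intro y hy
  have hyS : y ∈ S := Finset.mem_of_mem_erase hy
  have hyv : y ≠ v := Finset.ne_of_mem_erase hy
  obtain ⟨l, hl, hlen⟩ := sdist_spec (hreach y hyS) hr
  -- claim v ∉ l
  have hvl : v ∉ l := by
    intro hmem
    obtain ⟨l₁, l₂, rfl⟩ := List.append_of_mem hmem
    obtain ⟨hc, hh, hlast, hmS⟩ := hl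
    -- prefix walk to v
    have hpre : SListP H S r v (l₁ ++ [v]) := by
      refine ⟨hc.prefix ⟨l₂, by simp⟩, ?_, by simp, ?_⟩
      · cases l₁ with
        | nil => simpa using hh
        | cons a t => simpa using hh
      · intro z hz
        refine hmS z ?_
        simp at hz ⊢
        tauto
    have h1 : sdist H S r v ≤ l₁.length := by
      have := sdist_le hpre; simpa using this
    -- suffix walk
    have hl₂ : l₂ ≠ [] := by
      rintro rfl
      simp at hlast
      exact hyv hlast.symm
    have hlen2 : l₁.length + 1 + l₂.length = sdist H S r y + 1 := by
      have := hlen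
      simp [List.length_append] at this
      omega
    have hpos : 1 ≤ l₂.length := List.length_pos_iff.2 hl₂
    have : sdist H S r y ≤ sdist H S r v := hvmax y hyS
    omega
  -- walk avoiding v
  have : SListP H (S.erase v) r y l := by
    obtain ⟨hc, hh, hlast, hmS⟩ := hl
    exact ⟨hc, hh, hlast, fun z hz => Finset.mem_erase.2
      ⟨fun hzv => hvl (hzv ▸ hz), hmS z hz⟩⟩
  exact this.toRTG

/-- Spanning walk of a connected set: length ≤ 2|S| - 1 vertices visited. -/
lemma exists_spanning_list {H : SimpleGraph W} :
    ∀ (n : ℕ) (S : Finset W) (r : W), S.card = n → connFrom H r S →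
    ∃ l : List W, l.Chain' H.Adj ∧ l.head? = some r ∧ l.toFinset = S ∧
      l.length ≤ 2 * S.card - 1 := by
  intro n
  induction n using Nat.strong_induction_on with
  | _ n ih =>
    intro S r hcard hconn
    rcases Nat.lt_or_ge n 2 with hn | hn
    · -- n = 1 (n = 0 impossible)
      have hr := hconn.1
      have hn1 : n = 1 := by
        have := Finset.card_pos.2 ⟨r, hr⟩
        omega
      have : S = {r} := by
        apply Finset.eq_singleton_iff_unique_mem.2
        refine ⟨hr, fun x hx => ?_⟩
        by_contra hxr
        have : ({x, r} : Finset W) ⊆ S := by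
          intro z hz; simp at hz; rcases hz with rfl | rfl <;> assumption
        have := Finset.card_le_card this
        rw [Finset.card_insert_of_notMem (by simpa using hxr)] at this
        simp [hcard, hn1] at this
      subst this
      exact ⟨[r], List.isChain_singleton _, by simp, by simp, by simp⟩
    · obtain ⟨v, hvS, hvr, hconn'⟩ := erase_connFrom hconn (hcard ▸ hn)
      have hcard' : (S.erase v).card = n - 1 := by
        rw [Finset.card_erase_of_mem hvS, hcard]
      obtain ⟨l', hc', hh', ht', hlen'⟩ := ih (n-1) (by omega) _ r hcard' hconn'
      -- v has a neighbor u in S.erase v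
      obtain ⟨u, hu, hadj⟩ : ∃ u ∈ S.erase v, H.Adj u v := by
        have := hconn.2 v hvS
        rcases (ReflTransGen.cases_tail this) with rfl | ⟨c, hc, hstep⟩
        · exact absurd rfl hvr
        · exact ⟨c, Finset.mem_erase.2 ⟨fun h => H.irrefl (h ▸ hstep.1), hstep.2.1⟩, hstep.1⟩
      have hul' : u ∈ l' := by rw [← List.mem_toFinset, ht']; exact hu
      obtain ⟨l₁, l₂, rfl⟩ := List.append_of_mem hul'
      refine ⟨l₁ ++ u :: v :: u :: l₂, ?_, ?_, ?_, ?_⟩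
      · unfold List.Chain' at hc' ⊢; rw [List.isChain_append] at hc' ⊢
        refine ⟨hc'.1, ?_, by simpa using hc'.2.2⟩
        rw [List.isChain_cons_cons, List.isChain_cons_cons]
        exact ⟨hadj, hadj.symm, hc'.2.1⟩
      · cases l₁ with
        | nil => simpa using hh'
        | cons a t => simpa using hh'
      · have : (l₁ ++ u :: v :: u :: l₂).toFinset = insert v (l₁ ++ u :: l₂).toFinset := by
          ext z
          simp only [List.toFinset_append, List.toFinset_cons, Finset.mem_union,
            Finset.mem_insert]
          tauto
        rw [this, ht', Finset.insert_erase hvS]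
      · have h1 : (l₁ ++ u :: v :: u :: l₂).length = (l₁ ++ u :: l₂).length + 2 := by
          simp only [List.length_append, List.length_cons]
          omega
        have h2 : 1 ≤ S.card := Finset.card_pos.2 ⟨v, hvS⟩
        rw [hcard'] at hlen'
        rw [hcard] at *
        omega

variable (H : SimpleGraph W) [DecidableRel H.Adj]

/-- all adjacency-chains of length n+1 starting at v -/
def chainsF : ℕ → W → Finset (List W)
  | 0, v => {[v]}
  | (n+1), v => (H.neighborFinset v).biUnion (fun w => (chainsF n w).image (List.cons v))

lemma card_chainsF (Δ : ℕ) (hΔ : ∀ w, H.degree w ≤ Δ) :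
    ∀ (n : ℕ) (v : W), (chainsF H n v).card ≤ Δ ^ n := by
  intro n
  induction n with
  | zero => intro v; simp [chainsF]
  | succ n ih =>
    intro v
    calc (chainsF H (n+1) v).card ≤ ∑ w ∈ H.neighborFinset v, ((chainsF H n w).image (List.cons v)).card :=
          Finset.card_biUnion_le
      _ ≤ ∑ w ∈ H.neighborFinset v, Δ ^ n := by
          refine Finset.sum_le_sum fun w _ => le_trans Finset.card_image_le (ih w)
      _ = (H.neighborFinset v).card * Δ ^ n := by rw [Finset.sum_const, smul_eq_mul]
      _ ≤ Δ * Δ ^ n := Nat.mul_le_mul_right _ (hΔ v)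
      _ = Δ ^ (n+1) := by ring

lemma mem_chainsF : ∀ (n : ℕ) (v : W) (l : List W), l.Chain' H.Adj → l.head? = some v →
    l.length = n + 1 → l ∈ chainsF H n v := by
  intro n
  induction n with
  | zero =>
    intro v l hc hh hlen
    obtain ⟨z, rfl⟩ : ∃ z, l = [z] := by
      cases l with
      | nil => simp at hlen
      | cons a t => cases t with
        | nil => exact ⟨a, rfl⟩
        | cons b t' => simp at hlen
    simp at hh; subst hh; simp [chainsF]
  | succ n ih =>
    intro v l hc hh hlen
    cases l with
    | nil => simp at hh
    | cons a t =>
      simp at hh; subst hh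
      cases t with
      | nil => simp at hlen
      | cons w t' =>
        unfold List.Chain' at hc; rw [List.isChain_cons_cons] at hc
        simp only [chainsF, Finset.mem_biUnion]
        refine ⟨w, by rw [SimpleGraph.mem_neighborFinset]; exact hc.1, ?_⟩
        refine Finset.mem_image.2 ⟨w :: t', ih w (w :: t') hc.2 rfl (by simpa using hlen), rfl⟩

lemma sum_pow_le (Δ : ℕ) (hΔ : 1 ≤ Δ) : ∀ N, ∑ n ∈ Finset.range N, Δ ^ n ≤ (Δ + 1) ^ N := by
  intro N
  induction N with
  | zero => simp
  | succ N ih =>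
    rw [Finset.sum_range_succ]
    have h1 : Δ ^ N ≤ (Δ + 1) ^ N := Nat.pow_le_pow_left (by omega) N
    have h2 : (Δ + 1) ^ (N + 1) = (Δ + 1) ^ N * (Δ + 1) := by ring
    have : 2 * (Δ+1) ^ N ≤ (Δ+1)^(N+1) := by rw [h2]; nlinarith [pow_pos (show 0 < Δ + 1 by omega) N]
    omega

/-- MAIN COUNTING LEMMA: rooted connected subsets of size q, bounded degree Δ. -/
lemma count_connFrom (Δ : ℕ) (hΔ1 : 1 ≤ Δ) (hΔ : ∀ w, H.degree w ≤ Δ) (r : W) (q : ℕ) :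
    ({S : Finset W | connFrom H r S ∧ S.card = q}.ncard : ℕ) ≤ (Δ + 1) ^ (2 * q) := by
  classical
  set 𝒮 := {S : Finset W | connFrom H r S ∧ S.card = q} with h𝒮
  -- choose spanning list for each S
  have hch : ∀ S ∈ 𝒮, ∃ l : List W, l.Chain' H.Adj ∧ l.head? = some r ∧ l.toFinset = S ∧
      l.length ≤ 2 * S.card - 1 := fun S hS => exists_spanning_list S.card S r rfl hS.1
  choose f hf1 hf2 hf3 hf4 using hch
  set T := (Finset.range (2 * q)).biUnion (fun n => chainsF H n r) with hT
  have himg : ∀ S (hS : S ∈ 𝒮), f S hS ∈ T := by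
    intro S hS
    have hne : f S hS ≠ [] := by
      intro h
      have := hf3 S hS
      rw [h] at this
      have hr : r ∈ S := hS.1.1
      rw [← this] at hr; simp at hr
    have hpos : 1 ≤ (f S hS).length := List.length_pos_iff.2 hne
    have hSq : S.card = q := hS.2
    have hq : 1 ≤ q := by
      have hr : r ∈ S := hS.1.1
      have := Finset.card_pos.2 ⟨r, hr⟩
      omega
    have hlen : (f S hS).length ≤ 2 * S.card - 1 := hf4 S hS
    refine Finset.mem_biUnion.2 ⟨(f S hS).length - 1, Finset.mem_range.2 (by omega), ?_⟩
    exact mem_chainsF H _ r _ (hf1 S hS) (hf2 S hS) (by omega)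
  -- injectivity and counting
  classical
  set g : Finset W → List W := fun S => if h : S ∈ 𝒮 then f S h else [] with hg
  have hginj : Set.InjOn g 𝒮 := by
    intro S1 h1 S2 h2 h
    simp only [hg, dif_pos h1, dif_pos h2] at h
    have e1 := hf3 S1 h1
    rw [h, hf3 S2 h2] at e1
    exact e1.symm
  have himg' : g '' 𝒮 ⊆ ↑T := by
    rintro l ⟨S, hS, rfl⟩
    simp only [hg, dif_pos hS]
    exact himg S hS
  have h1 : 𝒮.ncard ≤ T.card := by
    have := Set.ncard_le_ncard himg' T.finite_toSet
    rwa [Set.ncard_image_of_injOn hginj, Set.ncard_coe_finset] at this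
  calc 𝒮.ncard ≤ T.card := h1
    _ ≤ ∑ n ∈ Finset.range (2*q), (chainsF H n r).card := Finset.card_biUnion_le
    _ ≤ ∑ n ∈ Finset.range (2*q), Δ ^ n := Finset.sum_le_sum fun n _ => card_chainsF H Δ hΔ n r
    _ ≤ (Δ + 1) ^ (2 * q) := sum_pow_le Δ hΔ1 _

end ModA


open Finset

section ModB
variable {d L : ℕ}

/-- `v = u + e_i` (one step up in coordinate `i`). -/
def BumpAt (i : Fin d) (u v : Fin d → Fin L) : Prop :=
  (∀ k, k ≠ i → u k = v k) ∧ (v i : ℕ) = (u i : ℕ) + 1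

/-- the four corners of a unit square: `u, u' = u+e_i, w = u+e_j, w' = u+e_i+e_j`. -/
def SqQuad (u u' w w' : Fin d → Fin L) : Prop :=
  ∃ i j : Fin d, i ≠ j ∧ BumpAt i u u' ∧ BumpAt j u w ∧ BumpAt j u' w'

lemma zmod2_add_self (a : ZMod 2) : a + a = 0 := CharTwo.add_self_eq_zero a

lemma zmod2_eq_of_add {a b : ZMod 2} (h : a + b = 0) : a = b := by
  calc a = a + (b + b) := by rw [zmod2_add_self]; ring
    _ = (a + b) + b := by ring
    _ = b := by rw [h]; ring

lemma tele_zmod2 (f : ℕ → ZMod 2) (p : ℕ) : ∀ q, p ≤ q →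
    ∑ t ∈ Finset.Ico p q, (f t + f (t+1)) = f p + f q := by
  intro q
  induction q with
  | zero => intro h; have : p = 0 := by omega
            subst this; simp [zmod2_add_self]
  | succ q ih =>
    intro h
    rcases Nat.lt_or_ge p (q+1) with h' | h'
    · have hpq : p ≤ q := by omega
      rw [Finset.sum_Ico_succ_top hpq, ih hpq]
      linear_combination zmod2_add_self (f q)
    · have : p = q + 1 := by omega
      subst this
      simp [zmod2_add_self]

lemma symdiff_zmod2 (f : ℕ → ZMod 2) (c x : ℕ) :
    (∑ t ∈ Finset.Ico (min c x) (max c x), f t) +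
    (∑ t ∈ Finset.Ico (min c (x+1)) (max c (x+1)), f t) = f x := by
  rcases le_or_gt c x with h | h
  · rw [min_eq_left h, min_eq_left (by omega), max_eq_right h, max_eq_right (by omega),
      Finset.sum_Ico_succ_top h]
    linear_combination zmod2_add_self (∑ t ∈ Finset.Ico c x, f t)
  · rw [min_eq_right (by omega), min_eq_right (by omega), max_eq_left (by omega),
      max_eq_left (by omega), Finset.sum_eq_sum_Ico_succ_bot h]
    linear_combination zmod2_add_self (∑ t ∈ Finset.Ico (x+1) c, f t)

variable [NeZero L] (a : Fin d → Fin L) (χ : (Fin d → Fin L) → (Fin d → Fin L) → ZMod 2)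

/-- hybrid point: coordinates `< k` from `x`, the rest from `a`. -/
def hybP (x : Fin d → Fin L) (k : ℕ) : Fin d → Fin L :=
  fun idx => if (idx : ℕ) < k then x idx else a idx

/-- point on the sweep of coordinate `k`, at value `t`. -/
def midP (x : Fin d → Fin L) (k t : ℕ) : Fin d → Fin L :=
  fun idx => if (idx : ℕ) < k then x idx else if (idx : ℕ) = k then Fin.ofNat L t else a idx

/-- `k`-th coordinate value of `x`, as a natural number. -/
def vN (x : Fin d → Fin L) (k : ℕ) : ℕ := if h : k < d then (x ⟨k, h⟩ : ℕ) else 0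

def phaseP (x : Fin d → Fin L) (k : ℕ) : ZMod 2 :=
  ∑ t ∈ Finset.Ico (min (vN a k) (vN x k)) (max (vN a k) (vN x k)),
    χ (midP a x k t) (midP a x k (t+1))

/-- the potential. -/
def gP (x : Fin d → Fin L) : ZMod 2 := ∑ k ∈ Finset.range d, phaseP a χ x k

lemma vN_lt (x : Fin d → Fin L) {k : ℕ} (h : k < d) : vN x k < L := by
  rw [vN, dif_pos h]; exact (x ⟨k, h⟩).isLt

lemma vN_fin (x : Fin d → Fin L) (i : Fin d) : vN x (i : ℕ) = (x i : ℕ) := by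
  rw [vN, dif_pos i.isLt]

lemma midP_vN (x : Fin d → Fin L) {k : ℕ} (h : k < d) :
    midP a x k (vN x k) = hybP a x (k+1) := by
  funext idx
  rw [midP, hybP]
  rcases Nat.lt_trichotomy (idx : ℕ) k with hc | hc | hc
  · rw [if_pos hc, if_pos (by omega)]
  · rw [if_neg (by omega), if_pos hc, if_pos (by omega)]
    have he : (⟨k, h⟩ : Fin d) = idx := Fin.ext (by simp [hc])
    apply Fin.ext
    rw [Fin.val_ofNat, vN, dif_pos h, Nat.mod_eq_of_lt (x ⟨k, h⟩).isLt, he]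
  · rw [if_neg (by omega), if_neg (by omega), if_neg (by omega)]

lemma midP_base (x : Fin d → Fin L) {k : ℕ} (h : k < d) :
    midP a x k (vN a k) = hybP a x k := by
  funext idx
  rw [midP, hybP]
  rcases Nat.lt_trichotomy (idx : ℕ) k with hc | hc | hc
  · rw [if_pos hc, if_pos hc]
  · rw [if_neg (by omega), if_pos hc, if_neg (by omega)]
    have he : (⟨k, h⟩ : Fin d) = idx := Fin.ext (by simp [hc])
    apply Fin.ext
    rw [Fin.val_ofNat, vN, dif_pos h, Nat.mod_eq_of_lt (a ⟨k, h⟩).isLt, he]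
  · rw [if_neg (by omega), if_neg (by omega), if_neg (by omega)]

lemma hybP_top (x : Fin d → Fin L) : hybP a x d = x := by
  funext idx
  rw [hybP, if_pos idx.isLt]

/-- THE KEY LEMMA: discrete Green identity for the potential `gP`. -/
lemma gP_key (hsym : ∀ u v, χ u v = χ v u)
    (hsq : ∀ u u' w w', SqQuad u u' w w' → χ u u' + χ w w' + χ u w + χ u' w' = 0)
    {x y : Fin d → Fin L} {j : Fin d} (hxy : BumpAt j x y) :
    gP a χ x + gP a χ y = χ x y := by
  classical
  obtain ⟨hagree, hbump⟩ := hxy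
  set F : ℕ → ZMod 2 := fun k => χ (hybP a x k) (hybP a y k) with hF
  have hvxy : ∀ k, k ≠ (j : ℕ) → vN x k = vN y k := by
    intro k hk
    rw [vN, vN]
    split
    · next h =>
        rw [hagree ⟨k, h⟩ (by intro he; apply hk; rw [← he])]
    · rfl
  have hmid_le : ∀ k, k ≤ (j : ℕ) → ∀ t, midP a x k t = midP a y k t := by
    intro k hk t
    funext idx
    rw [midP, midP]
    by_cases h1 : (idx : ℕ) < k
    · rw [if_pos h1, if_pos h1]
      exact hagree idx (by intro he; subst he; omega)
    · simp only [if_neg h1]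
  have hhyb_le : ∀ k, k ≤ (j : ℕ) → hybP a x k = hybP a y k := by
    intro k hk
    funext idx
    rw [hybP, hybP]
    by_cases h1 : (idx : ℕ) < k
    · rw [if_pos h1, if_pos h1]
      exact hagree idx (by intro he; subst he; omega)
    · simp only [if_neg h1]
  have hvyj : vN y (j:ℕ) = vN x (j:ℕ) + 1 := by
    rw [vN_fin, vN_fin, hbump]
  -- per-coordinate computation
  have hG : ∀ k ∈ Finset.range d, phaseP a χ x k + phaseP a χ y k =
      (if k < (j:ℕ) then 0 else if k = (j:ℕ) then F (k+1) else F k + F (k+1)) := by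
    intro k hkr
    rw [Finset.mem_range] at hkr
    rcases Nat.lt_trichotomy k (j:ℕ) with hc | hc | hc
    · rw [if_pos hc]
      unfold phaseP
      rw [hvxy k (by omega)]
      have hm : ∀ t, midP a x k t = midP a y k t := hmid_le k (by omega)
      have he : (∑ t ∈ Finset.Ico (min (vN a k) (vN y k)) (max (vN a k) (vN y k)),
            χ (midP a x k t) (midP a x k (t+1))) =
          ∑ t ∈ Finset.Ico (min (vN a k) (vN y k)) (max (vN a k) (vN y k)),
            χ (midP a y k t) (midP a y k (t+1)) :=
        Finset.sum_congr rfl fun t _ => by rw [hm t, hm (t+1)]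
      rw [he, zmod2_add_self]
    · rw [if_neg (by omega), if_pos hc]
      unfold phaseP
      have hm : ∀ t, midP a y k t = midP a x k t := fun t => (hmid_le k (le_of_eq hc) t).symm
      have hvy : vN y k = vN x k + 1 := by rw [hc]; exact hvyj
      have he : (∑ t ∈ Finset.Ico (min (vN a k) (vN y k)) (max (vN a k) (vN y k)),
            χ (midP a y k t) (midP a y k (t+1))) =
          ∑ t ∈ Finset.Ico (min (vN a k) (vN x k + 1)) (max (vN a k) (vN x k + 1)),
            χ (midP a x k t) (midP a x k (t+1)) := by
        rw [hvy]
        exact Finset.sum_congr rfl fun t _ => by rw [hm t, hm (t+1)]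
      rw [he, symdiff_zmod2 (fun t => χ (midP a x k t) (midP a x k (t+1))) (vN a k) (vN x k)]
      rw [midP_vN a x hkr]
      have h2 : midP a x k (vN x k + 1) = hybP a y (k+1) := by
        rw [← hvy, ← hm, midP_vN a y hkr]
      rw [h2]
    · rw [if_neg (by omega), if_neg (by omega)]
      unfold phaseP
      rw [hvxy k (by omega)]
      set mn := min (vN a k) (vN y k) with hmn
      set mx := max (vN a k) (vN y k) with hmx
      set f : ℕ → ZMod 2 := fun t => χ (midP a x k t) (midP a y k t) with hf
      have hsquare : ∀ t, t + 1 ≤ mx →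
          χ (midP a x k t) (midP a x k (t+1)) + χ (midP a y k t) (midP a y k (t+1)) =
          f t + f (t+1) := by
        intro t ht
        have htL : t + 1 < L := by
          have h1 := vN_lt a (k := k) hkr
          have h2 := vN_lt y (k := k) hkr
          have : mx < L := by
            rw [hmx]
            omega
          omega
        have hvalt : ∀ s : ℕ, s < L → ((Fin.ofNat L s : Fin L) : ℕ) = s := by
          intro s hs
          rw [Fin.val_ofNat, Nat.mod_eq_of_lt hs]
        have hq : SqQuad (midP a x k t) (midP a x k (t+1)) (midP a y k t) (midP a y k (t+1)) := by
          refine ⟨⟨k, hkr⟩, j, ?_, ?_, ?_, ?_⟩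
          · intro he
            have : k = (j : ℕ) := by rw [← he]
            omega
          · constructor
            · intro idx hidx
              rw [midP, midP]
              by_cases h1 : (idx:ℕ) < k
              · rw [if_pos h1, if_pos h1]
              · simp only [if_neg h1,
                  if_neg (show ¬(idx:ℕ) = k from fun he => hidx (Fin.ext he))]
            · show (midP a x k (t+1) ⟨k, hkr⟩ : ℕ) = (midP a x k t ⟨k, hkr⟩ : ℕ) + 1
              rw [midP, midP]
              simp only [if_neg (lt_irrefl k), if_pos rfl, if_true, ite_true]
              rw [hvalt t (by omega), hvalt (t+1) htL]
          · constructor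
            · intro idx hidx
              rw [midP, midP]
              by_cases h1 : (idx:ℕ) < k
              · rw [if_pos h1, if_pos h1]
                exact hagree idx hidx
              · simp only [if_neg h1]
            · show (midP a y k t j : ℕ) = (midP a x k t j : ℕ) + 1
              rw [midP, midP]
              rw [if_pos hc, if_pos hc, hbump]
          · constructor
            · intro idx hidx
              rw [midP, midP]
              by_cases h1 : (idx:ℕ) < k
              · rw [if_pos h1, if_pos h1]
                exact hagree idx hidx
              · simp only [if_neg h1]
            · show (midP a y k (t+1) j : ℕ) = (midP a x k (t+1) j : ℕ) + 1
              rw [midP, midP]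
              rw [if_pos hc, if_pos hc, hbump]
        have := hsq _ _ _ _ hq
        exact zmod2_eq_of_add (by linear_combination this)
      have hmain : (∑ t ∈ Finset.Ico mn mx, χ (midP a x k t) (midP a x k (t+1))) +
          (∑ t ∈ Finset.Ico mn mx, χ (midP a y k t) (midP a y k (t+1))) =
          ∑ t ∈ Finset.Ico mn mx, (f t + f (t+1)) := by
        rw [← Finset.sum_add_distrib]
        refine Finset.sum_congr rfl fun t ht => ?_
        rw [Finset.mem_Ico] at ht
        exact hsquare t (by omega)
      rw [hmain, tele_zmod2 f mn mx (min_le_max)]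
      -- identify endpoints
      have hxk : vN x k = vN y k := hvxy k (by omega)
      have hfa : f (vN a k) = F k := by
        rw [hf]
        show χ (midP a x k (vN a k)) (midP a y k (vN a k)) = F k
        rw [midP_base a x hkr, midP_base a y hkr]
      have hfx : f (vN y k) = F (k+1) := by
        rw [hf]
        show χ (midP a x k (vN y k)) (midP a y k (vN y k)) = F (k+1)
        rw [← hxk, midP_vN a x hkr, hxk, midP_vN a y hkr]
      rcases le_total (vN a k) (vN y k) with h | h
      · rw [hmn, hmx, min_eq_left h, max_eq_right h, hfa, hfx]
      · rw [hmn, hmx, min_eq_right h, max_eq_left h, hfa, hfx]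
        ring
  -- assemble
  have hsum : gP a χ x + gP a χ y = ∑ k ∈ Finset.range d,
      (if k < (j:ℕ) then 0 else if k = (j:ℕ) then F (k+1) else F k + F (k+1)) := by
    rw [gP, gP, ← Finset.sum_add_distrib]
    exact Finset.sum_congr rfl hG
  rw [hsum]
  have hjd : (j:ℕ) < d := j.isLt
  have hsplit : Finset.range d = Finset.Ico 0 d := by
    rw [Finset.range_eq_Ico]
  rw [hsplit, ← Finset.sum_Ico_consecutive _ (Nat.zero_le ((j:ℕ)+1)) (by omega : (j:ℕ)+1 ≤ d),
    ← Finset.sum_Ico_consecutive _ (Nat.zero_le (j:ℕ)) (by omega : (j:ℕ) ≤ (j:ℕ)+1)]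
  have h1 : ∑ k ∈ Finset.Ico 0 (j:ℕ),
      (if k < (j:ℕ) then 0 else if k = (j:ℕ) then F (k+1) else F k + F (k+1)) = 0 := by
    refine Finset.sum_eq_zero fun k hk => ?_
    rw [Finset.mem_Ico] at hk
    rw [if_pos hk.2]
  have h2 : ∑ k ∈ Finset.Ico (j:ℕ) ((j:ℕ)+1),
      (if k < (j:ℕ) then 0 else if k = (j:ℕ) then F (k+1) else F k + F (k+1)) = F ((j:ℕ)+1) := by
    rw [Finset.sum_Ico_succ_top le_rfl, Finset.Ico_self, Finset.sum_empty, zero_add]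
    rw [if_neg (lt_irrefl _), if_pos rfl]
  have h3 : ∑ k ∈ Finset.Ico ((j:ℕ)+1) d,
      (if k < (j:ℕ) then 0 else if k = (j:ℕ) then F (k+1) else F k + F (k+1)) =
      F ((j:ℕ)+1) + F d := by
    have he : ∀ k ∈ Finset.Ico ((j:ℕ)+1) d,
        (if k < (j:ℕ) then 0 else if k = (j:ℕ) then F (k+1) else F k + F (k+1)) =
        F k + F (k+1) := by
      intro k hk
      rw [Finset.mem_Ico] at hk
      rw [if_neg (by omega), if_neg (by omega)]
    rw [Finset.sum_congr rfl he, tele_zmod2 F ((j:ℕ)+1) d (by omega)]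
  rw [h1, h2, h3, hF]
  simp only [zero_add]
  rw [hybP_top, hybP_top]
  linear_combination zmod2_add_self (χ (hybP a x ((j:ℕ)+1)) (hybP a y ((j:ℕ)+1)))
end ModB

open Finset Relation

section BoxBasics
variable {d L : ℕ}

/-- reachability within a product of intervals. -/
lemma prod_reach (lo hi : Fin d → ℕ)
    (P : (Fin d → Fin L) → Prop)
    (hP : ∀ v, P v ↔ ∀ i, lo i ≤ (v i : ℕ) ∧ (v i : ℕ) ≤ hi i)
    {u v : Fin d → Fin L} (hu : P u) (hv : P v) :
    Relation.ReflTransGen (fun p q => (boxGraph d L).Adj p q ∧ P p ∧ P q) u v := by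
  classical
  set F : (Fin d → Fin L) → Fin d → ℕ :=
    fun w k => ((w k : ℕ) - (v k : ℕ)) + ((v k : ℕ) - (w k : ℕ)) with hF
  set meas : (Fin d → Fin L) → ℕ := fun w => ∑ k, F w k with hmeasdef
  suffices h : ∀ n (w : Fin d → Fin L), P w → meas w = n →
      Relation.ReflTransGen (fun p q => (boxGraph d L).Adj p q ∧ P p ∧ P q) w v by
    exact h (meas u) u hu rfl
  intro n
  induction n using Nat.strong_induction_on with
  | _ n ih =>
    intro w hw hmeas
    by_cases hwv : w = v
    · subst hwv; exact ReflTransGen.refl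
    · have : ∃ i, w i ≠ v i := by
        by_contra hc
        push_neg at hc
        exact hwv (funext hc)
      obtain ⟨i, hi⟩ := this
      have hiv : (w i : ℕ) ≠ (v i : ℕ) := fun h => hi (Fin.ext h)
      -- the new value of coordinate i: one step toward v i
      have hc' : ∃ c : ℕ, c < L ∧ (F w i = (c - (v i : ℕ)) + ((v i : ℕ) - c) + 1) ∧
          ((w i : ℕ) + 1 = c ∨ c + 1 = (w i : ℕ)) := by
        rcases Nat.lt_or_ge (w i : ℕ) (v i : ℕ) with hlt | hge
        · exact ⟨(w i : ℕ) + 1, by have := (v i).isLt; omega, by simp only [hF]; omega,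
            Or.inl rfl⟩
        · refine ⟨(w i : ℕ) - 1, by have := (w i).isLt; omega, by simp only [hF]; omega,
            Or.inr (by omega)⟩
      obtain ⟨c, hcL, hFc, hstep⟩ := hc'
      set w' : Fin d → Fin L := Function.update w i ⟨c, hcL⟩ with hw'
      have hPw' : P w' := by
        rw [hP]
        intro k
        by_cases hk : k = i
        · subst hk
          rw [hw', Function.update_self]
          have h1 := (hP w).1 hw k
          have h2 := (hP v).1 hv k
          have h3 : ((w k : ℕ) - (v k : ℕ)) + ((v k : ℕ) - (w k : ℕ)) =
              ((c - (v k : ℕ)) + ((v k : ℕ) - c)) + 1 := by simpa [hF] using hFc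
          simp only
          omega
        · rw [hw', Function.update_of_ne hk]
          exact (hP w).1 hw k
      have hadj : (boxGraph d L).Adj w w' := by
        refine ⟨i, fun k hk => ?_, ?_⟩
        · rw [hw', Function.update_of_ne hk]
        · rw [hw', Function.update_self]
          simp only
          omega
      have hFsame : ∀ k ∈ Finset.univ.erase i, F w' k = F w k := by
        intro k hk
        have hki : k ≠ i := (Finset.mem_erase.1 hk).1
        rw [hF]
        simp only
        rw [hw', Function.update_of_ne hki]
      have hmeas' : meas w' < n := by
        have e1 : meas w' = F w' i + ∑ k ∈ Finset.univ.erase i, F w' k :=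
          (Finset.add_sum_erase _ (F w') (Finset.mem_univ i)).symm
        have e2 : meas w = F w i + ∑ k ∈ Finset.univ.erase i, F w k :=
          (Finset.add_sum_erase _ (F w) (Finset.mem_univ i)).symm
        have e3 : ∑ k ∈ Finset.univ.erase i, F w' k = ∑ k ∈ Finset.univ.erase i, F w k :=
          Finset.sum_congr rfl hFsame
        have hwi' : (w' i : ℕ) = c := by rw [hw', Function.update_self]
        have e4 : F w' i + 1 = F w i := by
          simp only [hF] at hFc ⊢
          omega
        omega
      exact ReflTransGen.head ⟨hadj, hw, hPw'⟩ (ih _ hmeas' w' hPw' rfl)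

/-- crossing lemma : a walk from inside X to outside X crosses the boundary. -/
lemma cross_lemma {R : (Fin d → Fin L) → (Fin d → Fin L) → Prop} {X : Finset (Fin d → Fin L)}
    {u w : Fin d → Fin L} (h : Relation.ReflTransGen R u w) (hu : u ∈ X) (hw : w ∉ X) :
    ∃ p q, R p q ∧ p ∈ X ∧ q ∉ X := by
  revert hu
  induction h using ReflTransGen.head_induction_on with
  | refl => intro hu; exact absurd hu hw
  | @head s t hstep htail ih =>
    intro hs
    by_cases ht : t ∈ X
    · exact ih ht
    · exact ⟨s, t, hstep, hs, ht⟩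

/-- conversion: connectivity of an induced subgraph gives ambient reachability. -/
lemma induced_conn_RTG {G : SimpleGraph (Fin d → Fin L)} {S : Set (Fin d → Fin L)}
    (hc : (SimpleGraph.induce S G).Connected) {u v : Fin d → Fin L}
    (hu : u ∈ S) (hv : v ∈ S) :
    Relation.ReflTransGen (fun p q => G.Adj p q ∧ p ∈ S ∧ q ∈ S) u v := by
  obtain ⟨w⟩ := hc.preconnected ⟨u, hu⟩ ⟨v, hv⟩
  have : ∀ (x y : S) (_ : (SimpleGraph.induce S G).Walk x y),
      Relation.ReflTransGen (fun p q => G.Adj p q ∧ p ∈ S ∧ q ∈ S) x.1 y.1 := by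
    intro x y wk
    induction wk with
    | nil => exact ReflTransGen.refl
    | cons h p ih =>
      rename_i a b c
      exact ReflTransGen.head ⟨h, a.2, b.2⟩ ih
  exact this _ _ w

end BoxBasics

section Timar
variable {d L : ℕ}

open Classical in
/-- the boundary of `X` as a finset of ordered pairs. -/
noncomputable def bdryFin (X : Finset (Fin d → Fin L)) :
    Finset ((Fin d → Fin L) × (Fin d → Fin L)) :=
  Finset.univ.filter fun p => (boxGraph d L).Adj p.1 p.2 ∧ p.1 ∈ X ∧ p.2 ∉ X

lemma mem_bdryFin {X : Finset (Fin d → Fin L)} {p : (Fin d → Fin L) × (Fin d → Fin L)} :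
    p ∈ bdryFin X ↔ (boxGraph d L).Adj p.1 p.2 ∧ p.1 ∈ X ∧ p.2 ∉ X := by
  classical
  rw [bdryFin]
  simp only [Finset.mem_filter, Finset.mem_univ, true_and]

lemma bdryFin_card (X : Finset (Fin d → Fin L)) : bdryCard (boxGraph d L) X = (bdryFin X).card := by
  classical
  rw [bdryCard, bdryFin]
  congr 1
  exact Finset.filter_congr_decidable _ _ _

lemma bdry_not_both {X : Finset (Fin d → Fin L)} {u v : Fin d → Fin L}
    (h1 : (u, v) ∈ bdryFin X) (h2 : (v, u) ∈ bdryFin X) : False := by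
  rw [mem_bdryFin] at h1 h2
  exact h2.2.2 h1.2.1

def prMatch (p e : (Fin d → Fin L) × (Fin d → Fin L)) : Prop := p = e ∨ p = (e.2, e.1)

def inQuad (u u' w w' : Fin d → Fin L) (p : (Fin d → Fin L) × (Fin d → Fin L)) : Prop :=
  prMatch p (u, u') ∨ prMatch p (w, w') ∨ prMatch p (u, w) ∨ prMatch p (u', w')

lemma inQuad_swap {u u' w w' : Fin d → Fin L} {s t : Fin d → Fin L}
    (h : inQuad u u' w w' (s, t)) : inQuad u u' w w' (t, s) := by
  rcases h with (h|h)|(h|h)|(h|h)|(h|h) <;>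
    simp only [Prod.mk.injEq] at h <;>
    [exact Or.inl (Or.inr (by simp [h.1, h.2]));
     exact Or.inl (Or.inl (by simp [h.1, h.2]));
     exact Or.inr (Or.inl (Or.inr (by simp [h.1, h.2])));
     exact Or.inr (Or.inl (Or.inl (by simp [h.1, h.2])));
     exact Or.inr (Or.inr (Or.inl (Or.inr (by simp [h.1, h.2]))));
     exact Or.inr (Or.inr (Or.inl (Or.inl (by simp [h.1, h.2]))));
     exact Or.inr (Or.inr (Or.inr (Or.inr (by simp [h.1, h.2]))));
     exact Or.inr (Or.inr (Or.inr (Or.inl (by simp [h.1, h.2]))))]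

def sqShare (p q : (Fin d → Fin L) × (Fin d → Fin L)) : Prop :=
  ∃ u u' w w', SqQuad u u' w w' ∧ inQuad u u' w w' p ∧ inQuad u u' w w' q

/-- auxiliary graph on ordered pairs: two pairs are adjacent when their underlying
edges lie on a common unit square. -/
def Hgr (d L : ℕ) : SimpleGraph ((Fin d → Fin L) × (Fin d → Fin L)) where
  Adj p q := p ≠ q ∧ sqShare p q
  symm := by
    constructor
    rintro p q ⟨h1, u, u', w, w', hq, hp1, hp2⟩
    exact ⟨h1.symm, u, u', w, w', hq, hp2, hp1⟩
  loopless := by constructor; rintro p ⟨h1, -⟩; exact h1 rfl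

lemma bump_adj {j : Fin d} {u v : Fin d → Fin L} (h : BumpAt j u v) :
    (boxGraph d L).Adj u v :=
  ⟨j, h.1, Or.inl h.2.symm⟩

lemma sqQuad_opp {u u' w w' : Fin d → Fin L} (h : SqQuad u u' w w') :
    ∃ i, BumpAt i w w' := by
  obtain ⟨i, j, hij, hb1, hb2, hb3⟩ := h
  refine ⟨i, fun k hk => ?_, ?_⟩
  · by_cases hkj : k = j
    · subst hkj
      have h1 : u k = u' k := hb1.1 k hk
      have h1v : (u k : ℕ) = (u' k : ℕ) := congrArg Fin.val h1
      have h2 := hb2.2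
      have h3 := hb3.2
      apply Fin.ext
      omega
    · rw [← hb2.1 k (fun hh => hkj hh), ← hb3.1 k (fun hh => hkj hh)]
      exact hb1.1 k hk
  · have e1 : (u i : ℕ) = (w i : ℕ) := congrArg Fin.val (hb2.1 i hij)
    have e2 : (u' i : ℕ) = (w' i : ℕ) := congrArg Fin.val (hb3.1 i hij)
    have e3 := hb1.2
    omega

/-- **Timár's lemma** for the box: the boundary is connected in `Hgr`. -/
theorem timar [NeZero L] {X : Finset (Fin d → Fin L)} (a : Fin d → Fin L)
    (hX : (SimpleGraph.induce (↑X) (boxGraph d L)).Connected)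
    (hXc : (SimpleGraph.induce ((↑X : Set (Fin d → Fin L))ᶜ) (boxGraph d L)).Connected)
    {e f : (Fin d → Fin L) × (Fin d → Fin L)}
    (he : e ∈ bdryFin X) (hf : f ∈ bdryFin X) :
    Relation.ReflTransGen (stepIn (Hgr d L) (bdryFin X)) e f := by
  classical
  by_contra hnot
  set D := bdryFin X with hD
  set A : Finset ((Fin d → Fin L) × (Fin d → Fin L)) :=
    D.filter (fun p => Relation.ReflTransGen (stepIn (Hgr d L) D) e p) with hA
  have hAD : ∀ p, p ∈ A → p ∈ D := fun p hp => (Finset.mem_filter.1 hp).1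
  set χA : (Fin d → Fin L) → (Fin d → Fin L) → ZMod 2 :=
    fun u v => if (u, v) ∈ A ∨ (v, u) ∈ A then 1 else 0 with hχ
  have hsym : ∀ u v, χA u v = χA v u := by
    intro u v
    rw [hχ]
    simp only
    exact if_congr or_comm rfl rfl
  -- χA vanishes on edges inside X and inside Xᶜ
  have hin : ∀ u v, u ∈ X → v ∈ X → χA u v = 0 := by
    intro u v hu hv
    rw [hχ]
    simp only
    rw [if_neg]
    rintro (h | h)
    · exact (mem_bdryFin.1 (hAD _ h)).2.2 hv
    · exact (mem_bdryFin.1 (hAD _ h)).2.2 hu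
  have hout : ∀ u v, u ∉ X → v ∉ X → χA u v = 0 := by
    intro u v hu hv
    rw [hχ]
    simp only
    rw [if_neg]
    rintro (h | h)
    · exact hu (mem_bdryFin.1 (hAD _ h)).2.1
    · exact hv (mem_bdryFin.1 (hAD _ h)).2.1
  -- square evenness
  have hsq : ∀ u u' w w', SqQuad u u' w w' → χA u u' + χA w w' + χA u w + χA u' w' = 0 := by
    intro u u' w w' hquad
    -- the 4 sides are box edges
    obtain ⟨i, j, hij, hb1, hb2, hb3⟩ := hquad
    have hadj1 : (boxGraph d L).Adj u u' := bump_adj hb1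
    have hadj2 : (boxGraph d L).Adj w w' := by
      obtain ⟨i', hb⟩ := sqQuad_opp ⟨i, j, hij, hb1, hb2, hb3⟩
      exact bump_adj hb
    have hadj3 : (boxGraph d L).Adj u w := bump_adj hb2
    have hadj4 : (boxGraph d L).Adj u' w' := bump_adj hb3
    -- indicator computation
    set ι : (Fin d → Fin L) → ZMod 2 := fun z => if z ∈ X then 1 else 0 with hι
    have chiD_eq : ∀ s t : Fin d → Fin L, (boxGraph d L).Adj s t →
        (if ((s, t) ∈ D ∨ (t, s) ∈ D) then (1 : ZMod 2) else 0) = ι s + ι t := by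
      intro s t hadj
      by_cases hs : s ∈ X <;> by_cases ht : t ∈ X <;>
        simp only [hι, if_pos, if_neg, hs, ht, ite_true, ite_false] <;>
        [skip; skip; skip; skip]
      · rw [if_neg]
        · decide
        · rintro (h | h)
          · exact (mem_bdryFin.1 h).2.2 ht
          · exact (mem_bdryFin.1 h).2.2 hs
      · rw [if_pos (Or.inl (mem_bdryFin.2 ⟨hadj, hs, ht⟩))]
        decide
      · rw [if_pos (Or.inr (mem_bdryFin.2 ⟨hadj.symm, ht, hs⟩))]
        decide
      · rw [if_neg]
        · decide
        · rintro (h | h)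
          · exact hs (mem_bdryFin.1 h).2.1
          · exact ht (mem_bdryFin.1 h).2.1
    set χD : (Fin d → Fin L) → (Fin d → Fin L) → ZMod 2 :=
      fun s t => if ((s, t) ∈ D ∨ (t, s) ∈ D) then 1 else 0 with hχD
    have hsumD : χD u u' + χD w w' + χD u w + χD u' w' = 0 := by
      rw [hχD]
      simp only
      rw [chiD_eq u u' hadj1, chiD_eq w w' hadj2, chiD_eq u w hadj3, chiD_eq u' w' hadj4]
      linear_combination zmod2_add_self (ι u) + zmod2_add_self (ι u') +
        zmod2_add_self (ι w) + zmod2_add_self (ι w')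
    by_cases hex : ∃ p, inQuad u u' w w' p ∧ p ∈ A
    · obtain ⟨p, hpq, hpA⟩ := hex
      have key : ∀ s t : Fin d → Fin L, inQuad u u' w w' (s, t) → χA s t = χD s t := by
        intro s t hst
        have hclaim : ∀ z : (Fin d → Fin L) × (Fin d → Fin L), inQuad u u' w w' z →
            z ∈ D → z ∈ A := by
          intro z hz hzD
          by_cases hzp : z = p
          · exact hzp ▸ hpA
          · have hstep : stepIn (Hgr d L) D p z :=
              ⟨⟨fun hh => hzp hh.symm, u, u', w, w', ⟨i, j, hij, hb1, hb2, hb3⟩, hpq, hz⟩,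
                hAD p hpA, hzD⟩
            rw [hA, Finset.mem_filter]
            refine ⟨hzD, ?_⟩
            have hrtg : Relation.ReflTransGen (stepIn (Hgr d L) D) e p :=
              (Finset.mem_filter.1 hpA).2
            exact hrtg.tail hstep
        rw [hχ, hχD]
        simp only
        by_cases h1 : (s, t) ∈ D
        · rw [if_pos (Or.inl (hclaim _ hst h1)), if_pos (Or.inl h1)]
        · by_cases h2 : (t, s) ∈ D
          · rw [if_pos (Or.inr (hclaim _ (inQuad_swap hst) h2)), if_pos (Or.inr h2)]
          · rw [if_neg, if_neg]
            · rintro (h | h) <;> exact absurd h (by assumption)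
            · rintro (h | h)
              · exact h1 (hAD _ h)
              · exact h2 (hAD _ h)
      rw [key u u' (Or.inl (Or.inl rfl)), key w w' (Or.inr (Or.inl (Or.inl rfl))),
        key u w (Or.inr (Or.inr (Or.inl (Or.inl rfl)))),
        key u' w' (Or.inr (Or.inr (Or.inr (Or.inl rfl))))]
      exact hsumD
    · push_neg at hex
      have key0 : ∀ s t : Fin d → Fin L, inQuad u u' w w' (s, t) → χA s t = 0 := by
        intro s t hst
        rw [hχ]
        simp only
        rw [if_neg]
        rintro (h | h)
        · exact hex _ hst h
        · exact hex _ (inQuad_swap hst) h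
      rw [key0 u u' (Or.inl (Or.inl rfl)), key0 w w' (Or.inr (Or.inl (Or.inl rfl))),
        key0 u w (Or.inr (Or.inr (Or.inl (Or.inl rfl)))),
        key0 u' w' (Or.inr (Or.inr (Or.inr (Or.inl rfl))))]
      decide
  -- potential
  set g : (Fin d → Fin L) → ZMod 2 := gP a χA with hg
  have hkey : ∀ u v : Fin d → Fin L, (boxGraph d L).Adj u v → g u + g v = χA u v := by
    intro u v hadj
    obtain ⟨j, hj, hc | hc⟩ := hadj
    · have : BumpAt j u v := ⟨hj, hc.symm⟩
      exact gP_key a χA hsym hsq this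
    · have : BumpAt j v u := ⟨fun k hk => (hj k hk).symm, hc.symm⟩
      have h2 := gP_key a χA hsym hsq this
      rw [hsym v u] at h2
      rw [← h2]
      ring
  -- g constant on X-reachability classes
  have gconstX : ∀ u v : Fin d → Fin L,
      Relation.ReflTransGen (fun p q => (boxGraph d L).Adj p q ∧ p ∈ (↑X : Set _) ∧
        q ∈ (↑X : Set _)) u v → g u = g v := by
    intro u v h
    induction h with
    | refl => rfl
    | @tail b c hab hbc ih =>
      have h0 : χA b c = 0 := hin b c (by simpa using hbc.2.1) (by simpa using hbc.2.2)
      rw [ih]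
      exact zmod2_eq_of_add (by rw [hkey b c hbc.1, h0])
  have gconstXc : ∀ u v : Fin d → Fin L,
      Relation.ReflTransGen (fun p q => (boxGraph d L).Adj p q ∧ p ∈ ((↑X : Set _)ᶜ) ∧
        q ∈ ((↑X : Set _)ᶜ)) u v → g u = g v := by
    intro u v h
    induction h with
    | refl => rfl
    | @tail b c hab hbc ih =>
      have h0 : χA b c = 0 := hout b c (by simpa using hbc.2.1) (by simpa using hbc.2.2)
      rw [ih]
      exact zmod2_eq_of_add (by rw [hkey b c hbc.1, h0])
  -- unpack e, f
  obtain ⟨hadje, he1, he2⟩ := mem_bdryFin.1 he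
  obtain ⟨hadjf, hf1, hf2⟩ := mem_bdryFin.1 hf
  have hee : g e.1 + g e.2 = χA e.1 e.2 := hkey _ _ hadje
  have hff : g f.1 + g f.2 = χA f.1 f.2 := hkey _ _ hadjf
  have hAe : χA e.1 e.2 = 1 := by
    rw [hχ]
    simp only
    rw [if_pos]
    left
    rw [hA, Finset.mem_filter]
    exact ⟨by simpa using he, by simpa using Relation.ReflTransGen.refl⟩
  have hAf : χA f.1 f.2 = 0 := by
    rw [hχ]
    simp only
    rw [if_neg]
    rintro (h | h)
    · exact hnot (by simpa using (Finset.mem_filter.1 h).2)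
    · exact bdry_not_both (X := X) (by simpa using hAD _ h) (by simpa using hf)
  have hXe : g e.1 = g f.1 := gconstX _ _ (induced_conn_RTG hX (by simpa using he1) (by simpa using hf1))
  have hXce : g e.2 = g f.2 := gconstXc _ _ (induced_conn_RTG hXc (by simpa using he2) (by simpa using hf2))
  rw [hAe, hXe, hXce, hff, hAf] at hee
  exact absurd hee (by decide)

end Timar
section Cascade
variable {d L : ℕ}

lemma card_interval_fin {L : ℕ} (lo hi : ℕ) (h1 : lo ≤ hi) (h2 : hi < L) :
    (Finset.univ.filter (fun t : Fin L => lo ≤ (t:ℕ) ∧ (t:ℕ) ≤ hi)).card = hi - lo + 1 := by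
  classical
  have hbij : (Finset.univ.filter (fun t : Fin L => lo ≤ (t:ℕ) ∧ (t:ℕ) ≤ hi)).card
      = (Finset.Icc lo hi).card := by
    apply Finset.card_bij (fun (t : Fin L) _ => (t : ℕ))
    · intro t ht
      simp only [Finset.mem_filter] at ht
      simp only [Finset.mem_Icc]
      exact ht.2
    · intro t1 h1' t2 h2' he
      exact Fin.ext he
    · intro n hn
      simp only [Finset.mem_Icc] at hn
      refine ⟨⟨n, by omega⟩, ?_, rfl⟩
      simp only [Finset.mem_filter]
      exact ⟨Finset.mem_univ _, hn.1, hn.2⟩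
  rw [hbij, Nat.card_Icc]
  omega

/-- a sub-box as a finset. -/
noncomputable def boxFin (lo : Fin d → ℕ) (ρ : ℕ) : Finset (Fin d → Fin L) :=
  Fintype.piFinset (fun i => Finset.univ.filter (fun t : Fin L => lo i ≤ (t:ℕ) ∧ (t:ℕ) ≤ lo i + ρ))

lemma mem_boxFin {lo : Fin d → ℕ} {ρ : ℕ} {v : Fin d → Fin L} :
    v ∈ (boxFin lo ρ) ↔ ∀ i, lo i ≤ (v i : ℕ) ∧ (v i : ℕ) ≤ lo i + ρ := by
  rw [boxFin, Fintype.mem_piFinset]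
  constructor
  · intro h i
    have := h i
    simp only [Finset.mem_filter] at this
    exact this.2
  · intro h i
    simp only [Finset.mem_filter]
    exact ⟨Finset.mem_univ _, h i⟩

lemma card_boxFin {lo : Fin d → ℕ} {ρ : ℕ} (h : ∀ i, lo i + ρ < L) :
    (boxFin (L := L) lo ρ).card = (ρ + 1) ^ d := by
  rw [boxFin, Fintype.card_piFinset]
  have : ∀ i, (Finset.univ.filter
      (fun t : Fin L => lo i ≤ (t:ℕ) ∧ (t:ℕ) ≤ lo i + ρ)).card = ρ + 1 := by
    intro i
    rw [card_interval_fin (lo i) (lo i + ρ) (by omega) (h i)]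
    omega
  rw [Finset.prod_congr rfl (fun i _ => this i)]
  simp

/-- a boundary edge along a line that meets both `X` and `Xᶜ`. -/
lemma line_cross [NeZero L] {X : Finset (Fin d → Fin L)} {j : Fin d} {y : Fin d → Fin L}
    (hyX : ∃ t, Function.update y j t ∈ X) (hyXc : ∃ t, Function.update y j t ∉ X) :
    ∃ pq : (Fin d → Fin L) × (Fin d → Fin L), pq ∈ bdryFin X ∧
      Function.update pq.1 j (0 : Fin L) = Function.update y j 0 := by
  classical
  obtain ⟨t1, ht1⟩ := hyX
  obtain ⟨t2, ht2⟩ := hyXc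
  set lo : Fin d → ℕ := fun i => if i = j then 0 else (y i : ℕ) with hlo
  set hi : Fin d → ℕ := fun i => if i = j then L - 1 else (y i : ℕ) with hhi
  set P : (Fin d → Fin L) → Prop := fun v => ∀ i, lo i ≤ (v i : ℕ) ∧ (v i : ℕ) ≤ hi i with hPdef
  have hmem : ∀ t : Fin L, P (Function.update y j t) := by
    intro t i
    by_cases hij : i = j
    · subst hij
      rw [Function.update_self]
      simp only [hlo, hhi, if_pos rfl]
      have := t.isLt
      have hL := Nat.pos_of_ne_zero (NeZero.ne L)
      omega
    · rw [Function.update_of_ne hij]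
      simp only [hlo, hhi, if_neg hij]
      omega
  have hreach := prod_reach lo hi P (fun v => Iff.rfl) (hmem t1) (hmem t2)
  obtain ⟨p, q, ⟨hadj, hPp, hPq⟩, hpX, hqX⟩ := cross_lemma hreach ht1 ht2
  refine ⟨(p, q), mem_bdryFin.2 ⟨hadj, hpX, hqX⟩, ?_⟩
  show Function.update p j (0 : Fin L) = Function.update y j 0
  funext i
  by_cases hij : i = j
  · subst hij
    rw [Function.update_self, Function.update_self]
  · rw [Function.update_of_ne hij, Function.update_of_ne hij]
    have h1 := hPp i
    simp only [hlo, hhi, if_neg hij] at h1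
    exact Fin.ext (by omega)

/-- THE CASCADE STEP. -/
lemma cascade_step [NeZero L] {X : Finset (Fin d → Fin L)} {lo : Fin d → ℕ} {ρ : ℕ}
    {n : ℕ} (hn : 1 ≤ n) (hnd : n ≤ d)
    (S : Finset (Fin d → Fin L)) (hSX : S ⊆ X)
    (hconf : ∀ v ∈ S, ∀ i : Fin d, (i : ℕ) < n → lo i ≤ (v i : ℕ) ∧ (v i : ℕ) ≤ lo i + ρ) :
    ∃ S' : Finset (Fin d → Fin L), S' ⊆ X ∧
      (∀ v ∈ S', ∀ i : Fin d, (i : ℕ) < n - 1 → lo i ≤ (v i : ℕ) ∧ (v i : ℕ) ≤ lo i + ρ) ∧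
      ((S.card : ℝ) / (ρ + 1) - (bdryFin X).card) * L ≤ (S'.card : ℝ) := by
  classical
  set j : Fin d := ⟨n - 1, by omega⟩ with hj
  set π : (Fin d → Fin L) → (Fin d → Fin L) := fun v => Function.update v j 0 with hπ
  set lines := S.image π with hlines
  -- fiber bound : S.card ≤ (ρ+1) * lines.card
  have hjn : (j : ℕ) < n := by simp only [hj]; omega
  have hfiber : S.card ≤ (ρ + 1) * lines.card := by
    apply Finset.card_le_mul_card_image
    intro b hb
    have hinj : (S.filter (fun v => π v = b)).card ≤ (Finset.Icc (lo j) (lo j + ρ)).card := by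
      apply Finset.card_le_card_of_injOn (fun v => (v j : ℕ))
      · intro v hv
        simp only [Finset.mem_coe, Finset.mem_filter] at hv
        have h1 := hconf v hv.1 j hjn
        simp only [Finset.mem_coe, Finset.mem_Icc]
        exact h1
      · intro v1 hv1 v2 hv2 he
        simp only [Finset.mem_coe, Finset.mem_filter] at hv1 hv2
        funext i
        by_cases hij : i = j
        · subst hij; exact Fin.ext he
        · have e1 : π v1 i = π v2 i := by rw [hv1.2, hv2.2]
          simp only [hπ, Function.update_of_ne hij] at e1
          exact e1
    rw [Nat.card_Icc] at hinj
    omega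
  · -- bad lines
    set bad := lines.filter (fun y => ∃ t : Fin L, Function.update y j t ∉ X) with hbad
    have hbadcard : bad.card ≤ (bdryFin X).card := by
      have hch : ∀ y ∈ bad, ∃ pq : (Fin d → Fin L) × (Fin d → Fin L), pq ∈ bdryFin X ∧
          Function.update pq.1 j (0 : Fin L) = y := by
        intro y hy
        simp only [hbad, Finset.mem_filter] at hy
        obtain ⟨hyl, t2, ht2⟩ := hy
        obtain ⟨v, hvS, hvy⟩ := Finset.mem_image.1 hyl
        have hyj : y j = 0 := by rw [← hvy]; simp [hπ]
        have hyX : ∃ t, Function.update y j t ∈ X := by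
          refine ⟨v j, ?_⟩
          have he : Function.update y j (v j) = v := by
            funext i
            by_cases hij : i = j
            · subst hij; rw [Function.update_self]
            · rw [Function.update_of_ne hij, ← hvy]
              simp only [hπ]
              rw [Function.update_of_ne hij]
          rw [he]
          exact hSX hvS
        obtain ⟨pq, h1, h2⟩ := line_cross hyX ⟨t2, ht2⟩
        refine ⟨pq, h1, ?_⟩
        rw [h2]
        funext i
        by_cases hij : i = j
        · subst hij; rw [Function.update_self, hyj]
        · rw [Function.update_of_ne hij]
      set ψ : (Fin d → Fin L) → (Fin d → Fin L) × (Fin d → Fin L) :=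
        fun y => if h : ∃ pq, pq ∈ bdryFin X ∧ Function.update pq.1 j (0 : Fin L) = y
          then h.choose else (0, 0) with hψ
      apply Finset.card_le_card_of_injOn ψ
      · intro y hy
        have h := hch y hy
        simp only [hψ, dif_pos h]
        exact h.choose_spec.1
      · intro y1 hy1 y2 hy2 he
        have h1 := hch y1 hy1
        have h2 := hch y2 hy2
        simp only [hψ, dif_pos h1, dif_pos h2] at he
        have e1 := h1.choose_spec.2
        have e2 := h2.choose_spec.2
        rw [← e1, ← e2, he]
    -- good lines
    set good := lines \ bad with hgood
    have hgoodX : ∀ y ∈ good, ∀ t : Fin L, Function.update y j t ∈ X := by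
      intro y hy t
      simp only [hgood, Finset.mem_sdiff, hbad, Finset.mem_filter] at hy
      by_contra hc
      exact hy.2 ⟨hy.1, t, hc⟩
    set S' := good.biUnion (fun y => Finset.univ.image (fun t : Fin L => Function.update y j t))
      with hS'
    have hS'X : S' ⊆ X := by
      intro z hz
      simp only [hS', Finset.mem_biUnion, Finset.mem_image] at hz
      obtain ⟨y, hy, t, -, rfl⟩ := hz
      exact hgoodX y hy t
    have hyj0 : ∀ y ∈ lines, y j = 0 := by
      intro y hy
      obtain ⟨v, -, rfl⟩ := Finset.mem_image.1 hy
      simp [hπ]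
    have hconf' : ∀ v ∈ S', ∀ i : Fin d, (i : ℕ) < n - 1 →
        lo i ≤ (v i : ℕ) ∧ (v i : ℕ) ≤ lo i + ρ := by
      intro z hz i hi
      simp only [hS', Finset.mem_biUnion, Finset.mem_image] at hz
      obtain ⟨y, hy, t, -, rfl⟩ := hz
      have hij : i ≠ j := by
        intro he
        rw [he] at hi
        simp only [hj] at hi
        omega
      rw [Function.update_of_ne hij]
      simp only [hgood, Finset.mem_sdiff] at hy
      obtain ⟨v, hvS, hvy⟩ := Finset.mem_image.1 hy.1
      have : y i = v i := by rw [← hvy]; simp [hπ, Function.update_of_ne hij]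
      rw [this]
      exact hconf v hvS i (by omega)
    have hS'card : S'.card = good.card * L := by
      rw [hS', Finset.card_biUnion]
      · have : ∀ y ∈ good, (Finset.univ.image (fun t : Fin L => Function.update y j t)).card
            = L := by
          intro y hy
          rw [Finset.card_image_of_injective _ ?_, Finset.card_univ, Fintype.card_fin]
          intro t1 t2 he
          have := congrFun he j
          simpa using this
        rw [Finset.sum_congr rfl this]
        simp [mul_comm]
      · intro y1 h1 y2 h2 hne
        simp only [Finset.disjoint_left]
        intro z hz1 hz2
        simp only [Finset.mem_image, Finset.mem_univ, true_and] at hz1 hz2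
        obtain ⟨t1, rfl⟩ := hz1
        obtain ⟨t2, he⟩ := hz2
        apply hne
        have e0 : ∀ (y : Fin d → Fin L) (t : Fin L), y j = 0 →
            Function.update (Function.update y j t) j 0 = y := by
          intro y t hy
          funext i
          by_cases hij : i = j
          · subst hij; rw [Function.update_self, hy]
          · rw [Function.update_of_ne hij, Function.update_of_ne hij]
        rw [← e0 y1 t1 (hyj0 y1 (Finset.mem_sdiff.1 h1).1), ← he]
        exact e0 y2 t2 (hyj0 y2 (Finset.mem_sdiff.1 h2).1)
    have hgoodcard : (lines.card : ℝ) - (bdryFin X).card ≤ good.card := by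
      have hnat : lines.card ≤ good.card + bad.card := by
        have h0 : (lines \ bad).card + bad.card = lines.card :=
          Finset.card_sdiff_add_card_eq_card (Finset.filter_subset _ lines)
        rw [hgood]
        omega
      have h1 : (lines.card : ℝ) ≤ (good.card : ℝ) + bad.card := by exact_mod_cast hnat
      have h2 : (bad.card : ℝ) ≤ (bdryFin X).card := Nat.cast_le.2 hbadcard
      linarith
    refine ⟨S', hS'X, hconf', ?_⟩
    have hfin : ((good.card * L : ℕ) : ℝ) = (good.card : ℝ) * L := by push_cast; ring
    rw [hS'card, hfin]
    have hρpos : (0 : ℝ) < (ρ : ℝ) + 1 := by positivity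
    have hSlines : (S.card : ℝ) ≤ ((ρ : ℝ) + 1) * lines.card := by
      calc (S.card : ℝ) ≤ (((ρ + 1) * lines.card : ℕ) : ℝ) := Nat.cast_le.2 hfiber
        _ = ((ρ : ℝ) + 1) * lines.card := by push_cast; ring
    have h1 : (S.card : ℝ) / ((ρ : ℝ) + 1) ≤ lines.card := by
      rw [div_le_iff₀ hρpos]
      calc (S.card : ℝ) ≤ ((ρ : ℝ) + 1) * lines.card := hSlines
        _ = lines.card * ((ρ : ℝ) + 1) := by ring
    have hL0 : (0 : ℝ) ≤ L := Nat.cast_nonneg L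
    have hmul : (S.card : ℝ) / ((ρ : ℝ) + 1) - (bdryFin X).card ≤ (good.card : ℝ) := by
      linarith
    exact mul_le_mul_of_nonneg_right hmul hL0

end Cascade
section Near
variable {d L : ℕ}

lemma cascade [NeZero L] (hd2 : 2 ≤ d) {X : Finset (Fin d → Fin L)} {lo : Fin d → ℕ} {ρ : ℕ}
    (hbox : ∀ i, lo i + ρ < L)
    (hboxX : ∀ v : Fin d → Fin L, (∀ i, lo i ≤ (v i:ℕ) ∧ (v i:ℕ) ≤ lo i + ρ) → v ∈ X) :
    ∀ k, k ≤ d → ∃ S : Finset (Fin d → Fin L), S ⊆ X ∧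
      (∀ v ∈ S, ∀ i : Fin d, (i:ℕ) < d - k → lo i ≤ (v i:ℕ) ∧ (v i:ℕ) ≤ lo i + ρ) ∧
      (L:ℝ)^k * ((ρ:ℝ)+1)^(d-k) *
        (1 - (k : ℝ) * ((bdryFin X).card : ℝ) / ((ρ:ℝ)+1)) ≤ (S.card : ℝ) := by
  have hL1 : 1 ≤ L := Nat.pos_of_ne_zero (NeZero.ne L)
  have hρL : ρ + 1 ≤ L := by have := hbox ⟨0, by omega⟩; omega
  intro k
  induction k with
  | zero =>
    intro _
    refine ⟨boxFin lo ρ, ?_, ?_, ?_⟩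
    · intro v hv
      exact hboxX v (mem_boxFin.1 hv)
    · intro v hv i _
      exact mem_boxFin.1 hv i
    · rw [card_boxFin hbox, Nat.sub_zero]
      push_cast
      simp
  | succ k ih =>
    intro hk1
    obtain ⟨S, hSX, hconf, hcard⟩ := ih (by omega)
    have hn1 : 1 ≤ d - k := by omega
    have hnd : d - k ≤ d := by omega
    obtain ⟨S', hS'X, hconf', hcard'⟩ := cascade_step (X := X) hn1 hnd S hSX hconf
    refine ⟨S', hS'X, ?_, ?_⟩
    · intro v hv i hi
      exact hconf' v hv i (by omega)
    · set B : ℝ := (ρ:ℝ) + 1 with hB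
      set M : ℝ := ((bdryFin X).card : ℝ) with hM
      set Lr : ℝ := (L : ℝ) with hLr
      have hBpos : 0 < B := by rw [hB]; positivity
      have hMpos : 0 ≤ M := by rw [hM]; positivity
      have hLpos : (1:ℝ) ≤ Lr := by rw [hLr]; exact_mod_cast hL1
      have hBL : B ≤ Lr := by rw [hB, hLr]; exact_mod_cast hρL
      have hB1 : (1:ℝ) ≤ B := by
        rw [hB]
        have : (0:ℝ) ≤ (ρ:ℝ) := Nat.cast_nonneg _
        linarith
      set e : ℕ := d - (k + 1) with he
      have hde : d - k = e + 1 := by omega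
      have hkey : B ≤ Lr^k * B^e := by
        rcases Nat.eq_zero_or_pos e with he0 | he1
        · have hk : 1 ≤ k := by omega
          calc B ≤ Lr := hBL
            _ ≤ Lr^k := le_self_pow₀ (by linarith) (by omega)
            _ = Lr^k * B^e := by rw [he0]; ring
        · calc B ≤ B^e := le_self_pow₀ (by linarith) (by omega)
            _ ≤ Lr^k * B^e := by
                nlinarith [pow_pos hBpos e, one_le_pow₀ hLpos (n := k)]
      rw [hde] at hcard
      have hdivB : Lr^k * B^e * (1 - (k:ℝ)*M/B) ≤ (S.card : ℝ) / B := by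
        rw [le_div_iff₀ hBpos]
        calc Lr^k * B^e * (1 - (k:ℝ)*M/B) * B = Lr^k * B^(e+1) * (1 - (k:ℝ)*M/B) := by ring
          _ ≤ (S.card : ℝ) := hcard
      have h1 : Lr^k * B^e * (1 - ((k:ℝ)+1)*M/B) + M ≤ Lr^k * B^e * (1 - (k:ℝ)*M/B) := by
        have h2 : M ≤ Lr^k * B^e * (M / B) := by
          have h3 : Lr^k * B^e * (M/B) = (Lr^k * B^e / B) * M := by ring
          rw [h3]
          have hq : 1 ≤ Lr^k * B^e / B := (one_le_div hBpos).2 hkey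
          nlinarith
        have expand : Lr^k * B^e * (1 - (k:ℝ)*M/B) - Lr^k * B^e * (1 - ((k:ℝ)+1)*M/B)
            = Lr^k * B^e * (M/B) := by
          field_simp
          ring
        linarith
      have hfinal : Lr^(k+1) * B^e * (1 - ((k:ℝ)+1)*M/B) ≤ (S'.card : ℝ) := by
        calc Lr^(k+1) * B^e * (1 - ((k:ℝ)+1)*M/B)
            = (Lr^k * B^e * (1 - ((k:ℝ)+1)*M/B)) * Lr := by ring
          _ ≤ ((S.card : ℝ)/B - M) * Lr := by
              apply mul_le_mul_of_nonneg_right _ (by linarith)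
              linarith
          _ ≤ (S'.card : ℝ) := hcard'
      calc (L:ℝ)^(k+1) * ((ρ:ℝ)+1)^(d-(k+1)) * (1 - ((k+1:ℕ) : ℝ) * M / B)
          = Lr^(k+1) * B^e * (1 - ((k:ℝ)+1)*M/B) := by
            rw [hLr, hB, he]
            push_cast
            ring
        _ ≤ (S'.card : ℝ) := hfinal

/-- MAIN OUTPUT OF MODULE C: a boundary edge within `ρ = 8dm` of `a` (in every coordinate). -/
lemma bdry_near [NeZero L] (hd2 : 2 ≤ d) {X : Finset (Fin d → Fin L)} (a : Fin d → Fin L)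
    (haX : a ∈ X) (hXuniv : X ≠ Finset.univ)
    (hXcard : (X.card : ℝ) ≤ 3 * (L:ℝ)^d / 4) :
    ∃ pq : (Fin d → Fin L) × (Fin d → Fin L), pq ∈ bdryFin X ∧
      ∀ i, (pq.1 i : ℕ) ≤ (a i : ℕ) + 8*d*(bdryFin X).card ∧
        (a i : ℕ) ≤ (pq.1 i : ℕ) + 8*d*(bdryFin X).card := by
  classical
  set m := (bdryFin X).card with hm
  set ρ := 8*d*m with hρ
  have hL1 : 1 ≤ L := Nat.pos_of_ne_zero (NeZero.ne L)
  by_cases hcase : ∃ w : Fin d → Fin L, w ∉ X ∧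
      ∀ i, (w i:ℕ) ≤ (a i:ℕ) + ρ ∧ (a i:ℕ) ≤ (w i:ℕ) + ρ
  · obtain ⟨w, hwX, hwnear⟩ := hcase
    set lo : Fin d → ℕ := fun i => (a i : ℕ) - ρ with hlo
    set hi : Fin d → ℕ := fun i => min ((a i:ℕ) + ρ) (L-1) with hhi
    set P : (Fin d → Fin L) → Prop := fun v => ∀ i, lo i ≤ (v i : ℕ) ∧ (v i : ℕ) ≤ hi i
      with hPdef
    have hPa : P a := by
      intro i
      simp only [hlo, hhi]
      have := (a i).isLt
      omega
    have hPw : P w := by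
      intro i
      simp only [hlo, hhi]
      have h1 := hwnear i
      have := (w i).isLt
      omega
    have hreach := prod_reach lo hi P (fun v => Iff.rfl) hPa hPw
    obtain ⟨p, q, ⟨hadj, hPp, hPq⟩, hpX, hqX⟩ := cross_lemma hreach haX hwX
    refine ⟨(p, q), mem_bdryFin.2 ⟨hadj, hpX, hqX⟩, fun i => ?_⟩
    show (p i : ℕ) ≤ (a i : ℕ) + ρ ∧ (a i : ℕ) ≤ (p i : ℕ) + ρ
    have h1 := hPp i
    simp only [hlo, hhi] at h1
    have h2 : (p i : ℕ) ≤ min ((a i:ℕ) + ρ) (L-1) := h1.2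
    have h3 : (a i:ℕ) - ρ ≤ (p i : ℕ) := h1.1
    have h4 : (p i:ℕ) ≤ (a i:ℕ) + ρ := le_trans h2 (min_le_left _ _)
    exact ⟨h4, by omega⟩
  · push_neg at hcase
    exfalso
    have hWin : ∀ w : Fin d → Fin L,
        (∀ i, (w i:ℕ) ≤ (a i:ℕ) + ρ ∧ (a i:ℕ) ≤ (w i:ℕ) + ρ) → w ∈ X := by
      intro w hw
      by_contra hc
      obtain ⟨i, hi⟩ := hcase w hc
      have h5 := hi (hw i).1
      have h6 := (hw i).2
      omega
    have hLρ : ρ + 1 ≤ L := by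
      by_contra hc
      push_neg at hc
      apply hXuniv
      apply Finset.eq_univ_iff_forall.2
      intro w
      apply hWin
      intro i
      have h1 := (w i).isLt
      have h2 := (a i).isLt
      omega
    set lo : Fin d → ℕ := fun i => if (a i:ℕ) + ρ ≤ L - 1 then (a i:ℕ) else L-1-ρ with hlo
    have hbox : ∀ i, lo i + ρ < L := by
      intro i
      simp only [hlo]
      split <;> omega
    have hboxX : ∀ v : Fin d → Fin L, (∀ i, lo i ≤ (v i:ℕ) ∧ (v i:ℕ) ≤ lo i + ρ) → v ∈ X := by
      intro v hv
      apply hWin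
      intro i
      have h1 := hv i
      simp only [hlo] at h1
      have h2 := (a i).isLt
      by_cases hc : (a i:ℕ) + ρ ≤ L - 1
      · rw [if_pos hc] at h1; omega
      · rw [if_neg hc] at h1; push_neg at hc; omega
    obtain ⟨S, hSX, -, hcard⟩ := cascade hd2 hbox hboxX d le_rfl
    rw [Nat.sub_self, pow_zero, mul_one] at hcard
    have hSle : (S.card : ℝ) ≤ (X.card : ℝ) := Nat.cast_le.2 (Finset.card_le_card hSX)
    -- 1 - d*m/(ρ+1) ≥ 7/8
    have hfrac : (7:ℝ)/8 ≤ 1 - (d:ℝ) * (m:ℝ) / ((ρ:ℝ)+1) := by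
      have hBpos : (0:ℝ) < (ρ:ℝ) + 1 := by positivity
      have h0 : (d:ℝ) * (m:ℝ) / ((ρ:ℝ)+1) ≤ 1/8 := by
        rw [div_le_iff₀ hBpos]
        have hcast : ((ρ:ℝ)) = 8*(d:ℝ)*(m:ℝ) := by rw [hρ]; push_cast; ring
        rw [hcast]
        nlinarith [Nat.cast_nonneg (α := ℝ) d, Nat.cast_nonneg (α := ℝ) m]
      linarith
    have hLpow : (0:ℝ) < (L:ℝ)^d := by positivity
    have : (7:ℝ)/8 * (L:ℝ)^d ≤ (X.card : ℝ) := by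
      calc (7:ℝ)/8 * (L:ℝ)^d = (L:ℝ)^d * (7/8) := by ring
        _ ≤ (L:ℝ)^d * (1 - (d:ℝ) * (m:ℝ) / ((ρ:ℝ)+1)) := by
            apply mul_le_mul_of_nonneg_left hfrac (le_of_lt hLpow)
        _ ≤ (S.card : ℝ) := hcard
        _ ≤ (X.card : ℝ) := hSle
    nlinarith

end Near
section Final1
variable {d L : ℕ}

/-- `X` is determined by `a` and its boundary. -/
lemma bdry_inj {X Y : Finset (Fin d → Fin L)} {a : Fin d → Fin L}
    (haX : a ∈ X) (haY : a ∈ Y)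
    (hXconn : (SimpleGraph.induce (↑X) (boxGraph d L)).Connected)
    (hYconn : (SimpleGraph.induce (↑Y) (boxGraph d L)).Connected)
    (hDE : bdryFin X = bdryFin Y) : X = Y := by
  have main : ∀ (Z W : Finset (Fin d → Fin L)), a ∈ Z → a ∈ W →
      (SimpleGraph.induce (↑Z) (boxGraph d L)).Connected → bdryFin Z = bdryFin W →
      Z ⊆ W := by
    intro Z W haZ haW hZconn hDZ
    intro u hu
    have hreach := induced_conn_RTG hZconn (by simpa using haZ) (by simpa using hu)
    have claim : ∀ p q : Fin d → Fin L,
        Relation.ReflTransGen (fun p q => (boxGraph d L).Adj p q ∧ p ∈ (↑Z : Set _) ∧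
          q ∈ (↑Z : Set _)) p q → p ∈ W → q ∈ W := by
      intro p q h
      induction h with
      | refl => exact id
      | @tail b c hab hbc ih =>
        intro hp
        have hbW : b ∈ W := ih hp
        by_contra hcW
        have : (b, c) ∈ bdryFin W := mem_bdryFin.2 ⟨hbc.1, hbW, hcW⟩
        rw [← hDZ] at this
        exact (mem_bdryFin.1 this).2.2 (by simpa using hbc.2.2)
    exact claim a u hreach haW
  exact le_antisymm (main X Y haX haY hXconn hDE) (main Y X haY haX hYconn hDE.symm)

/-- cube finset. -/
noncomputable def cubeFin (c : Fin d → Fin L) (r : ℕ) : Finset (Fin d → Fin L) := by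
  classical
  exact Finset.univ.filter (fun v => ∀ i, (v i:ℕ) ≤ (c i:ℕ) + r ∧ (c i:ℕ) ≤ (v i:ℕ) + r)

lemma mem_cubeFin {c : Fin d → Fin L} {r : ℕ} {v : Fin d → Fin L} :
    v ∈ cubeFin c r ↔ ∀ i, (v i:ℕ) ≤ (c i:ℕ) + r ∧ (c i:ℕ) ≤ (v i:ℕ) + r := by
  classical
  rw [cubeFin]
  simp

lemma card_cubeFin (c : Fin d → Fin L) (r : ℕ) : (cubeFin c r).card ≤ (2*r+1)^d := by
  classical
  have h1 : (cubeFin c r).card ≤ (Finset.univ : Finset (Fin d → Fin (2*r+1))).card := by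
    apply Finset.card_le_card_of_injOn
      (fun v => fun i => (⟨min ((v i : ℕ) - ((c i : ℕ) - r)) (2*r), by omega⟩ : Fin (2*r+1)))
    · intro v _
      exact Finset.mem_univ _
    · intro v1 hv1 v2 hv2 he
      simp only [Finset.mem_coe, mem_cubeFin] at hv1 hv2
      funext i
      have hei := congrFun he i
      simp only [Fin.mk.injEq] at hei
      have b1 := hv1 i
      have b2 := hv2 i
      apply Fin.ext
      omega
  calc (cubeFin c r).card ≤ (Finset.univ : Finset (Fin d → Fin (2*r+1))).card := h1
    _ = (2*r+1)^d := by
      rw [Finset.card_univ, Fintype.card_fun, Fintype.card_fin, Fintype.card_fin]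

end Final1
section Deg
variable {d L : ℕ}

lemma bump_near {j : Fin d} {x y : Fin d → Fin L} (h : BumpAt j x y) :
    ∀ i, (y i:ℕ) ≤ (x i:ℕ) + 1 ∧ (x i:ℕ) ≤ (y i:ℕ) + 1 := by
  intro i
  by_cases hij : i = j
  · subst hij; have := h.2; omega
  · rw [h.1 i hij]; omega

lemma adj_near {u v : Fin d → Fin L} (h : (boxGraph d L).Adj u v) :
    ∀ i, (v i:ℕ) ≤ (u i:ℕ) + 1 ∧ (u i:ℕ) ≤ (v i:ℕ) + 1 := by
  obtain ⟨j, hj, hc⟩ := h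
  intro i
  by_cases hij : i = j
  · subst hij; omega
  · rw [hj i hij]; omega

lemma corner_near {u u' w w' : Fin d → Fin L} (h : SqQuad u u' w w') :
    ∀ z, (z = u ∨ z = u' ∨ z = w ∨ z = w') →
      ∀ i, (z i:ℕ) ≤ (u i:ℕ) + 2 ∧ (u i:ℕ) ≤ (z i:ℕ) + 2 := by
  obtain ⟨i0, j0, hij, hb1, hb2, hb3⟩ := h
  have h1 := bump_near hb1
  have h2 := bump_near hb2
  have h3 := bump_near hb3
  rintro z (rfl | rfl | rfl | rfl) i
  · omega
  · have := h1 i; omega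
  · have := h2 i; omega
  · have := h1 i; have := h3 i; omega

lemma inQuad_fst {u u' w w' : Fin d → Fin L} {p : (Fin d → Fin L) × (Fin d → Fin L)}
    (h : inQuad u u' w w' p) :
    (p.1 = u ∨ p.1 = u' ∨ p.1 = w ∨ p.1 = w') ∧
    (p.2 = u ∨ p.2 = u' ∨ p.2 = w ∨ p.2 = w') := by
  rcases h with (h|h)|(h|h)|(h|h)|(h|h) <;> subst h <;> exact ⟨by simp, by simp⟩

lemma Hgr_degree_le [DecidableRel (Hgr d L).Adj] (p : (Fin d → Fin L) × (Fin d → Fin L)) :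
    (Hgr d L).degree p ≤ 9^d * 9^d := by
  classical
  have hsub : (Hgr d L).neighborFinset p ⊆ (cubeFin p.1 4) ×ˢ (cubeFin p.1 4) := by
    intro q hq
    rw [SimpleGraph.mem_neighborFinset] at hq
    obtain ⟨hne, u, u', w, w', hquad, hp, hq'⟩ := hq
    have hp1 := (inQuad_fst hp).1
    have hq1 := (inQuad_fst hq').1
    have hq2 := (inQuad_fst hq').2
    have hu := corner_near hquad
    rw [Finset.mem_product]
    constructor
    · rw [mem_cubeFin]; intro i
      have a1 := hu p.1 hp1 i
      have a2 := hu q.1 hq1 i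
      omega
    · rw [mem_cubeFin]; intro i
      have a1 := hu p.1 hp1 i
      have a2 := hu q.2 hq2 i
      omega
  calc (Hgr d L).degree p ≤ ((cubeFin p.1 4) ×ˢ (cubeFin p.1 4)).card :=
        Finset.card_le_card hsub
    _ = (cubeFin p.1 4).card * (cubeFin p.1 4).card := Finset.card_product _ _
    _ ≤ 9^d * 9^d := by
        have := card_cubeFin (L := L) p.1 4
        exact Nat.mul_le_mul (card_cubeFin _ 4) (card_cubeFin _ 4)

lemma set_ncard_filter {α : Type*} [Fintype α] (P : α → Prop) [DecidablePred P] :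
    {x | P x}.ncard = (Finset.univ.filter P).card := by
  rw [← Set.ncard_coe_finset]
  congr 1
  ext x
  simp

end Deg

/-- **Counting connected sets with connected complement.**  For every `d ≥ 2`
there is `C > 1` (depending only on `d`) such that for every `L ≥ 1`, every
vertex `a` of `Λ_L^d` and every `m ≥ 1`, the number of sets `X ∈ 𝒞(Λ_L^d)`
with `a ∈ X`, `|X| ≤ 3L^d/4` and `|∂_{Λ_L^d} X| = m` is at most `C^m`. -/
theorem counting_connected_sets (d : ℕ) (hd : 2 ≤ d) :
    ∃ C : ℝ, 1 < C ∧ ∀ L : ℕ, 1 ≤ L → ∀ a : Fin d → Fin L, ∀ m : ℕ, 1 ≤ m →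
      ({X : Finset (Fin d → Fin L) | memC (boxGraph d L) X ∧ a ∈ X ∧
          (X.card : ℝ) ≤ 3 * (L : ℝ) ^ d / 4 ∧
          bdryCard (boxGraph d L) X = m}.ncard : ℝ) ≤ C ^ m := by
  classical
  set Δ : ℕ := 9^d * 9^d with hΔdef
  set Cn : ℕ := (38*d)^(2*d) * (Δ+1)^2 with hCn
  refine ⟨(Cn : ℝ), ?_, ?_⟩
  · have h1 : 2 ≤ Cn := by
      rw [hCn]
      have h2 : 1 ≤ (38*d)^(2*d) := Nat.one_le_pow _ _ (by omega)
      have h3 : 4 ≤ (Δ+1)^2 := by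
        have hΔ1 : 1 ≤ Δ := by
          rw [hΔdef]
          have := Nat.one_le_pow d 9 (by omega)
          nlinarith
        nlinarith
      calc 2 ≤ 1 * 4 := by norm_num
        _ ≤ (38*d)^(2*d) * (Δ+1)^2 := Nat.mul_le_mul h2 h3
    have h0 : 1 < Cn := by omega
    exact_mod_cast h0
  · intro L hL a m hm
    haveI : NeZero L := ⟨by omega⟩
    set F := {X : Finset (Fin d → Fin L) | memC (boxGraph d L) X ∧ a ∈ X ∧
      (X.card : ℝ) ≤ 3 * (L : ℝ) ^ d / 4 ∧ bdryCard (boxGraph d L) X = m} with hF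
    set ρ := 8*d*m with hρ
    set RB : Finset ((Fin d → Fin L) × (Fin d → Fin L)) :=
      (cubeFin a ρ) ×ˢ (cubeFin a (ρ+1)) with hRB
    set GF : ((Fin d → Fin L) × (Fin d → Fin L)) →
        Finset (Finset ((Fin d → Fin L) × (Fin d → Fin L))) :=
      fun r => Finset.univ.filter (fun D => connFrom (Hgr d L) r D ∧ D.card = m) with hGF
    have hmap : ∀ X ∈ F, bdryFin X ∈ RB.biUnion GF := by
      intro X hX
      obtain ⟨hmemC, haX, hcard, hbdry⟩ := hX
      obtain ⟨hXne, hXuniv, hXconn, hXcconn⟩ := hmemC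
      have hmcard : (bdryFin X).card = m := by rw [← bdryFin_card]; exact hbdry
      obtain ⟨pq, hpqD, hpqnear⟩ := bdry_near hd a haX hXuniv hcard
      rw [hmcard] at hpqnear
      have hadj := (mem_bdryFin.1 hpqD).1
      have hnear2 := adj_near hadj
      refine Finset.mem_biUnion.2 ⟨pq, ?_, ?_⟩
      · rw [hRB, Finset.mem_product]
        constructor
        · rw [mem_cubeFin]
          intro i
          have := hpqnear i
          omega
        · rw [mem_cubeFin]
          intro i
          have := hpqnear i
          have := hnear2 i
          omega
      · rw [hGF]
        simp only [Finset.mem_filter, Finset.mem_univ, true_and]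
        refine ⟨⟨hpqD, fun y hy => timar a hXconn hXcconn hpqD hy⟩, hmcard⟩
    have hinj : Set.InjOn bdryFin F := by
      intro X hX Y hY h
      exact bdry_inj hX.2.1 hY.2.1 hX.1.2.2.1 hY.1.2.2.1 h
    have h3 : F.ncard ≤ (RB.biUnion GF).card := by
      rw [← Set.ncard_image_of_injOn hinj]
      have h2 : (bdryFin '' F) ⊆ ↑(RB.biUnion GF) := by
        rintro D ⟨X, hX, rfl⟩
        exact hmap X hX
      have := Set.ncard_le_ncard h2 (Finset.finite_toSet _)
      rwa [Set.ncard_coe_finset] at this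
    have hGFcard : ∀ r, (GF r).card ≤ (Δ+1)^(2*m) := by
      intro r
      have hΔ1 : 1 ≤ Δ := by
        rw [hΔdef]
        have := Nat.one_le_pow d 9 (by omega)
        nlinarith
      have hcount := count_connFrom (Hgr d L) Δ hΔ1
        (fun w => Hgr_degree_le w) r m
      have heq : {S : Finset ((Fin d → Fin L) × (Fin d → Fin L)) |
          connFrom (Hgr d L) r S ∧ S.card = m}.ncard = (GF r).card := by
        rw [hGF]
        exact set_ncard_filter _
      rw [heq] at hcount
      exact hcount
    have h4 : (RB.biUnion GF).card ≤ RB.card * (Δ+1)^(2*m) := by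
      calc (RB.biUnion GF).card ≤ ∑ r ∈ RB, (GF r).card := Finset.card_biUnion_le
        _ ≤ ∑ _r ∈ RB, (Δ+1)^(2*m) := Finset.sum_le_sum (fun r _ => hGFcard r)
        _ = RB.card * (Δ+1)^(2*m) := by rw [Finset.sum_const, smul_eq_mul]
    have h5 : RB.card ≤ (2*ρ+3)^(2*d) := by
      rw [hRB, Finset.card_product]
      calc (cubeFin a ρ).card * (cubeFin a (ρ+1)).card
          ≤ (2*ρ+1)^d * (2*(ρ+1)+1)^d :=
            Nat.mul_le_mul (card_cubeFin _ _) (card_cubeFin _ _)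
        _ ≤ (2*ρ+3)^d * (2*ρ+3)^d := by
            apply Nat.mul_le_mul
            · exact Nat.pow_le_pow_left (by omega) _
            · exact Nat.pow_le_pow_left (by omega) _
        _ = (2*ρ+3)^(2*d) := by rw [← pow_add]; congr 1; omega
    have h6 : (2*ρ+3)^(2*d) ≤ ((38*d)^(2*d))^m := by
      have e1 : 2*ρ+3 ≤ 19*d*m := by rw [hρ]; nlinarith
      calc (2*ρ+3)^(2*d) ≤ (19*d*m)^(2*d) := Nat.pow_le_pow_left e1 _
        _ = (19*d)^(2*d) * m^(2*d) := by rw [mul_pow]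
        _ ≤ (19*d)^(2*d) * (2^m)^(2*d) := by
            apply Nat.mul_le_mul_left
            exact Nat.pow_le_pow_left (Nat.le_of_lt (Nat.lt_two_pow_self (n := m))) _
        _ = (19*d)^(2*d) * (2^(2*d))^m := by rw [← pow_mul, ← pow_mul, Nat.mul_comm m (2*d)]
        _ ≤ ((19*d)^(2*d))^m * (2^(2*d))^m := by
            apply Nat.mul_le_mul_right
            exact Nat.le_self_pow (by omega) _
        _ = ((38*d)^(2*d))^m := by
            rw [← mul_pow, ← mul_pow]
            congr 2
            ring
    have h7 : F.ncard ≤ Cn^m := by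
      calc F.ncard ≤ (RB.biUnion GF).card := h3
        _ ≤ RB.card * (Δ+1)^(2*m) := h4
        _ ≤ (2*ρ+3)^(2*d) * (Δ+1)^(2*m) := Nat.mul_le_mul_right _ h5
        _ ≤ ((38*d)^(2*d))^m * ((Δ+1)^2)^m := by
            apply Nat.mul_le_mul h6
            rw [← pow_mul]
        _ = Cn^m := by rw [hCn]; exact (mul_pow _ _ m).symm
    calc (F.ncard : ℝ) ≤ ((Cn^m : ℕ) : ℝ) := Nat.cast_le.2 h7
      _ = (Cn : ℝ)^m := by push_cast; ring
end
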